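/- arXiv:1606.02209 — 9 statements merged into one kernel-verified Lean document; each statement's English description precedes it below -/
import Mathlib

section
/- If the skew product S : X×𝕋 → X×𝕋 is ergodic with respect to μ×λ, then there is no equivariant family of one-dimensional real subspaces for the cocycle A; that is, there is no measurable map v : X → ℝ² with v(x) ≠ 0 for μ-a.e. x and A(x)·v(x) ∈ span_ℝ{v(T x)} for μ-a.e. x. (Equivalently, the trivial bundle X×ℝ² is irreducible under the action of A.) -/
open MeasureTheory Matrix

/-- Rotation by angle `θ`. -/
noncomputable def rotM (θ : ℝ) : Matrix (Fin 2) (Fin 2) ℝ :=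
  !![Real.cos θ, -Real.sin θ; Real.sin θ, Real.cos θ]

/-- Reflection across the line through the origin at angle `β`. -/
noncomputable def reflM (β : ℝ) : Matrix (Fin 2) (Fin 2) ℝ :=
  !![Real.cos (2 * β), Real.sin (2 * β); Real.sin (2 * β), -Real.cos (2 * β)]

namespace StmtAux

open Complex

noncomputable def Z (v : Fin 2 → ℝ) : ℂ := v 0 + v 1 * I

lemma Z_ne_zero {v : Fin 2 → ℝ} (hv : v ≠ 0) : Z v ≠ 0 := by
  intro h
  apply hv
  have h0 : (Z v).re = 0 := by rw [h]; simp
  have h1 : (Z v).im = 0 := by rw [h]; simp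
  simp [Z] at h0 h1
  funext i
  fin_cases i <;> simpa

lemma Z_smul (c : ℝ) (v : Fin 2 → ℝ) : Z (c • v) = (c : ℂ) * Z v := by
  simp only [Z, Pi.smul_apply, smul_eq_mul, Complex.ofReal_mul]; ring

lemma Z_rot (θ : ℝ) (v : Fin 2 → ℝ) :
    Z ((rotM θ).mulVec v) = (Real.cos θ + Real.sin θ * I) * Z v := by
  simp [Z, rotM, Matrix.mulVec, dotProduct, Fin.sum_univ_two, Complex.ext_iff]
  constructor <;> ring

lemma Z_refl (b : ℝ) (v : Fin 2 → ℝ) :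
    Z ((reflM b).mulVec v) =
      (Real.cos (2*b) + Real.sin (2*b) * I) * (starRingEnd ℂ) (Z v) := by
  simp [Z, reflM, Matrix.mulVec, dotProduct, Fin.sum_univ_two, Complex.ext_iff]
  constructor <;> ring

noncomputable def Φ (z : ℂ) : UnitAddCircle := ((Complex.arg z) / Real.pi : ℝ)

lemma coe_eq_coe_of_angle_eq {a b : ℝ} (h : (a : Real.Angle) = b) :
    ((a / Real.pi : ℝ) : UnitAddCircle) = ((b / Real.pi : ℝ) : UnitAddCircle) := by
  obtain ⟨k, hk⟩ := Real.Angle.angle_eq_iff_two_pi_dvd_sub.mp h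
  have hπ : (Real.pi : ℝ) ≠ 0 := Real.pi_ne_zero
  have : a / Real.pi - b / Real.pi = (2 * k : ℤ) := by
    push_cast
    field_simp
    linarith [hk]
  rw [sub_eq_iff_eq_add] at this
  rw [this]
  push_cast
  rw [QuotientAddGroup.mk_add]
  have : (((2 * (k:ℝ)) : ℝ) : UnitAddCircle) = 0 := by
    rw [AddCircle.coe_eq_zero_iff]
    exact ⟨2 * k, by push_cast; simp⟩
  rw [this, zero_add]

lemma phi_real_smul {z : ℂ} (hz : z ≠ 0) {c : ℝ} (hc : c ≠ 0) :
    Φ ((c : ℂ) * z) = Φ z := by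
  rcases hc.lt_or_gt with h | h
  · have hne : -c > 0 := by linarith
    have h1 : (c : ℂ) * z = -(((-c : ℝ) : ℂ) * z) := by push_cast; ring
    have h2 : ((-c : ℝ) : ℂ) * z ≠ 0 := by
      apply mul_ne_zero _ hz
      exact_mod_cast (ne_of_gt hne)
    have h3 : (Complex.arg ((c:ℂ) * z) : Real.Angle) = Complex.arg z + Real.pi := by
      rw [h1, Complex.arg_neg_coe_angle h2, Complex.arg_real_mul z hne]
    have h4 : (Complex.arg ((c:ℂ) * z) : Real.Angle) = ((Complex.arg z + Real.pi : ℝ) : Real.Angle) := by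
      rw [h3]; push_cast; rfl
    have := coe_eq_coe_of_angle_eq h4
    unfold Φ
    rw [this]
    rw [add_div, div_self Real.pi_ne_zero]
    exact AddCircle.coe_add_period 1 _
  · unfold Φ
    rw [Complex.arg_real_mul z h]

lemma phi_unit_mul (θ : ℝ) {z : ℂ} (hz : z ≠ 0) :
    Φ ((Real.cos θ + Real.sin θ * I) * z) = ((θ / Real.pi : ℝ) : UnitAddCircle) + Φ z := by
  have hee : ((Real.cos θ : ℂ) + Real.sin θ * I) = Complex.exp (θ * I) := by
    rw [Complex.exp_mul_I, ← Complex.ofReal_cos, ← Complex.ofReal_sin]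
  have he : (Real.cos θ + Real.sin θ * I : ℂ) ≠ 0 := hee ▸ Complex.exp_ne_zero _
  have harg : (Complex.arg ((Real.cos θ + Real.sin θ * I) * z) : Real.Angle)
      = ((θ + Complex.arg z : ℝ) : Real.Angle) := by
    rw [Complex.arg_mul_coe_angle he hz]
    have : (Complex.arg (Real.cos θ + Real.sin θ * I) : Real.Angle) = (θ : Real.Angle) := by
      have := Complex.arg_cos_add_sin_mul_I_coe_angle (θ : Real.Angle)
      rwa [Real.Angle.cos_coe, Real.Angle.sin_coe] at this
    rw [this]; push_cast; rfl
  have := coe_eq_coe_of_angle_eq harg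
  unfold Φ
  rw [this, add_div, QuotientAddGroup.mk_add]

lemma phi_conj {z : ℂ} (hz : z ≠ 0) : Φ ((starRingEnd ℂ) z) = -Φ z := by
  have harg : (Complex.arg ((starRingEnd ℂ) z) : Real.Angle) = ((-Complex.arg z : ℝ) : Real.Angle) := by
    rw [Complex.arg_conj_coe_angle]; push_cast; rfl
  have := coe_eq_coe_of_angle_eq harg
  unfold Φ
  rw [this, neg_div, QuotientAddGroup.mk_neg]

end StmtAux

namespace StmtAux

open Complex in
lemma unit_ne_zero (θ : ℝ) : ((Real.cos θ : ℂ) + Real.sin θ * I) ≠ 0 := by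
  have hee : ((Real.cos θ : ℂ) + Real.sin θ * I) = Complex.exp (θ * I) := by
    rw [Complex.exp_mul_I, ← Complex.ofReal_cos, ← Complex.ofReal_sin]
  exact hee ▸ Complex.exp_ne_zero _

lemma toCircle_neg (u : UnitAddCircle) :
    AddCircle.toCircle (-u) = (AddCircle.toCircle u)⁻¹ := by
  apply eq_inv_of_mul_eq_one_left
  rw [← AddCircle.toCircle_add, neg_add_cancel, AddCircle.toCircle_zero]

lemma re_toCircle_neg (u : UnitAddCircle) :
    ((AddCircle.toCircle (-u) : Circle) : ℂ).re = ((AddCircle.toCircle u : Circle) : ℂ).re := by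
  rw [toCircle_neg, Circle.coe_inv_eq_conj, Complex.conj_re]

lemma re_toCircle_zero : ((AddCircle.toCircle (0 : UnitAddCircle) : Circle) : ℂ).re = 1 := by
  rw [AddCircle.toCircle_zero]; simp

lemma re_toCircle_half :
    ((AddCircle.toCircle (((1:ℝ)/2 : ℝ) : UnitAddCircle) : Circle) : ℂ).re = -1 := by
  rw [AddCircle.toCircle_apply_mk, Circle.coe_exp]
  have : 2 * Real.pi / 1 * ((1:ℝ)/2) = Real.pi := by ring
  rw [this, Complex.exp_mul_I, ← Complex.ofReal_cos, ← Complex.ofReal_sin]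
  simp [Real.cos_pi]

end StmtAux


open Classical in
/-- If the skew product `S : X × 𝕋 → X × 𝕋` is ergodic with respect to `μ × λ`, then there is
no equivariant family of one-dimensional real subspaces for the cocycle `A`. -/
theorem stmt0
    {X : Type*} [MeasurableSpace X] (μ : Measure X) [IsProbabilityMeasure μ]
    (T T' : X → X) (hT : Ergodic T μ)
    (hT'meas : MeasurePreserving T' μ μ)
    (hTinv : Function.LeftInverse T' T) (hTinv' : Function.RightInverse T' T)
    (Xr : Set X) (hXr : MeasurableSet Xr)
    (α β : X → ℝ) (hα : Measurable α) (hβ : Measurable β)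
    (A : X → Matrix (Fin 2) (Fin 2) ℝ) (hAmeas : ∀ i j, Measurable fun x => A x i j)
    (hAr : ∀ x ∈ Xr, A x = rotM (α x))
    (hAf : ∀ x ∉ Xr, A x = reflM (β x))
    (S : X × UnitAddCircle → X × UnitAddCircle)
    (hS : ∀ x y, S (x, y) =
      (T x, if x ∈ Xr then y + ↑(α x / Real.pi) else ↑(2 * β x / Real.pi) - y))
    (hSerg : Ergodic S (μ.prod (volume : Measure UnitAddCircle))) :
    ¬ ∃ v : X → (Fin 2 → ℝ), Measurable v ∧ (∀ᵐ x ∂μ, v x ≠ 0) ∧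
      (∀ᵐ x ∂μ, (A x).mulVec (v x) ∈ Submodule.span ℝ {v (T x)}) := by
  rintro ⟨v, hvmeas, hvne, hvspan⟩
  have hv0 : Measurable fun x => v x 0 := (measurable_pi_apply 0).comp hvmeas
  have hv1 : Measurable fun x => v x 1 := (measurable_pi_apply 1).comp hvmeas
  have hZmeas : Measurable fun x => StmtAux.Z (v x) := by
    unfold StmtAux.Z
    exact (Complex.measurable_ofReal.comp hv0).add
      ((Complex.measurable_ofReal.comp hv1).mul measurable_const)
  set φ : X → UnitAddCircle := fun x => StmtAux.Φ (StmtAux.Z (v x)) with hφdef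
  have hφmeas : Measurable φ := by
    show Measurable fun x => (((StmtAux.Z (v x)).arg / Real.pi : ℝ) : UnitAddCircle)
    exact AddCircle.measurable_mk'.comp
      ((Complex.measurable_arg.comp hZmeas).div measurable_const)
  have hvneT : ∀ᵐ x ∂μ, v (T x) ≠ 0 :=
    hT.toMeasurePreserving.quasiMeasurePreserving.ae hvne
  have hkey : ∀ᵐ x ∂μ, φ (T x) =
      if x ∈ Xr then φ x + ↑(α x / Real.pi) else ↑(2 * β x / Real.pi) - φ x := by
    filter_upwards [hvne, hvneT, hvspan] with x hx0 hxT hsp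
    obtain ⟨c, hc⟩ := Submodule.mem_span_singleton.mp hsp
    have hZT : StmtAux.Z (v (T x)) ≠ 0 := StmtAux.Z_ne_zero hxT
    have hZ0 : StmtAux.Z (v x) ≠ 0 := StmtAux.Z_ne_zero hx0
    by_cases hxr : x ∈ Xr
    · rw [if_pos hxr]
      have h2 : (c : ℂ) * StmtAux.Z (v (T x))
          = (Real.cos (α x) + Real.sin (α x) * Complex.I) * StmtAux.Z (v x) := by
        rw [← StmtAux.Z_smul, hc, hAr x hxr, StmtAux.Z_rot]
      have hcne : c ≠ 0 := by
        intro h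
        rw [h] at h2
        exact mul_ne_zero (StmtAux.unit_ne_zero (α x)) hZ0 (by simpa using h2.symm)
      calc φ (T x) = StmtAux.Φ ((c : ℂ) * StmtAux.Z (v (T x))) :=
              (StmtAux.phi_real_smul hZT hcne).symm
        _ = StmtAux.Φ ((Real.cos (α x) + Real.sin (α x) * Complex.I) * StmtAux.Z (v x)) := by
              rw [h2]
        _ = ((α x / Real.pi : ℝ) : UnitAddCircle) + φ x := StmtAux.phi_unit_mul _ hZ0
        _ = φ x + ((α x / Real.pi : ℝ) : UnitAddCircle) := add_comm _ _
    · rw [if_neg hxr]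
      have hZconj : (starRingEnd ℂ) (StmtAux.Z (v x)) ≠ 0 := by
        rw [starRingEnd_apply]
        exact star_ne_zero.mpr hZ0
      have h2 : (c : ℂ) * StmtAux.Z (v (T x))
          = (Real.cos (2 * β x) + Real.sin (2 * β x) * Complex.I)
            * (starRingEnd ℂ) (StmtAux.Z (v x)) := by
        rw [← StmtAux.Z_smul, hc, hAf x hxr, StmtAux.Z_refl]
      have hcne : c ≠ 0 := by
        intro h
        rw [h] at h2
        exact mul_ne_zero (StmtAux.unit_ne_zero (2 * β x)) hZconj (by simpa using h2.symm)
      calc φ (T x) = StmtAux.Φ ((c : ℂ) * StmtAux.Z (v (T x))) :=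
              (StmtAux.phi_real_smul hZT hcne).symm
        _ = StmtAux.Φ ((Real.cos (2 * β x) + Real.sin (2 * β x) * Complex.I)
              * (starRingEnd ℂ) (StmtAux.Z (v x))) := by rw [h2]
        _ = ((2 * β x / Real.pi : ℝ) : UnitAddCircle)
              + StmtAux.Φ ((starRingEnd ℂ) (StmtAux.Z (v x))) := StmtAux.phi_unit_mul _ hZconj
        _ = ((2 * β x / Real.pi : ℝ) : UnitAddCircle) + (-φ x) := by
              rw [StmtAux.phi_conj hZ0]
        _ = ((2 * β x / Real.pi : ℝ) : UnitAddCircle) - φ x := (sub_eq_add_neg _ _).symm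
  set g : X × UnitAddCircle → ℝ :=
    fun p => ((AddCircle.toCircle (p.2 - φ p.1) : Circle) : ℂ).re with hgdef
  have hgmeas : Measurable g := by
    have hsub : Measurable fun p : X × UnitAddCircle => p.2 - φ p.1 :=
      measurable_snd.sub (hφmeas.comp measurable_fst)
    exact (Complex.continuous_re.comp
      (continuous_subtype_val.comp AddCircle.continuous_toCircle)).measurable.comp hsub
  have hginv : (g ∘ S) =ᵐ[μ.prod (volume : Measure UnitAddCircle)] g := by
    have hkeyP := (Measure.quasiMeasurePreserving_fst
      (μ := μ) (ν := (volume : Measure UnitAddCircle))).ae hkey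
    filter_upwards [hkeyP] with p hp
    obtain ⟨x, y⟩ := p
    simp only [Function.comp_apply, hS x y]
    by_cases hxr : x ∈ Xr
    · rw [if_pos hxr]
      rw [if_pos hxr] at hp
      show ((AddCircle.toCircle (y + ((α x / Real.pi : ℝ) : UnitAddCircle) - φ (T x)) : Circle) : ℂ).re = g (x, y)
      have h1 : y + ((α x / Real.pi : ℝ) : UnitAddCircle) - φ (T x) = y - φ x := by
        rw [hp]; abel
      rw [h1]
    · rw [if_neg hxr]
      rw [if_neg hxr] at hp
      show ((AddCircle.toCircle ((((2 * β x / Real.pi : ℝ) : UnitAddCircle) - y) - φ (T x)) : Circle) : ℂ).re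
        = g (x, y)
      have h1 : (((2 * β x / Real.pi : ℝ) : UnitAddCircle) - y) - φ (T x) = -(y - φ x) := by
        rw [hp]; abel
      rw [h1, StmtAux.re_toCircle_neg]
  obtain ⟨c, hc⟩ := hSerg.ae_eq_const_of_ae_eq_comp_ae hgmeas.aestronglyMeasurable hginv
  obtain ⟨x, hx⟩ := (Measure.ae_ae_of_ae_prod hc).exists
  have hfun : (fun y : UnitAddCircle =>
      ((AddCircle.toCircle (y - φ x) : Circle) : ℂ).re) = fun _ => c := by
    refine Measure.eq_of_ae_eq hx ?_ continuous_const
    exact Complex.continuous_re.comp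
      ((continuous_subtype_val.comp AddCircle.continuous_toCircle).comp
        (continuous_id.sub continuous_const))
  have h1 := congrFun hfun (φ x)
  have h2 := congrFun hfun (φ x + (((1:ℝ)/2 : ℝ) : UnitAddCircle))
  rw [sub_self, StmtAux.re_toCircle_zero] at h1
  rw [add_sub_cancel_left, StmtAux.re_toCircle_half] at h2
  linarith [h1, h2]
end

section
/- If both skew products R : X×ℤ₂ → X×ℤ₂ and S : X×𝕋 → X×𝕋 are ergodic (with respect to μ×c and μ×λ respectively), then there is no equivariant family of one-dimensional complex subspaces for the cocycle A acting on ℂ²; that is, there is no measurable map v : X → ℂ² with v(x) ≠ 0 for μ-a.e. x and A(x)·v(x) ∈ span_ℂ{v(T x)} for μ-a.e. x. (Equivalently, the trivial bundle X×ℂ² is irreducible under the action of A.) -/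
open MeasureTheory Matrix

section Aux

open Classical in
/-- If a measurable `ZMod 2`-valued function is a.e. invariant on `Xr` and flipped off `Xr`,
then the skew product `R` is not ergodic (its "graph" set has measure `1/2`). -/
lemma no_flip {X : Type*} [MeasurableSpace X] (μ : Measure X) [IsProbabilityMeasure μ]
    (T : X → X) (Xr : Set X)
    (R : X × ZMod 2 → X × ZMod 2)
    (hR : ∀ x a, R (x, a) = (T x, if x ∈ Xr then a else a + 1))
    (hRerg : Ergodic R (μ.prod ((2 : ENNReal)⁻¹ • (Measure.count : Measure (ZMod 2)))))
    (f : X → ZMod 2) (hf : Measurable f)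
    (hrel : ∀ᵐ x ∂μ, f (T x) = f x + (if x ∈ Xr then 0 else 1)) : False := by
  set ν : Measure (ZMod 2) := (2 : ENNReal)⁻¹ • Measure.count with hν
  haveI : IsProbabilityMeasure ν := by
    constructor
    rw [hν, Measure.smul_apply, Measure.count_apply_finite _ Set.finite_univ]
    simp [ENNReal.inv_mul_cancel]
  set ρ := μ.prod ν with hρ
  set E : Set (X × ZMod 2) := {z | z.2 = f z.1} with hE
  have hEmeas : MeasurableSet E := by
    have : E = ⋃ b : ZMod 2, ((f ⁻¹' {b}) ×ˢ ({b} : Set (ZMod 2))) := by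
      ext ⟨x, a⟩
      constructor
      · intro h; exact Set.mem_iUnion.mpr ⟨a, by simpa [hE] using h.symm, rfl⟩
      · intro h
        obtain ⟨b, hb⟩ := Set.mem_iUnion.mp h
        obtain ⟨h1, h2⟩ := hb
        simp only [Set.mem_preimage, Set.mem_singleton_iff] at h1 h2
        simp [hE, h1, h2]
    rw [this]
    exact MeasurableSet.iUnion fun b =>
      (hf (measurableSet_singleton b)).prod (measurableSet_singleton b)
  have h1 : ρ.map Prod.fst = μ := by rw [← Measure.fst, Measure.fst_prod]
  have hflift : ∀ᵐ z ∂ρ, f (T z.1) = f z.1 + (if z.1 ∈ Xr then 0 else 1) :=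
    ae_of_ae_map (f := Prod.fst) measurable_fst.aemeasurable
      (p := fun x => f (T x) = f x + (if x ∈ Xr then 0 else 1)) (by rw [h1]; exact hrel)
  have hinv : R ⁻¹' E =ᵐ[ρ] E := by
    rw [Filter.eventuallyEq_set]
    filter_upwards [hflift] with z hz
    obtain ⟨x, a⟩ := z
    simp only [Set.mem_preimage, hR, hE, Set.mem_setOf_eq] at *
    by_cases hx : x ∈ Xr
    · simp only [if_pos hx] at hz ⊢
      rw [hz, add_zero]
    · simp only [if_neg hx] at hz ⊢
      rw [hz]
      exact add_left_inj 1
  have hfib : ∀ x, ν (Prod.mk x ⁻¹' E) = 2⁻¹ := by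
    intro x
    have : Prod.mk x ⁻¹' E = {f x} := by ext a; simp [hE]
    rw [this, hν, Measure.smul_apply, Measure.count_singleton]
    simp
  have hEval : ρ E = 2⁻¹ := by
    rw [hρ, Measure.prod_apply hEmeas]
    simp only [hfib]
    rw [lintegral_const]
    simp
  rcases hRerg.quasiErgodic.ae_empty_or_univ₀ hEmeas.nullMeasurableSet hinv with h | h
  · have : ρ E = 0 := by
      rw [← Set.bot_eq_empty] at h
      exact (measure_congr h).trans (by simp)
    rw [hEval] at this; norm_num at this
  · have : ρ E = 1 := by simpa using measure_congr h
    rw [hEval] at this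
    exact (by norm_num : (2:ENNReal)⁻¹ ≠ 1) this

lemma rot_plus (θ : ℝ) (u : Fin 2 → ℂ) :
    ((rotM θ).map Complex.ofReal).mulVec u 0 + Complex.I * ((rotM θ).map Complex.ofReal).mulVec u 1
      = Complex.exp ((θ : ℂ) * Complex.I) * (u 0 + Complex.I * u 1) := by
  rw [Complex.exp_mul_I, ← Complex.ofReal_cos, ← Complex.ofReal_sin]
  simp only [rotM, Matrix.map_apply, Matrix.mulVec, dotProduct, Fin.sum_univ_two,
    Matrix.cons_val', Matrix.cons_val_zero, Matrix.cons_val_one, Matrix.head_cons,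
    Matrix.of_apply, Matrix.empty_val', Matrix.cons_val_fin_one, Matrix.head_fin_const,
    Complex.ofReal_neg]
  ring_nf
  rw [Complex.I_sq]
  ring

lemma rot_minus (θ : ℝ) (u : Fin 2 → ℂ) :
    ((rotM θ).map Complex.ofReal).mulVec u 0 - Complex.I * ((rotM θ).map Complex.ofReal).mulVec u 1
      = Complex.exp (-((θ : ℂ) * Complex.I)) * (u 0 - Complex.I * u 1) := by
  rw [← neg_mul, Complex.exp_mul_I, Complex.cos_neg, Complex.sin_neg,
    ← Complex.ofReal_cos, ← Complex.ofReal_sin]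
  simp only [rotM, Matrix.map_apply, Matrix.mulVec, dotProduct, Fin.sum_univ_two,
    Matrix.cons_val', Matrix.cons_val_zero, Matrix.cons_val_one, Matrix.head_cons,
    Matrix.of_apply, Matrix.empty_val', Matrix.cons_val_fin_one, Matrix.head_fin_const,
    Complex.ofReal_neg]
  ring_nf
  rw [Complex.I_sq]
  ring

lemma refl_plus (b : ℝ) (u : Fin 2 → ℂ) :
    ((reflM b).map Complex.ofReal).mulVec u 0 + Complex.I * ((reflM b).map Complex.ofReal).mulVec u 1
      = Complex.exp (((2 * b : ℝ) : ℂ) * Complex.I) * (u 0 - Complex.I * u 1) := by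
  rw [Complex.exp_mul_I, ← Complex.ofReal_cos, ← Complex.ofReal_sin]
  simp only [reflM, Matrix.map_apply, Matrix.mulVec, dotProduct, Fin.sum_univ_two,
    Matrix.cons_val', Matrix.cons_val_zero, Matrix.cons_val_one, Matrix.head_cons,
    Matrix.of_apply, Matrix.empty_val', Matrix.cons_val_fin_one, Matrix.head_fin_const,
    Complex.ofReal_neg]
  ring_nf
  rw [Complex.I_sq]
  ring

lemma refl_minus (b : ℝ) (u : Fin 2 → ℂ) :
    ((reflM b).map Complex.ofReal).mulVec u 0 - Complex.I * ((reflM b).map Complex.ofReal).mulVec u 1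
      = Complex.exp (-(((2 * b : ℝ) : ℂ) * Complex.I)) * (u 0 + Complex.I * u 1) := by
  rw [← neg_mul, Complex.exp_mul_I, Complex.cos_neg, Complex.sin_neg,
    ← Complex.ofReal_cos, ← Complex.ofReal_sin]
  simp only [reflM, Matrix.map_apply, Matrix.mulVec, dotProduct, Fin.sum_univ_two,
    Matrix.cons_val', Matrix.cons_val_zero, Matrix.cons_val_one, Matrix.head_cons,
    Matrix.of_apply, Matrix.empty_val', Matrix.cons_val_fin_one, Matrix.head_fin_const,
    Complex.ofReal_neg]
  ring_nf
  rw [Complex.I_sq]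
  ring

lemma exp_cancel {w Qx cQ' : ℂ} (e2 : cQ' = Complex.exp (-w) * Qx) :
    cQ' * Complex.exp w = Qx := by
  rw [e2]
  calc Complex.exp (-w) * Qx * Complex.exp w
      = (Complex.exp (-w) * Complex.exp w) * Qx := by ring
    _ = Qx := by rw [← Complex.exp_add]; simp

lemma ratio_rot {c E P' Q' Px Qx : ℂ} (hc : c ≠ 0) (hE : E ≠ 0) (hQx : Qx ≠ 0) (hQ' : Q' ≠ 0)
    (e1 : c * P' = E * Px) (e2 : c * Q' * E = Qx) : P' / Q' = E * E * (Px / Qx) := by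
  field_simp
  linear_combination (E * Q') * e1 - P' * e2

lemma ratio_refl {c F P' Q' Px Qx : ℂ} (hPx : Px ≠ 0) (hQx : Qx ≠ 0) (hQ' : Q' ≠ 0)
    (e1 : c * P' = F * Qx) (e2 : c * Q' * F = Px) : P' / Q' = F * F * (Px / Qx)⁻¹ := by
  rw [inv_div]
  field_simp
  linear_combination (F * Q') * e1 - P' * e2

lemma tc_neg (y : UnitAddCircle) :
    AddCircle.toCircle (-y) = (AddCircle.toCircle y)⁻¹ := by
  have := (AddCircle.toCircle_add (-y) y).symm
  simp at this
  exact eq_inv_of_mul_eq_one_left this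

lemma tc_real (t : ℝ) :
    ((AddCircle.toCircle ((t : ℝ) : UnitAddCircle)) : ℂ)
      = Complex.exp (((2 * Real.pi * t : ℝ) : ℂ) * Complex.I) := by
  rw [AddCircle.toCircle_apply_mk, Circle.coe_exp,
    show (2 * Real.pi / 1 * t : ℝ) = 2 * Real.pi * t by ring]

end Aux

open Classical in
/-- If both skew products `R : X × ℤ₂ → X × ℤ₂` and `S : X × 𝕋 → X × 𝕋` are ergodic
(with respect to `μ × c` and `μ × λ` respectively), then there is no equivariant family of
one-dimensional complex subspaces for the cocycle `A`. -/
theorem stmt1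
    {X : Type*} [MeasurableSpace X] (μ : Measure X) [IsProbabilityMeasure μ]
    (T T' : X → X) (hT : Ergodic T μ)
    (hT'meas : MeasurePreserving T' μ μ)
    (hTinv : Function.LeftInverse T' T) (hTinv' : Function.RightInverse T' T)
    (Xr : Set X) (hXr : MeasurableSet Xr)
    (α β : X → ℝ) (hα : Measurable α) (hβ : Measurable β)
    (A : X → Matrix (Fin 2) (Fin 2) ℝ) (hAmeas : ∀ i j, Measurable fun x => A x i j)
    (hAr : ∀ x ∈ Xr, A x = rotM (α x))
    (hAf : ∀ x ∉ Xr, A x = reflM (β x))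
    (S : X × UnitAddCircle → X × UnitAddCircle)
    (hS : ∀ x y, S (x, y) =
      (T x, if x ∈ Xr then y + ↑(α x / Real.pi) else ↑(2 * β x / Real.pi) - y))
    (R : X × ZMod 2 → X × ZMod 2)
    (hR : ∀ x a, R (x, a) = (T x, if x ∈ Xr then a else a + 1))
    (hSerg : Ergodic S (μ.prod (volume : Measure UnitAddCircle)))
    (hRerg : Ergodic R (μ.prod ((2 : ENNReal)⁻¹ • (Measure.count : Measure (ZMod 2))))) :
    ¬ ∃ v : X → (Fin 2 → ℂ), Measurable v ∧ (∀ᵐ x ∂μ, v x ≠ 0) ∧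
      (∀ᵐ x ∂μ, ((A x).map Complex.ofReal).mulVec (v x) ∈ Submodule.span ℂ {v (T x)}) := by
  rintro ⟨v, hv, hvne, hmem⟩
  set P : X → ℂ := fun x => v x 0 + Complex.I * v x 1 with hPdef
  set Q : X → ℂ := fun x => v x 0 - Complex.I * v x 1 with hQdef
  have hPm : Measurable P := ((measurable_pi_apply 0).comp hv).add
    (measurable_const.mul ((measurable_pi_apply 1).comp hv))
  have hQm : Measurable Q := ((measurable_pi_apply 0).comp hv).sub
    (measurable_const.mul ((measurable_pi_apply 1).comp hv))
  -- pull back a.e. statements through T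
  have hTpull : ∀ {p : X → Prop}, (∀ᵐ x ∂μ, p x) → (∀ᵐ x ∂μ, p (T x)) := by
    intro p hp
    exact ae_of_ae_map hT.toMeasurePreserving.measurable.aemeasurable
      (by rwa [hT.toMeasurePreserving.map_eq])
  -- the master a.e. relations
  have master : ∀ᵐ x ∂μ, ∃ c : ℂ, c ≠ 0 ∧
      (c * c) * (P (T x) * Q (T x)) = P x * Q x ∧
      (x ∈ Xr → c * P (T x) = Complex.exp ((α x : ℂ) * Complex.I) * P x ∧
                c * Q (T x) = Complex.exp (-((α x : ℂ) * Complex.I)) * Q x) ∧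
      (x ∉ Xr → c * P (T x) = Complex.exp (((2 * β x : ℝ) : ℂ) * Complex.I) * Q x ∧
                c * Q (T x) = Complex.exp (-(((2 * β x : ℝ) : ℂ) * Complex.I)) * P x) := by
    filter_upwards [hvne, hmem] with x hne hm
    obtain ⟨c, hc⟩ := Submodule.mem_span_singleton.mp hm
    have h0 : ((A x).map Complex.ofReal).mulVec (v x) 0 = c * v (T x) 0 := by
      rw [← hc]; simp
    have h1 : ((A x).map Complex.ofReal).mulVec (v x) 1 = c * v (T x) 1 := by
      rw [← hc]; simp
    have hplus : c * P (T x) =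
        ((A x).map Complex.ofReal).mulVec (v x) 0
          + Complex.I * ((A x).map Complex.ofReal).mulVec (v x) 1 := by
      rw [h0, h1]; simp only [hPdef]; ring
    have hminus : c * Q (T x) =
        ((A x).map Complex.ofReal).mulVec (v x) 0
          - Complex.I * ((A x).map Complex.ofReal).mulVec (v x) 1 := by
      rw [h0, h1]; simp only [hQdef]; ring
    have hvzero : P x = 0 → Q x = 0 → False := by
      intro hPx hQx
      simp only [hPdef, hQdef] at hPx hQx
      apply hne
      funext i
      fin_cases i
      · show v x 0 = 0
        linear_combination (hPx + hQx) / 2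
      · show v x 1 = 0
        linear_combination (hPx - hQx) * (-Complex.I) / 2 + (v x 1) * Complex.I_sq
    by_cases hx : x ∈ Xr
    · have e1 : c * P (T x) = Complex.exp ((α x : ℂ) * Complex.I) * P x := by
        rw [hplus, hAr x hx]; exact rot_plus (α x) (v x)
      have e2 : c * Q (T x) = Complex.exp (-((α x : ℂ) * Complex.I)) * Q x := by
        rw [hminus, hAr x hx]; exact rot_minus (α x) (v x)
      have hc0 : c ≠ 0 := by
        rintro rfl
        simp only [zero_mul] at e1 e2
        exact hvzero ((mul_eq_zero.mp e1.symm).resolve_left (Complex.exp_ne_zero _))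
          ((mul_eq_zero.mp e2.symm).resolve_left (Complex.exp_ne_zero _))
      have hEE : Complex.exp ((α x : ℂ) * Complex.I)
          * Complex.exp (-((α x : ℂ) * Complex.I)) = 1 := by
        rw [← Complex.exp_add]; simp
      refine ⟨c, hc0, ?_, fun _ => ⟨e1, e2⟩, fun h => absurd hx h⟩
      linear_combination (c * Q (T x)) * e1
        + (Complex.exp ((α x : ℂ) * Complex.I) * P x) * e2 + (P x * Q x) * hEE
    · have e1 : c * P (T x) = Complex.exp (((2 * β x : ℝ) : ℂ) * Complex.I) * Q x := by
        rw [hplus, hAf x hx]; exact refl_plus (β x) (v x)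
      have e2 : c * Q (T x) = Complex.exp (-(((2 * β x : ℝ) : ℂ) * Complex.I)) * P x := by
        rw [hminus, hAf x hx]; exact refl_minus (β x) (v x)
      have hc0 : c ≠ 0 := by
        rintro rfl
        simp only [zero_mul] at e1 e2
        exact hvzero ((mul_eq_zero.mp e2.symm).resolve_left (Complex.exp_ne_zero _))
          ((mul_eq_zero.mp e1.symm).resolve_left (Complex.exp_ne_zero _))
      have hFF : Complex.exp (((2 * β x : ℝ) : ℂ) * Complex.I)
          * Complex.exp (-(((2 * β x : ℝ) : ℂ) * Complex.I)) = 1 := by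
        rw [← Complex.exp_add]; simp
      refine ⟨c, hc0, ?_, fun h => absurd h hx, fun _ => ⟨e1, e2⟩⟩
      linear_combination (c * Q (T x)) * e1
        + (Complex.exp (((2 * β x : ℝ) : ℂ) * Complex.I) * Q x) * e2 + (Q x * P x) * hFF
  -- the invariant set of isotropic points
  set Zs : Set X := {x | P x * Q x = 0} with hZs
  have hZmeas : MeasurableSet Zs := by
    have : Zs = (fun x => P x * Q x) ⁻¹' {0} := rfl
    rw [this]
    exact (hPm.mul hQm) (measurableSet_singleton 0)
  have hZinv : T ⁻¹' Zs =ᵐ[μ] Zs := by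
    rw [Filter.eventuallyEq_set]
    filter_upwards [master] with x hm
    obtain ⟨c, hc0, hprod, _, _⟩ := hm
    simp only [Set.mem_preimage, hZs, Set.mem_setOf_eq]
    constructor
    · intro h; rw [← hprod, h, mul_zero]
    · intro h
      have h2 : (c * c) * (P (T x) * Q (T x)) = 0 := by rw [hprod, h]
      exact (mul_eq_zero.mp h2).resolve_left (mul_ne_zero hc0 hc0)
  rcases hT.quasiErgodic.ae_empty_or_univ₀ hZmeas.nullMeasurableSet hZinv with hZ | hZ
  · -- non-isotropic case : P x ≠ 0 and Q x ≠ 0 a.e.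
    have hb : ∀ᵐ x ∂μ, P x ≠ 0 ∧ Q x ≠ 0 := by
      have h0 : μ Zs = 0 := by simpa using measure_congr hZ
      have h1 : ∀ᵐ x ∂μ, x ∉ Zs := measure_eq_zero_iff_ae_notMem.mp h0
      filter_upwards [h1] with x hx
      exact mul_ne_zero_iff.mp (by simpa [hZs] using hx)
    set g : X → ℝ := fun x => Real.log (norm (P x / Q x)) with hgdef
    have hgm : Measurable g :=
      Real.measurable_log.comp (continuous_norm.measurable.comp (hPm.div hQm))
    have hsign : ∀ᵐ x ∂μ, (x ∈ Xr → g (T x) = g x) ∧ (x ∉ Xr → g (T x) = - g x) := by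
      filter_upwards [master, hb, hTpull hb] with x hm hbx hbT
      obtain ⟨c, hc0, _, hrot, hrefl⟩ := hm
      obtain ⟨hPx, hQx⟩ := hbx
      obtain ⟨hPT, hQT⟩ := hbT
      have habsc : norm c ≠ 0 := by simpa using hc0
      constructor
      · intro hx
        obtain ⟨e1, e2⟩ := hrot hx
        have a1 : norm c * norm (P (T x)) = norm (P x) := by
          have h := congrArg norm e1
          rwa [norm_mul, norm_mul, Complex.norm_exp_ofReal_mul_I, one_mul] at h
        have a2 : norm c * norm (Q (T x)) = norm (Q x) := by
          have h := congrArg norm e2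
          rw [norm_mul, norm_mul,
            show (-((α x : ℂ) * Complex.I)) = ((-(α x) : ℝ) : ℂ) * Complex.I by push_cast; ring,
            Complex.norm_exp_ofReal_mul_I, one_mul] at h
          exact h
        have key : norm (P (T x)) / norm (Q (T x))
            = norm (P x) / norm (Q x) := by
          rw [← mul_div_mul_left (norm (P (T x))) (norm (Q (T x))) habsc, a1, a2]
        show Real.log (norm (P (T x) / Q (T x))) = Real.log (norm (P x / Q x))
        rw [norm_div, norm_div, key]
      · intro hx
        obtain ⟨e1, e2⟩ := hrefl hx
        have a1 : norm c * norm (P (T x)) = norm (Q x) := by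
          have h := congrArg norm e1
          rwa [norm_mul, norm_mul,
            show (((2 * β x : ℝ) : ℂ) * Complex.I) = ((2 * β x : ℝ) : ℂ) * Complex.I from rfl,
            Complex.norm_exp_ofReal_mul_I, one_mul] at h
        have a2 : norm c * norm (Q (T x)) = norm (P x) := by
          have h := congrArg norm e2
          rw [norm_mul, norm_mul,
            show (-(((2 * β x : ℝ) : ℂ) * Complex.I)) = ((-(2 * β x) : ℝ) : ℂ) * Complex.I by
              push_cast; ring,
            Complex.norm_exp_ofReal_mul_I, one_mul] at h
          exact h
        have key : norm (P (T x)) / norm (Q (T x))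
            = norm (Q x) / norm (P x) := by
          rw [← mul_div_mul_left (norm (P (T x))) (norm (Q (T x))) habsc, a1, a2]
        show Real.log (norm (P (T x) / Q (T x))) = - Real.log (norm (P x / Q x))
        rw [norm_div, norm_div, key,
          show norm (Q x) / norm (P x)
              = (norm (P x) / norm (Q x))⁻¹ from (inv_div _ _).symm,
          Real.log_inv]
    have habs : (fun x => |g x|) ∘ T =ᵐ[μ] fun x => |g x| := by
      filter_upwards [hsign] with x hx
      simp only [Function.comp_apply]
      by_cases hxr : x ∈ Xr
      · rw [hx.1 hxr]
      · rw [hx.2 hxr, abs_neg]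
    obtain ⟨k, hk⟩ := hT.ae_eq_const_of_ae_eq_comp₀ hgm.abs.nullMeasurable habs
    by_cases hk0 : k = 0
    · -- |P/Q| = 1 a.e. : use the circle skew product S
      subst hk0
      have habs1 : ∀ᵐ x ∂μ, norm (P x / Q x) = 1 := by
        filter_upwards [hk, hb] with x hx hbx
        have h0 : |g x| = 0 := hx
        have hg : g x = 0 := abs_eq_zero.mp h0
        have hne : norm (P x / Q x) ≠ 0 := by
          simpa using div_ne_zero hbx.1 hbx.2
        rcases Real.log_eq_zero.mp hg with h | h | h
        · exact absurd h hne
        · exact h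
        · exact absurd h (by
            have := norm_nonneg (P x / Q x)
            intro hcon; rw [hcon] at this; linarith)
      set φ : X → UnitAddCircle :=
        fun x => ((Complex.arg (P x / Q x) / (2 * Real.pi) : ℝ) : UnitAddCircle) with hφdef
      have hφm : Measurable φ :=
        (AddCircle.continuous_mk' 1).measurable.comp
          ((Complex.measurable_arg.comp (hPm.div hQm)).div_const _)
      have hcoe : ∀ x, norm (P x / Q x) = 1 →
          ((AddCircle.toCircle (φ x)) : ℂ) = P x / Q x := by
        intro x h
        show ((AddCircle.toCircle ((↑(Complex.arg (P x / Q x) / (2 * Real.pi)) : UnitAddCircle))) : ℂ) = _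
        rw [AddCircle.toCircle_apply_mk, Circle.coe_exp,
          show 2 * Real.pi / 1 * (Complex.arg (P x / Q x) / (2 * Real.pi))
              = Complex.arg (P x / Q x) by field_simp]
        have h2 := Complex.norm_mul_exp_arg_mul_I (P x / Q x)
        rw [h] at h2
        simpa using h2
      have hφrel : ∀ᵐ x ∂μ,
          (x ∈ Xr → φ (T x) = φ x + ((α x / Real.pi : ℝ) : UnitAddCircle)) ∧
          (x ∉ Xr → φ (T x) = ((2 * β x / Real.pi : ℝ) : UnitAddCircle) - φ x) := by
        filter_upwards [master, hb, hTpull hb, habs1, hTpull habs1] with x hm hbx hbT hax haT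
        obtain ⟨c, hc0, _, hrot, hrefl⟩ := hm
        obtain ⟨hPx, hQx⟩ := hbx
        obtain ⟨hPT, hQT⟩ := hbT
        constructor
        · intro hx
          obtain ⟨e1, e2⟩ := hrot hx
          apply AddCircle.injective_toCircle one_ne_zero
          apply Circle.coe_injective
          rw [hcoe _ haT, AddCircle.toCircle_add, Circle.coe_mul, hcoe _ hax, tc_real,
            show (2 * Real.pi * (α x / Real.pi) : ℝ) = 2 * α x by field_simp]
          have hsplit : Complex.exp (((2 * α x : ℝ) : ℂ) * Complex.I)
              = Complex.exp ((α x : ℂ) * Complex.I) * Complex.exp ((α x : ℂ) * Complex.I) := by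
            rw [← Complex.exp_add]; push_cast; ring_nf
          have e2' : c * Q (T x) * Complex.exp ((α x : ℂ) * Complex.I) = Q x := exp_cancel e2
          rw [hsplit, ratio_rot hc0 (Complex.exp_ne_zero _) hQx hQT e1 e2']
          ring
        · intro hx
          obtain ⟨e1, e2⟩ := hrefl hx
          apply AddCircle.injective_toCircle one_ne_zero
          apply Circle.coe_injective
          rw [hcoe _ haT, sub_eq_add_neg, AddCircle.toCircle_add, Circle.coe_mul, tc_neg,
            Circle.coe_inv, hcoe _ hax, tc_real,
            show (2 * Real.pi * (2 * β x / Real.pi) : ℝ) = 2 * (2 * β x) by field_simp]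
          have hsplit : Complex.exp (((2 * (2 * β x) : ℝ) : ℂ) * Complex.I)
              = Complex.exp (((2 * β x : ℝ) : ℂ) * Complex.I)
                * Complex.exp (((2 * β x : ℝ) : ℂ) * Complex.I) := by
            rw [← Complex.exp_add]; push_cast; ring_nf
          have e2' : c * Q (T x) * Complex.exp (((2 * β x : ℝ) : ℂ) * Complex.I) = P x :=
            exp_cancel e2
          rw [hsplit, ratio_refl hPx hQx hQT e1 e2']
      -- build the S-invariant function
      haveI : IsProbabilityMeasure (volume : Measure UnitAddCircle) := by
        constructor
        rw [AddCircle.measure_univ]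
        norm_num
      set H : X × UnitAddCircle → ℝ :=
        fun z => ((AddCircle.toCircle (z.2 - φ z.1)) : ℂ).re with hHdef
      have hHm : Measurable H :=
        Complex.measurable_re.comp
          (((continuous_subtype_val.comp AddCircle.continuous_toCircle).measurable).comp
            (measurable_snd.sub (hφm.comp measurable_fst)))
      set ρ2 := μ.prod (volume : Measure UnitAddCircle) with hρ2
      have hfst : ρ2.map Prod.fst = μ := by rw [← Measure.fst, Measure.fst_prod]
      have hφrel2 : ∀ᵐ z ∂ρ2,
          (z.1 ∈ Xr → φ (T z.1) = φ z.1 + ((α z.1 / Real.pi : ℝ) : UnitAddCircle)) ∧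
          (z.1 ∉ Xr → φ (T z.1) = ((2 * β z.1 / Real.pi : ℝ) : UnitAddCircle) - φ z.1) :=
        ae_of_ae_map (f := Prod.fst) measurable_fst.aemeasurable
          (p := fun x =>
            (x ∈ Xr → φ (T x) = φ x + ((α x / Real.pi : ℝ) : UnitAddCircle)) ∧
            (x ∉ Xr → φ (T x) = ((2 * β x / Real.pi : ℝ) : UnitAddCircle) - φ x))
          (by rw [hfst]; exact hφrel)
      have hHinv : H ∘ S =ᵐ[ρ2] H := by
        filter_upwards [hφrel2] with z hz
        obtain ⟨x, y⟩ := z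
        simp only [Function.comp_apply, hS]
        by_cases hxr : x ∈ Xr
        · simp only [if_pos hxr]
          show ((AddCircle.toCircle ((y + (↑(α x / Real.pi) : UnitAddCircle)) - φ (T x))) : ℂ).re
            = ((AddCircle.toCircle (y - φ x)) : ℂ).re
          rw [hz.1 hxr,
            show (y + (↑(α x / Real.pi) : UnitAddCircle))
                - (φ x + (↑(α x / Real.pi) : UnitAddCircle)) = y - φ x by abel]
        · simp only [if_neg hxr]
          show ((AddCircle.toCircle (((↑(2 * β x / Real.pi) : UnitAddCircle) - y) - φ (T x))) : ℂ).re
            = ((AddCircle.toCircle (y - φ x)) : ℂ).re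
          rw [hz.2 hxr,
            show ((↑(2 * β x / Real.pi) : UnitAddCircle) - y)
                - ((↑(2 * β x / Real.pi) : UnitAddCircle) - φ x) = -(y - φ x) by abel,
            tc_neg, Circle.coe_inv_eq_conj, Complex.conj_re]
      obtain ⟨k2, hk2⟩ := hSerg.ae_eq_const_of_ae_eq_comp₀ hHm.nullMeasurable hHinv
      have h2 := Measure.ae_ae_of_ae_prod hk2
      obtain ⟨x₀, hx₀⟩ := h2.exists
      set G : UnitAddCircle → ℝ :=
        fun y => ((AddCircle.toCircle (y - φ x₀)) : ℂ).re with hGdef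
      have hGc : Continuous G :=
        Complex.continuous_re.comp
          (continuous_subtype_val.comp
            (AddCircle.continuous_toCircle.comp (continuous_id.sub continuous_const)))
      have hGae : G =ᵐ[volume] fun _ => k2 := by
        filter_upwards [hx₀] with y hy
        exact hy
      have hGeq : G = fun _ => k2 := (hGc.ae_eq_iff_eq volume continuous_const).mp hGae
      have v1 : k2 = 1 := by
        have h3 := congrFun hGeq (φ x₀)
        simp only [hGdef] at h3
        rw [sub_self, AddCircle.toCircle_zero] at h3
        simpa using h3.symm
      have v2 : k2 = -1 := by
        have h3 := congrFun hGeq (φ x₀ + ((1/2 : ℝ) : UnitAddCircle))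
        simp only [hGdef] at h3
        rw [show (φ x₀ + ((1/2 : ℝ) : UnitAddCircle)) - φ x₀ = ((1/2 : ℝ) : UnitAddCircle) by abel,
          AddCircle.toCircle_apply_mk, Circle.coe_exp,
          show (2 * Real.pi / 1 * (1/2) : ℝ) = Real.pi by ring] at h3
        rw [← h3]
        rw [show ((Real.pi : ℝ) : ℂ) * Complex.I = (Real.pi : ℂ) * Complex.I from rfl,
          Complex.exp_pi_mul_I]
        simp
      rw [v1] at v2
      norm_num at v2
    · -- sign case: use R
      have hgne : ∀ᵐ x ∂μ, g x ≠ 0 := by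
        filter_upwards [hk] with x hx
        intro h
        apply hk0
        have : |g x| = k := hx
        rw [h, abs_zero] at this
        exact this.symm
      set f : X → ZMod 2 := fun x => if 0 < g x then (0 : ZMod 2) else 1 with hfdef
      have hfm : Measurable f :=
        Measurable.ite (measurableSet_lt measurable_const hgm) measurable_const measurable_const
      have hrelf : ∀ᵐ x ∂μ, f (T x) = f x + (if x ∈ Xr then 0 else 1) := by
        filter_upwards [hsign, hgne] with x hs hg0
        by_cases hxr : x ∈ Xr
        · simp only [if_pos hxr, add_zero, hfdef]
          rw [hs.1 hxr]
        · have hgT : g (T x) = - g x := hs.2 hxr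
          simp only [if_neg hxr, hfdef]
          rw [hgT]
          by_cases hpos : 0 < g x
          · rw [if_pos hpos, if_neg (by linarith), zero_add]
          · have hneg : 0 < - g x := neg_pos.mpr (lt_of_le_of_ne (not_lt.mp hpos) hg0)
            rw [if_pos hneg, if_neg hpos]
            decide
      exact no_flip μ T Xr R hR hRerg f hfm hrelf
  · -- isotropic case: P x * Q x = 0 a.e. : use R
    have hae : ∀ᵐ x ∂μ, P x * Q x = 0 := by
      have h0 : μ Zsᶜ = 0 := ae_eq_univ.mp hZ
      have h1 : ∀ᵐ x ∂μ, x ∈ Zs := by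
        rw [ae_iff]
        exact h0
      filter_upwards [h1] with x hx
      simpa [hZs] using hx
    have hone : ∀ᵐ x ∂μ, ¬(P x = 0 ∧ Q x = 0) := by
      filter_upwards [hvne] with x hne
      rintro ⟨hPx, hQx⟩
      simp only [hPdef, hQdef] at hPx hQx
      apply hne
      funext i
      fin_cases i
      · show v x 0 = 0
        linear_combination (hPx + hQx) / 2
      · show v x 1 = 0
        linear_combination (hPx - hQx) * (-Complex.I) / 2 + (v x 1) * Complex.I_sq
    set f : X → ZMod 2 := fun x => if P x = 0 then (0 : ZMod 2) else 1 with hfdef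
    have hfm : Measurable f :=
      Measurable.ite (hPm (measurableSet_singleton 0)) measurable_const measurable_const
    have hrelf : ∀ᵐ x ∂μ, f (T x) = f x + (if x ∈ Xr then 0 else 1) := by
      filter_upwards [master, hae, hone] with x hm h0 h1
      obtain ⟨c, hc0, _, hrot, hrefl⟩ := hm
      by_cases hxr : x ∈ Xr
      · obtain ⟨e1, e2⟩ := hrot hxr
        have hiff : (P (T x) = 0 ↔ P x = 0) := by
          constructor
          · intro h
            have h2 : Complex.exp ((α x : ℂ) * Complex.I) * P x = 0 := by
              rw [← e1, h, mul_zero]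
            exact (mul_eq_zero.mp h2).resolve_left (Complex.exp_ne_zero _)
          · intro h
            have h2 : c * P (T x) = 0 := by rw [e1, h, mul_zero]
            exact (mul_eq_zero.mp h2).resolve_left hc0
        simp only [if_pos hxr, add_zero, hfdef]
        by_cases h : P x = 0
        · rw [if_pos h, if_pos (hiff.mpr h)]
        · rw [if_neg h, if_neg (fun hc => h (hiff.mp hc))]
      · obtain ⟨e1, e2⟩ := hrefl hxr
        have hiff : (P (T x) = 0 ↔ Q x = 0) := by
          constructor
          · intro h
            have h2 : Complex.exp (((2 * β x : ℝ) : ℂ) * Complex.I) * Q x = 0 := by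
              rw [← e1, h, mul_zero]
            exact (mul_eq_zero.mp h2).resolve_left (Complex.exp_ne_zero _)
          · intro h
            have h2 : c * P (T x) = 0 := by rw [e1, h, mul_zero]
            exact (mul_eq_zero.mp h2).resolve_left hc0
        simp only [if_neg hxr, hfdef]
        by_cases h : P x = 0
        · have hQ : Q x ≠ 0 := fun hq => h1 ⟨h, hq⟩
          rw [if_pos h, if_neg (fun hc => hQ (hiff.mp hc)), zero_add]
        · have hQ : Q x = 0 := (mul_eq_zero.mp h0).resolve_left h
          rw [if_neg h, if_pos (hiff.mpr hQ)]
          decide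
    exact no_flip μ T Xr R hR hRerg f hfm hrelf
end

section
/- If at least one of the skew products R : X×ℤ₂ → X×ℤ₂ or S : X×𝕋 → X×𝕋 is ergodic (with respect to μ×c, respectively μ×λ), then the cocycle A is not cohomologous to a scalar multiple of the identity: there exist no measurable maps C : X → GL₂(ℂ) and λ : X → ℂ such that C(T x)⁻¹ A(x) C(x) = λ(x)·I for μ-a.e. x ∈ X. -/
open MeasureTheory Matrix

noncomputable def eC : UnitAddCircle → ℂ := fun y => (AddCircle.toCircle y : ℂ)

lemma eC_ne (y : UnitAddCircle) : eC y ≠ 0 := Circle.coe_ne_zero _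

lemma eC_add (x y : UnitAddCircle) : eC (x + y) = eC x * eC y := by
  simp only [eC, AddCircle.toCircle_add, Circle.coe_mul]

lemma eC_zero : eC 0 = 1 := by simp [eC]

lemma eC_neg (y : UnitAddCircle) : eC (-y) = (eC y)⁻¹ := by
  have h : eC (-y) * eC y = 1 := by rw [← eC_add, neg_add_cancel, eC_zero]
  exact eq_inv_of_mul_eq_one_left h

lemma eC_coe (r : ℝ) : eC ((r : ℝ) : UnitAddCircle) =
    Complex.exp ((2 * Real.pi * r : ℝ) * Complex.I) := by
  show ((AddCircle.toCircle ((r : ℝ) : UnitAddCircle) : Circle) : ℂ) = _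
  rw [AddCircle.toCircle_apply_mk, Circle.coe_exp]
  norm_num

lemma continuous_eC : Continuous eC :=
  continuous_induced_dom.comp AddCircle.continuous_toCircle

lemma integrable_eC : Integrable eC (volume : Measure UnitAddCircle) :=
  continuous_eC.integrable_of_hasCompactSupport (HasCompactSupport.of_compactSpace _)

lemma integrable_eC_inv : Integrable (fun y => (eC y)⁻¹) (volume : Measure UnitAddCircle) := by
  have h : Continuous fun y => eC (-y) := continuous_eC.comp continuous_neg
  have := h.integrable_of_hasCompactSupport (μ := volume) (HasCompactSupport.of_compactSpace _)
  simpa [eC_neg] using this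

lemma integrable_eC_sq : Integrable (fun y => (eC y) ^ 2) (volume : Measure UnitAddCircle) :=
  (continuous_eC.pow 2).integrable_of_hasCompactSupport (HasCompactSupport.of_compactSpace _)

lemma eC_half : eC (((2⁻¹ : ℝ) : ℝ) : UnitAddCircle) = -1 := by
  rw [eC_coe]
  have : ((2 * Real.pi * 2⁻¹ : ℝ) : ℂ) * Complex.I = (Real.pi : ℂ) * Complex.I := by
    push_cast; ring
  rw [this, Complex.exp_pi_mul_I]

lemma eC_quarter_sq : eC (((4⁻¹ : ℝ) : ℝ) : UnitAddCircle) ^ 2 = -1 := by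
  have h4 : ((4⁻¹ : ℝ) : UnitAddCircle) + ((4⁻¹ : ℝ) : UnitAddCircle)
      = ((2⁻¹ : ℝ) : UnitAddCircle) := by
    rw [← AddCircle.coe_add]; norm_num
  rw [sq, ← eC_add, h4, eC_half]

lemma integral_eC : ∫ y : UnitAddCircle, eC y = 0 := by
  have h := MeasureTheory.integral_add_left_eq_self (μ := volume) eC (((2⁻¹ : ℝ) : ℝ) : UnitAddCircle)
  simp_rw [eC_add, eC_half] at h
  rw [MeasureTheory.integral_const_mul] at h
  linear_combination -h / 2

lemma integral_eC_inv : ∫ y : UnitAddCircle, (eC y)⁻¹ = 0 := by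
  have h := MeasureTheory.integral_add_left_eq_self (μ := volume) (fun y => (eC y)⁻¹)
    (((2⁻¹ : ℝ) : ℝ) : UnitAddCircle)
  simp_rw [eC_add, eC_half, mul_inv] at h
  rw [MeasureTheory.integral_const_mul] at h
  simp only [inv_neg, inv_one] at h
  linear_combination -h / 2

lemma integral_eC_sq : ∫ y : UnitAddCircle, (eC y) ^ 2 = 0 := by
  have h := MeasureTheory.integral_add_left_eq_self (μ := volume) (fun y => (eC y) ^ 2)
    (((4⁻¹ : ℝ) : ℝ) : UnitAddCircle)
  simp_rw [eC_add, mul_pow, eC_quarter_sq] at h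
  rw [MeasureTheory.integral_const_mul] at h
  linear_combination -h / 2

lemma ae_fst {A B : Type*} [MeasurableSpace A] [MeasurableSpace B] {μ : Measure A}
    (ν : Measure B) [SFinite ν] {P : A → Prop} (h : ∀ᵐ x ∂μ, P x) :
    ∀ᵐ z ∂μ.prod ν, P z.1 := by
  rw [ae_iff] at h ⊢
  refine measure_mono_null (t := (toMeasurable μ {a | ¬ P a}) ×ˢ (Set.univ : Set B))
    (fun z hz => ?_) ?_
  · exact Set.mem_prod.mpr ⟨subset_toMeasurable μ _ hz, Set.mem_univ z.2⟩
  · rw [Measure.prod_prod, measure_toMeasurable, h, zero_mul]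

noncomputable def nu2 : Measure (ZMod 2) := (2 : ENNReal)⁻¹ • Measure.count

instance : IsProbabilityMeasure nu2 := by
  constructor
  rw [nu2, Measure.smul_apply, Measure.count_univ, smul_eq_mul]
  norm_num
  rw [ENNReal.inv_mul_cancel] <;> norm_num

lemma nu2_ae {P : ZMod 2 → Prop} (h : ∀ᵐ a ∂nu2, P a) : ∀ a, P a := by
  by_contra hc
  push_neg at hc
  obtain ⟨a, ha⟩ := hc
  rw [ae_iff] at h
  have h1 : nu2 {a} = 0 := by
    refine measure_mono_null ?_ h
    intro z hz
    simp only [Set.mem_singleton_iff] at hz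
    subst hz; exact ha
  rw [nu2, Measure.smul_apply, Measure.count_singleton, smul_eq_mul, mul_one] at h1
  norm_num at h1

open Classical in
lemma flipR {X : Type*} [MeasurableSpace X] {μ : Measure X} [IsProbabilityMeasure μ]
    {T : X → X} {Xr : Set X} {R : X × ZMod 2 → X × ZMod 2}
    (hR : ∀ x a, R (x, a) = (T x, if x ∈ Xr then a else a + 1))
    (hergR : Ergodic R (μ.prod nu2))
    {f : X → ℂ} (hf : Measurable f)
    (hflip : ∀ᵐ x ∂μ, f (T x) = if x ∈ Xr then f x else -f x) :
    f =ᵐ[μ] 0 := by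
  classical
  set g : X × ZMod 2 → ℂ := fun z => if z.2 = 0 then f z.1 else -f z.1 with hg
  have hgm : Measurable g := by
    apply Measurable.ite _ (hf.comp measurable_fst) (hf.comp measurable_fst).neg
    exact measurable_snd (MeasurableSet.singleton (0 : ZMod 2))
  have hinv : g ∘ R =ᵐ[μ.prod nu2] g := by
    filter_upwards [ae_fst nu2 hflip] with z hz
    obtain ⟨x, a⟩ := z
    simp only [Function.comp_apply, hR, hg]
    by_cases hx : x ∈ Xr <;> simp only [hx, if_true, if_false] at hz ⊢
    · by_cases ha : a = 0 <;> simp [ha, hz]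
    · have ha2 : ∀ b : ZMod 2, (b + 1 = 0 ↔ ¬ b = 0) := by decide
      by_cases ha : a = 0 <;> simp [ha, ha2 a, hz]
  obtain ⟨c, hc⟩ := hergR.ae_eq_const_of_ae_eq_comp_ae hgm.aestronglyMeasurable hinv
  have h2 := Measure.ae_ae_of_ae_prod hc
  filter_upwards [h2] with x hx
  have h3 := nu2_ae hx
  have h0 := h3 0
  have h1 := h3 1
  simp only [hg] at h0 h1
  norm_num at h0 h1
  have h5 : f x = - f x := by linear_combination h0 - h1
  simp only [Pi.zero_apply]
  have h4 : (2 : ℂ) * f x = 0 := by linear_combination h5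
  norm_num at h4
  exact h4

lemma key_circle {a b c : ℂ}
    (h : ∀ᵐ y : UnitAddCircle, a * eC y + b * (eC y)⁻¹ = c) : a = 0 ∧ b = 0 := by
  haveI : IsProbabilityMeasure (volume : Measure UnitAddCircle) :=
    ⟨UnitAddCircle.measure_univ⟩
  have hint : ∫ y : UnitAddCircle, (a * eC y + b * (eC y)⁻¹) = c := by
    rw [integral_congr_ae h]
    simp
  rw [integral_add (integrable_eC.const_mul a) (integrable_eC_inv.const_mul b),
    MeasureTheory.integral_const_mul, MeasureTheory.integral_const_mul,
    integral_eC, integral_eC_inv] at hint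
  simp only [mul_zero, add_zero] at hint
  have hc : c = 0 := hint.symm
  have h2 : ∀ᵐ y : UnitAddCircle, a * (eC y) ^ 2 + b = 0 := by
    filter_upwards [h] with y hy
    have hinv : (eC y)⁻¹ * eC y = 1 := inv_mul_cancel₀ (eC_ne y)
    linear_combination eC y * hy - b * hinv + eC y * hc
  have hint2 : ∫ y : UnitAddCircle, (a * (eC y) ^ 2 + b) = 0 := by
    rw [integral_congr_ae h2]
    simp
  rw [integral_add (integrable_eC_sq.const_mul a) (integrable_const b),
    MeasureTheory.integral_const_mul, integral_eC_sq, integral_const] at hint2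
  simp only [mul_zero, zero_add, measure_univ, ENNReal.toReal_one, one_smul, probReal_univ] at hint2
  refine ⟨?_, hint2⟩
  have hne : (volume : Measure UnitAddCircle) ≠ 0 := IsProbabilityMeasure.ne_zero _
  haveI := ae_neBot.mpr hne
  obtain ⟨y, hy⟩ := h2.exists
  rw [hint2, add_zero, mul_eq_zero] at hy
  rcases hy with hy | hy
  · exact hy
  · exact absurd hy (pow_ne_zero 2 (eC_ne y))

set_option maxHeartbeats 1000000 in
open Classical in
/-- If at least one of the skew products `R` or `S` is ergodic, then the cocycle `A` is not
cohomologous to a scalar multiple of the identity. -/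
theorem stmt2
    {X : Type*} [MeasurableSpace X] (μ : Measure X) [IsProbabilityMeasure μ]
    (T T' : X → X) (hT : Ergodic T μ)
    (hT'meas : MeasurePreserving T' μ μ)
    (hTinv : Function.LeftInverse T' T) (hTinv' : Function.RightInverse T' T)
    (Xr : Set X) (hXr : MeasurableSet Xr)
    (α β : X → ℝ) (hα : Measurable α) (hβ : Measurable β)
    (A : X → Matrix (Fin 2) (Fin 2) ℝ) (hAmeas : ∀ i j, Measurable fun x => A x i j)
    (hAr : ∀ x ∈ Xr, A x = rotM (α x))
    (hAf : ∀ x ∉ Xr, A x = reflM (β x))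
    (S : X × UnitAddCircle → X × UnitAddCircle)
    (hS : ∀ x y, S (x, y) =
      (T x, if x ∈ Xr then y + ↑(α x / Real.pi) else ↑(2 * β x / Real.pi) - y))
    (R : X × ZMod 2 → X × ZMod 2)
    (hR : ∀ x a, R (x, a) = (T x, if x ∈ Xr then a else a + 1))
    (herg : Ergodic S (μ.prod (volume : Measure UnitAddCircle)) ∨
      Ergodic R (μ.prod ((2 : ENNReal)⁻¹ • (Measure.count : Measure (ZMod 2))))) :
    ¬ ∃ (C : X → Matrix (Fin 2) (Fin 2) ℂ) (lam : X → ℂ),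
      (∀ i j, Measurable fun x => C x i j) ∧ Measurable lam ∧
      (∀ x, IsUnit (C x)) ∧
      (∀ᵐ x ∂μ, (C (T x))⁻¹ * ((A x).map Complex.ofReal) * C x = lam x • 1) := by
  classical
  rintro ⟨C, lam, hCm, hlam, hCu, hcoh⟩
  obtain ⟨p, hp⟩ : ∃ p : X → ℂ, ∀ x, p x = C x 0 0 - Complex.I * C x 1 0 := ⟨_, fun _ => rfl⟩
  obtain ⟨q, hq⟩ : ∃ q : X → ℂ, ∀ x, q x = C x 0 0 + Complex.I * C x 1 0 := ⟨_, fun _ => rfl⟩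
  obtain ⟨u, hu⟩ : ∃ u : X → ℂ, ∀ x, u x = C x 0 1 - Complex.I * C x 1 1 := ⟨_, fun _ => rfl⟩
  obtain ⟨v, hv⟩ : ∃ v : X → ℂ, ∀ x, v x = C x 0 1 + Complex.I * C x 1 1 := ⟨_, fun _ => rfl⟩
  obtain ⟨d, hdef⟩ : ∃ d : X → ℂ, ∀ x, d x = p x * v x - q x * u x := ⟨_, fun _ => rfl⟩
  have hpm : Measurable p := by
    have : p = fun x => C x 0 0 - Complex.I * C x 1 0 := funext hp
    rw [this]; exact (hCm 0 0).sub (measurable_const.mul (hCm 1 0))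
  have hqm : Measurable q := by
    have : q = fun x => C x 0 0 + Complex.I * C x 1 0 := funext hq
    rw [this]; exact (hCm 0 0).add (measurable_const.mul (hCm 1 0))
  have hum : Measurable u := by
    have : u = fun x => C x 0 1 - Complex.I * C x 1 1 := funext hu
    rw [this]; exact (hCm 0 1).sub (measurable_const.mul (hCm 1 1))
  have hvm : Measurable v := by
    have : v = fun x => C x 0 1 + Complex.I * C x 1 1 := funext hv
    rw [this]; exact (hCm 0 1).add (measurable_const.mul (hCm 1 1))
  have hdm : Measurable d := by
    have : d = fun x => p x * v x - q x * u x := funext hdef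
    rw [this]; exact (hpm.mul hvm).sub (hqm.mul hum)
  have hd : ∀ x, d x ≠ 0 := by
    intro x
    have hdet : (C x).det ≠ 0 :=
      isUnit_iff_ne_zero.mp ((Matrix.isUnit_iff_isUnit_det _).mp (hCu x))
    have h2 : d x = 2 * Complex.I * (C x).det := by
      rw [hdef, hp, hq, hu, hv, Matrix.det_fin_two]; ring
    rw [h2]
    simp only [mul_ne_zero_iff]
    exact ⟨⟨two_ne_zero, Complex.I_ne_zero⟩, hdet⟩
  have hkey : ∀ᵐ x ∂μ,
      (x ∈ Xr → (Complex.exp ((α x : ℂ) * Complex.I) * (lam x * p (T x)) = p x ∧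
        lam x * q (T x) = Complex.exp ((α x : ℂ) * Complex.I) * q x ∧
        Complex.exp ((α x : ℂ) * Complex.I) * (lam x * u (T x)) = u x ∧
        lam x * v (T x) = Complex.exp ((α x : ℂ) * Complex.I) * v x)) ∧
      (x ∉ Xr → (Complex.exp (((2 * β x : ℝ) : ℂ) * Complex.I) * (lam x * p (T x)) = q x ∧
        lam x * q (T x) = Complex.exp (((2 * β x : ℝ) : ℂ) * Complex.I) * p x ∧
        Complex.exp (((2 * β x : ℝ) : ℂ) * Complex.I) * (lam x * u (T x)) = v x ∧
        lam x * v (T x) = Complex.exp (((2 * β x : ℝ) : ℂ) * Complex.I) * u x)) := by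
    filter_upwards [hcoh] with x hx
    have hdet : IsUnit (C (T x)).det := (Matrix.isUnit_iff_isUnit_det _).mp (hCu (T x))
    have hMC : (A x).map Complex.ofReal * C x = lam x • C (T x) := by
      calc (A x).map Complex.ofReal * C x
          = C (T x) * ((C (T x))⁻¹ * ((A x).map Complex.ofReal * C x)) :=
            (Matrix.mul_nonsing_inv_cancel_left _ _ hdet).symm
        _ = C (T x) * ((C (T x))⁻¹ * (A x).map Complex.ofReal * C x) := by
            rw [Matrix.mul_assoc]
        _ = C (T x) * (lam x • 1) := by rw [hx]
        _ = lam x • C (T x) := by rw [Matrix.mul_smul, Matrix.mul_one]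
    have hE : ∀ i j, ((A x).map Complex.ofReal * C x) i j = lam x * C (T x) i j := by
      intro i j; rw [hMC]; simp [Matrix.smul_apply, smul_eq_mul]
    constructor
    · intro hmem
      have e00 := hE 0 0
      have e10 := hE 1 0
      have e01 := hE 0 1
      have e11 := hE 1 1
      rw [hAr x hmem] at e00 e10 e01 e11
      simp only [rotM, Matrix.map_apply, Matrix.mul_apply, Fin.sum_univ_two, Matrix.of_apply,
        Matrix.cons_val', Matrix.cons_val_zero, Matrix.cons_val_one, Matrix.head_cons,
        Matrix.empty_val', Matrix.cons_val_fin_one, Matrix.head_fin_const,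
        Complex.ofReal_neg] at e00 e10 e01 e11
      have hexp : Complex.exp ((α x : ℂ) * Complex.I)
          = (Real.cos (α x) : ℂ) + (Real.sin (α x) : ℂ) * Complex.I := by
        rw [Complex.exp_mul_I, ← Complex.ofReal_cos, ← Complex.ofReal_sin]
      have hpyth : ((Real.cos (α x) : ℂ)) ^ 2 + ((Real.sin (α x) : ℂ)) ^ 2 = 1 := by
        have h3 := Real.cos_sq_add_sin_sq (α x)
        rw [← Complex.ofReal_pow, ← Complex.ofReal_pow, ← Complex.ofReal_add, h3,
          Complex.ofReal_one]
      refine ⟨?_, ?_, ?_, ?_⟩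
      · rw [hexp, hp, hp]
        linear_combination (-((Real.cos (α x) : ℂ) + (Real.sin (α x) : ℂ) * Complex.I)) * e00
          + (((Real.cos (α x) : ℂ) + (Real.sin (α x) : ℂ) * Complex.I) * Complex.I) * e10
          + (C x 0 0 - Complex.I * C x 1 0) * hpyth
          + (-((Real.sin (α x) : ℂ) ^ 2 * C x 0 0
              + (Real.cos (α x) : ℂ) * (Real.sin (α x) : ℂ) * C x 1 0)) * Complex.I_sq
      · rw [hexp, hq, hq]
        linear_combination (-1 : ℂ) * e00 + (-Complex.I) * e10
          + (-((Real.sin (α x) : ℂ) * C x 1 0)) * Complex.I_sq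
      · rw [hexp, hu, hu]
        linear_combination (-((Real.cos (α x) : ℂ) + (Real.sin (α x) : ℂ) * Complex.I)) * e01
          + (((Real.cos (α x) : ℂ) + (Real.sin (α x) : ℂ) * Complex.I) * Complex.I) * e11
          + (C x 0 1 - Complex.I * C x 1 1) * hpyth
          + (-((Real.sin (α x) : ℂ) ^ 2 * C x 0 1
              + (Real.cos (α x) : ℂ) * (Real.sin (α x) : ℂ) * C x 1 1)) * Complex.I_sq
      · rw [hexp, hv, hv]
        linear_combination (-1 : ℂ) * e01 + (-Complex.I) * e11
          + (-((Real.sin (α x) : ℂ) * C x 1 1)) * Complex.I_sq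
    · intro hmem
      have e00 := hE 0 0
      have e10 := hE 1 0
      have e01 := hE 0 1
      have e11 := hE 1 1
      rw [hAf x hmem] at e00 e10 e01 e11
      simp only [reflM, Matrix.map_apply, Matrix.mul_apply, Fin.sum_univ_two, Matrix.of_apply,
        Matrix.cons_val', Matrix.cons_val_zero, Matrix.cons_val_one, Matrix.head_cons,
        Matrix.empty_val', Matrix.cons_val_fin_one, Matrix.head_fin_const,
        Complex.ofReal_neg] at e00 e10 e01 e11
      have hexp : Complex.exp (((2 * β x : ℝ) : ℂ) * Complex.I)
          = (Real.cos (2 * β x) : ℂ) + (Real.sin (2 * β x) : ℂ) * Complex.I := by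
        rw [Complex.exp_mul_I, ← Complex.ofReal_cos, ← Complex.ofReal_sin]
      have hpyth : ((Real.cos (2 * β x) : ℂ)) ^ 2 + ((Real.sin (2 * β x) : ℂ)) ^ 2 = 1 := by
        have h3 := Real.cos_sq_add_sin_sq (2 * β x)
        rw [← Complex.ofReal_pow, ← Complex.ofReal_pow, ← Complex.ofReal_add, h3,
          Complex.ofReal_one]
      refine ⟨?_, ?_, ?_, ?_⟩
      · rw [hexp, hp, hq]
        linear_combination (-((Real.cos (2 * β x) : ℂ) + (Real.sin (2 * β x) : ℂ) * Complex.I)) * e00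
          + (((Real.cos (2 * β x) : ℂ) + (Real.sin (2 * β x) : ℂ) * Complex.I) * Complex.I) * e10
          + (C x 0 0 + Complex.I * C x 1 0) * hpyth
          + ((Real.cos (2 * β x) : ℂ) * (Real.sin (2 * β x) : ℂ) * C x 1 0
              - (Real.sin (2 * β x) : ℂ) ^ 2 * C x 0 0) * Complex.I_sq
      · rw [hexp, hq, hp]
        linear_combination (-1 : ℂ) * e00 + (-Complex.I) * e10
          + ((Real.sin (2 * β x) : ℂ) * C x 1 0) * Complex.I_sq
      · rw [hexp, hu, hv]
        linear_combination (-((Real.cos (2 * β x) : ℂ) + (Real.sin (2 * β x) : ℂ) * Complex.I)) * e01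
          + (((Real.cos (2 * β x) : ℂ) + (Real.sin (2 * β x) : ℂ) * Complex.I) * Complex.I) * e11
          + (C x 0 1 + Complex.I * C x 1 1) * hpyth
          + ((Real.cos (2 * β x) : ℂ) * (Real.sin (2 * β x) : ℂ) * C x 1 1
              - (Real.sin (2 * β x) : ℂ) ^ 2 * C x 0 1) * Complex.I_sq
      · rw [hexp, hv, hu]
        linear_combination (-1 : ℂ) * e01 + (-Complex.I) * e11
          + ((Real.sin (2 * β x) : ℂ) * C x 1 1) * Complex.I_sq
  have hdT : ∀ᵐ x ∂μ, lam x ^ 2 * d (T x) = (if x ∈ Xr then d x else -d x) := by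
    filter_upwards [hkey] with x hx
    by_cases hm : x ∈ Xr
    · obtain ⟨h1, h2, h3, h4⟩ := hx.1 hm
      simp only [hm, if_true]
      apply mul_left_cancel₀ (Complex.exp_ne_zero ((α x : ℂ) * Complex.I))
      rw [hdef, hdef]
      linear_combination (lam x * v (T x)) * h1 + p x * h4 - (lam x * q (T x)) * h3 - u x * h2
    · obtain ⟨h1, h2, h3, h4⟩ := hx.2 hm
      simp only [hm, if_false]
      apply mul_left_cancel₀ (Complex.exp_ne_zero (((2 * β x : ℝ) : ℂ) * Complex.I))
      rw [hdef, hdef]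
      linear_combination (lam x * v (T x)) * h1 + q x * h4 - (lam x * q (T x)) * h3 - v x * h2
  have hlam0 : ∀ᵐ x ∂μ, lam x ≠ 0 := by
    filter_upwards [hdT] with x hx
    intro h0
    rw [h0] at hx
    by_cases hm : x ∈ Xr
    · rw [if_pos hm] at hx
      exact hd x (by linear_combination -hx)
    · rw [if_neg hm] at hx
      exact hd x (by linear_combination hx)
  haveI : Filter.NeBot (ae μ) := ae_neBot.mpr (IsProbabilityMeasure.ne_zero μ)
  rcases herg with hSe | hRe
  · -- S ergodic case
    haveI : IsProbabilityMeasure (volume : Measure UnitAddCircle) :=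
      ⟨UnitAddCircle.measure_univ⟩
    have hcoeA : ∀ x : X, eC ((α x / Real.pi : ℝ) : UnitAddCircle)
        = Complex.exp ((α x : ℂ) * Complex.I) ^ 2 := by
      intro x
      have hr : 2 * Real.pi * (α x / Real.pi) = 2 * α x := by
        field_simp
      rw [eC_coe, hr, sq, ← Complex.exp_add]
      congr 1
      push_cast
      ring
    have hcoeB : ∀ x : X, eC ((2 * β x / Real.pi : ℝ) : UnitAddCircle)
        = Complex.exp (((2 * β x : ℝ) : ℂ) * Complex.I) ^ 2 := by
      intro x
      have hr : 2 * Real.pi * (2 * β x / Real.pi) = 2 * (2 * β x) := by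
        field_simp
      rw [eC_coe, hr, sq, ← Complex.exp_add]
      congr 1
      push_cast
      ring
    obtain ⟨G, hG⟩ : ∃ G : X × UnitAddCircle → ℂ, ∀ a b, G (a, b)
        = (p a * u a / d a) * eC b - (q a * v a / d a) * (eC b)⁻¹ :=
      ⟨fun z => (p z.1 * u z.1 / d z.1) * eC z.2 - (q z.1 * v z.1 / d z.1) * (eC z.2)⁻¹,
        fun _ _ => rfl⟩
    have hGm : Measurable G := by
      have : G = fun z : X × UnitAddCircle =>
          (p z.1 * u z.1 / d z.1) * eC z.2 - (q z.1 * v z.1 / d z.1) * (eC z.2)⁻¹ := by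
        funext z
        obtain ⟨a, b⟩ := z
        exact hG a b
      rw [this]
      have hec : Measurable fun z : X × UnitAddCircle => eC z.2 :=
        continuous_eC.measurable.comp measurable_snd
      exact ((((hpm.mul hum).div hdm).comp measurable_fst).mul hec).sub
        ((((hqm.mul hvm).div hdm).comp measurable_fst).mul hec.inv)
    have hGinv : G ∘ S =ᵐ[μ.prod (volume : Measure UnitAddCircle)] G := by
      filter_upwards [ae_fst volume (hkey.and (hdT.and hlam0))] with z hz
      obtain ⟨x, y⟩ := z
      obtain ⟨hk, hdx, hl⟩ := hz
      simp only [Function.comp_apply, hS]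
      have hl2 : lam x ^ 2 ≠ 0 := pow_ne_zero _ hl
      have hdT0 : d (T x) ≠ 0 := hd _
      have hd0 : d x ≠ 0 := hd x
      have hEy : eC y ≠ 0 := eC_ne y
      by_cases hm : x ∈ Xr
      · rw [if_pos hm] at hdx
        obtain ⟨h1, h2, h3, h4⟩ := hk.1 hm
        set E := Complex.exp ((α x : ℂ) * Complex.I) with hE
        have hE0 : E ≠ 0 := Complex.exp_ne_zero _
        rw [if_pos hm, hG, hG, eC_add, hcoeA x, ← hE]
        have hPU : lam x ^ 2 * (p (T x) * u (T x)) * E ^ 2 = p x * u x := by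
          linear_combination (E * lam x * u (T x)) * h1 + p x * h3
        have hQV : lam x ^ 2 * (q (T x) * v (T x)) = E ^ 2 * (q x * v x) := by
          linear_combination (lam x * v (T x)) * h2 + (E * q x) * h4
        field_simp [hEy, hE0, hdT0, hd0]
        linear_combination (d (T x) * eC y ^ 2 * E ^ 2) * hPU
          - (d (T x)) * hQV
          - (p (T x) * u (T x) * eC y ^ 2 * E ^ 4 - q (T x) * v (T x)) * hdx
      · rw [if_neg hm] at hdx
        obtain ⟨h1, h2, h3, h4⟩ := hk.2 hm
        set F := Complex.exp (((2 * β x : ℝ) : ℂ) * Complex.I) with hF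
        have hF0 : F ≠ 0 := Complex.exp_ne_zero _
        rw [if_neg hm, hG, hG, sub_eq_add_neg (_ : UnitAddCircle), eC_add, eC_neg,
          hcoeB x, ← hF]
        have hPU : lam x ^ 2 * (p (T x) * u (T x)) * F ^ 2 = q x * v x := by
          linear_combination (F * lam x * u (T x)) * h1 + q x * h3
        have hQV : lam x ^ 2 * (q (T x) * v (T x)) = F ^ 2 * (p x * u x) := by
          linear_combination (lam x * v (T x)) * h2 + (F * p x) * h4
        field_simp [hEy, hF0, hdT0, hd0]
        linear_combination (p (T x) * u (T x) * F ^ 4 - eC y ^ 2 * (q (T x) * v (T x))) * hdx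
          - (d (T x) * F ^ 2) * hPU
          + (d (T x) * eC y ^ 2) * hQV
    obtain ⟨c, hc⟩ := hSe.ae_eq_const_of_ae_eq_comp_ae hGm.aestronglyMeasurable hGinv
    have hsec := Measure.ae_ae_of_ae_prod hc
    have hzero : ∀ᵐ x ∂μ, p x * u x = 0 ∧ q x * v x = 0 := by
      filter_upwards [hsec] with x hx
      have hae : ∀ᵐ y : UnitAddCircle,
          (p x * u x / d x) * eC y + (-(q x * v x / d x)) * (eC y)⁻¹ = c := by
        filter_upwards [hx] with y hy
        rw [hG] at hy
        simp only [Function.const_apply] at hy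
        linear_combination hy
      obtain ⟨h1, h2⟩ := key_circle hae
      constructor
      · rcases div_eq_zero_iff.mp h1 with h | h
        · exact h
        · exact absurd h (hd x)
      · rw [neg_eq_zero] at h2
        rcases div_eq_zero_iff.mp h2 with h | h
        · exact h
        · exact absurd h (hd x)
    have hda : ∀ᵐ x ∂μ, (q x = 0 ∧ u x = 0 ∧ p x ≠ 0 ∧ v x ≠ 0) ∨
        (q x ≠ 0 ∧ p x = 0 ∧ v x = 0 ∧ u x ≠ 0) := by
      filter_upwards [hzero] with x hx
      obtain ⟨h1, h2⟩ := hx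
      have hdx : p x * v x - q x * u x ≠ 0 := by rw [← hdef]; exact hd x
      by_cases hq0 : q x = 0
      · left
        have hpv : p x * v x ≠ 0 := by
          intro h0
          exact hdx (by linear_combination h0 - u x * hq0)
        have hp0 := (mul_ne_zero_iff.mp hpv).1
        have hv0 := (mul_ne_zero_iff.mp hpv).2
        have hu0 : u x = 0 := by
          rcases mul_eq_zero.mp h1 with h | h
          · exact absurd h hp0
          · exact h
        exact ⟨hq0, hu0, hp0, hv0⟩
      · right
        have hv0 : v x = 0 := by
          rcases mul_eq_zero.mp h2 with h | h
          · exact absurd h hq0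
          · exact h
        have hqu : q x * u x ≠ 0 := by
          intro h0
          exact hdx (by linear_combination p x * hv0 - h0)
        have hu0 := (mul_ne_zero_iff.mp hqu).2
        have hp0 : p x = 0 := by
          rcases mul_eq_zero.mp h1 with h | h
          · exact h
          · exact absurd h hu0
        exact ⟨hq0, hp0, hv0, hu0⟩
    obtain ⟨G1, hG1⟩ : ∃ G1 : X × UnitAddCircle → ℂ, ∀ a b, G1 (a, b)
        = if q a = 0 then (p a ^ 2 / d a) * eC b else -((q a ^ 2 / d a) * (eC b)⁻¹) :=
      ⟨fun z => if q z.1 = 0 then (p z.1 ^ 2 / d z.1) * eC z.2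
        else -((q z.1 ^ 2 / d z.1) * (eC z.2)⁻¹), fun _ _ => rfl⟩
    have hG1m : Measurable G1 := by
      have : G1 = fun z : X × UnitAddCircle => if q z.1 = 0 then (p z.1 ^ 2 / d z.1) * eC z.2
          else -((q z.1 ^ 2 / d z.1) * (eC z.2)⁻¹) := by
        funext z
        obtain ⟨a, b⟩ := z
        exact hG1 a b
      rw [this]
      have hec : Measurable fun z : X × UnitAddCircle => eC z.2 :=
        continuous_eC.measurable.comp measurable_snd
      refine Measurable.ite ?_ ?_ ?_
      · exact (hqm.comp measurable_fst) (measurableSet_singleton 0)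
      · exact ((((hpm.pow_const 2).div hdm).comp measurable_fst).mul hec)
      · exact ((((hqm.pow_const 2).div hdm).comp measurable_fst).mul hec.inv).neg
    have hG1inv : G1 ∘ S =ᵐ[μ.prod (volume : Measure UnitAddCircle)] G1 := by
      filter_upwards [ae_fst volume (hkey.and (hdT.and (hlam0.and hda)))] with z hz
      obtain ⟨x, y⟩ := z
      obtain ⟨hk, hdx, hl, hda'⟩ := hz
      simp only [Function.comp_apply, hS]
      have hl2 : lam x ^ 2 ≠ 0 := pow_ne_zero _ hl
      have hdT0 : d (T x) ≠ 0 := hd _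
      have hd0 : d x ≠ 0 := hd x
      have hEy : eC y ≠ 0 := eC_ne y
      by_cases hm : x ∈ Xr
      · rw [if_pos hm] at hdx
        obtain ⟨h1, h2, h3, h4⟩ := hk.1 hm
        set E := Complex.exp ((α x : ℂ) * Complex.I) with hE
        have hE0 : E ≠ 0 := Complex.exp_ne_zero _
        rcases hda' with ⟨hq0, hu0, hp0, hv0⟩ | ⟨hq0, hp0, hv0, hu0⟩
        · have hqT : q (T x) = 0 := by
            have := h2
            rw [hq0, mul_zero] at this
            exact (mul_eq_zero.mp this).resolve_left hl
          rw [if_pos hm, hG1, hG1, if_pos hqT, if_pos hq0, eC_add, hcoeA x, ← hE]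
          have hPP : lam x ^ 2 * p (T x) ^ 2 * E ^ 2 = p x ^ 2 := by
            linear_combination (E * lam x * p (T x) + p x) * h1
          field_simp [hE0, hdT0, hd0]
          linear_combination (d (T x)) * hPP - (p (T x) ^ 2 * E ^ 2) * hdx
        · have hqT : q (T x) ≠ 0 := by
            intro h0
            rw [h0, mul_zero] at h2
            exact hq0 ((mul_eq_zero.mp h2.symm).resolve_left hE0)
          rw [if_pos hm, hG1, hG1, if_neg hqT, if_neg hq0, eC_add, hcoeA x, ← hE]
          have hQQ : lam x ^ 2 * q (T x) ^ 2 = E ^ 2 * q x ^ 2 := by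
            linear_combination (lam x * q (T x) + E * q x) * h2
          field_simp [hE0, hdT0, hd0, hEy]
          linear_combination -(d (T x)) * hQQ + (q (T x) ^ 2) * hdx
      · rw [if_neg hm] at hdx
        obtain ⟨h1, h2, h3, h4⟩ := hk.2 hm
        set F := Complex.exp (((2 * β x : ℝ) : ℂ) * Complex.I) with hF
        have hF0 : F ≠ 0 := Complex.exp_ne_zero _
        rcases hda' with ⟨hq0, hu0, hp0, hv0⟩ | ⟨hq0, hp0, hv0, hu0⟩
        · have hqT : q (T x) ≠ 0 := by
            intro h0
            rw [h0, mul_zero] at h2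
            exact hp0 ((mul_eq_zero.mp h2.symm).resolve_left hF0)
          rw [if_neg hm, hG1, hG1, if_neg hqT, if_pos hq0,
            sub_eq_add_neg (_ : UnitAddCircle), eC_add, eC_neg, hcoeB x, ← hF]
          have hQQ : lam x ^ 2 * q (T x) ^ 2 = F ^ 2 * p x ^ 2 := by
            linear_combination (lam x * q (T x) + F * p x) * h2
          field_simp [hF0, hdT0, hd0, hEy]
          linear_combination (d (T x)) * hQQ - (q (T x) ^ 2) * hdx
        · have hqT : q (T x) = 0 := by
            have := h2
            rw [hp0, mul_zero] at this
            exact (mul_eq_zero.mp this).resolve_left hl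
          rw [if_neg hm, hG1, hG1, if_pos hqT, if_neg hq0,
            sub_eq_add_neg (_ : UnitAddCircle), eC_add, eC_neg, hcoeB x, ← hF]
          have hPP : lam x ^ 2 * p (T x) ^ 2 * F ^ 2 = q x ^ 2 := by
            linear_combination (F * lam x * p (T x) + q x) * h1
          field_simp [hF0, hdT0, hd0, hEy]
          linear_combination (p (T x) ^ 2 * F ^ 2) * hdx - (d (T x)) * hPP
    obtain ⟨c1, hc1⟩ := hSe.ae_eq_const_of_ae_eq_comp_ae hG1m.aestronglyMeasurable hG1inv
    have hsec1 := Measure.ae_ae_of_ae_prod hc1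
    have hFalse : ∀ᵐ x ∂μ, False := by
      filter_upwards [hsec1, hda] with x hx hdax
      rcases hdax with ⟨hq0, hu0, hp0, hv0⟩ | ⟨hq0, hp0, hv0, hu0⟩
      · have hae : ∀ᵐ y : UnitAddCircle,
            (p x ^ 2 / d x) * eC y + (0 : ℂ) * (eC y)⁻¹ = c1 := by
          filter_upwards [hx] with y hy
          rw [hG1, if_pos hq0] at hy
          simp only [Function.const_apply] at hy
          linear_combination hy
        obtain ⟨h1, _⟩ := key_circle hae
        rcases div_eq_zero_iff.mp h1 with h | h
        · exact hp0 (pow_eq_zero_iff two_ne_zero |>.mp h)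
        · exact hd x h
      · have hae : ∀ᵐ y : UnitAddCircle,
            (0 : ℂ) * eC y + (-(q x ^ 2 / d x)) * (eC y)⁻¹ = c1 := by
          filter_upwards [hx] with y hy
          rw [hG1, if_neg hq0] at hy
          simp only [Function.const_apply] at hy
          linear_combination hy
        obtain ⟨_, h2⟩ := key_circle hae
        rw [neg_eq_zero] at h2
        rcases div_eq_zero_iff.mp h2 with h | h
        · exact hq0 (pow_eq_zero_iff two_ne_zero |>.mp h)
        · exact hd x h
    obtain ⟨x, hx⟩ := hFalse.exists
    exact hx


  · -- R ergodic case
    have hergR : Ergodic R (μ.prod nu2) := hRe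
    obtain ⟨Y, hY⟩ : ∃ Y : X → ℂ, ∀ x, Y x = (p x * v x + q x * u x) / d x := ⟨_, fun _ => rfl⟩
    have hYm : Measurable Y := by
      have : Y = fun x => (p x * v x + q x * u x) / d x := funext hY
      rw [this]; exact ((hpm.mul hvm).add (hqm.mul hum)).div hdm
    have hYflip : ∀ᵐ x ∂μ, Y (T x) = if x ∈ Xr then Y x else -Y x := by
      filter_upwards [hkey, hdT, hlam0] with x hk hdx hl
      by_cases hm : x ∈ Xr
      · obtain ⟨h1, h2, h3, h4⟩ := hk.1 hm
        rw [if_pos hm] at hdx ⊢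
        have hnum : lam x ^ 2 * (p (T x) * v (T x) + q (T x) * u (T x))
            = p x * v x + q x * u x := by
          apply mul_left_cancel₀ (Complex.exp_ne_zero ((α x : ℂ) * Complex.I))
          linear_combination (lam x * v (T x)) * h1 + p x * h4 + (lam x * q (T x)) * h3 + u x * h2
        rw [hY, hY, div_eq_div_iff (hd _) (hd _)]
        linear_combination d (T x) * hnum - (p (T x) * v (T x) + q (T x) * u (T x)) * hdx
      · obtain ⟨h1, h2, h3, h4⟩ := hk.2 hm
        rw [if_neg hm] at hdx ⊢
        have hnum : lam x ^ 2 * (p (T x) * v (T x) + q (T x) * u (T x))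
            = p x * v x + q x * u x := by
          apply mul_left_cancel₀ (Complex.exp_ne_zero (((2 * β x : ℝ) : ℂ) * Complex.I))
          linear_combination (lam x * v (T x)) * h1 + q x * h4 + (lam x * q (T x)) * h3 + v x * h2
        rw [hY, hY, ← neg_div, div_eq_div_iff (hd _) (hd _)]
        linear_combination (p (T x) * v (T x) + q (T x) * u (T x)) * hdx - d (T x) * hnum
    have hY0 := flipR hR hergR hYm hYflip
    have hnum0 : ∀ᵐ x ∂μ, p x * v x + q x * u x = 0 := by
      filter_upwards [hY0] with x hx
      rw [hY] at hx
      rcases div_eq_zero_iff.mp hx with h | h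
      · exact h
      · exact absurd h (hd x)
    have hnz : ∀ᵐ x ∂μ, p x ≠ 0 ∧ q x ≠ 0 ∧ u x ≠ 0 ∧ v x ≠ 0 := by
      filter_upwards [hnum0] with x hx
      have hdx : p x * v x - q x * u x ≠ 0 := by rw [← hdef]; exact hd x
      refine ⟨?_, ?_, ?_, ?_⟩
      · intro h0
        have h2 : q x * u x = 0 := by linear_combination hx - v x * h0
        exact hdx (by linear_combination v x * h0 - h2)
      · intro h0
        have h2 : p x * v x = 0 := by linear_combination hx - u x * h0
        exact hdx (by linear_combination h2 - u x * h0)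
      · intro h0
        have h2 : p x * v x = 0 := by linear_combination hx - q x * h0
        exact hdx (by linear_combination h2 - q x * h0)
      · intro h0
        have h2 : q x * u x = 0 := by linear_combination hx - p x * h0
        exact hdx (by linear_combination p x * h0 - h2)
    obtain ⟨s, hsdef⟩ : ∃ s : X → ℂ, ∀ x, s x = u x * (p x)⁻¹ := ⟨_, fun _ => rfl⟩
    have hsm : Measurable s := by
      have : s = fun x => u x * (p x)⁻¹ := funext hsdef
      rw [this]; exact hum.mul hpm.inv
    have hsflip : ∀ᵐ x ∂μ, s (T x) = if x ∈ Xr then s x else -s x := by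
      filter_upwards [hkey, hlam0, hnz, hnum0] with x hk hl hz hn0
      obtain ⟨hp0, hq0, hu0, hv0⟩ := hz
      by_cases hm : x ∈ Xr
      · obtain ⟨h1, h2, h3, h4⟩ := hk.1 hm
        have hpT : p (T x) ≠ 0 := by
          intro h0
          rw [h0] at h1
          simp only [mul_zero] at h1
          exact hp0 h1.symm
        rw [if_pos hm, hsdef, hsdef, ← div_eq_mul_inv, ← div_eq_mul_inv,
          div_eq_div_iff hpT hp0]
        linear_combination (p (T x)) * h3 - (u (T x)) * h1
      · obtain ⟨h1, h2, h3, h4⟩ := hk.2 hm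
        have hpT : p (T x) ≠ 0 := by
          intro h0
          rw [h0] at h1
          simp only [mul_zero] at h1
          exact hq0 h1.symm
        rw [if_neg hm, hsdef, hsdef, ← div_eq_mul_inv, ← div_eq_mul_inv, ← neg_div,
          div_eq_div_iff hpT hp0]
        apply mul_left_cancel₀
          (mul_ne_zero (Complex.exp_ne_zero (((2 * β x : ℝ) : ℂ) * Complex.I)) hl)
        linear_combination p x * h3 + u x * h1 + hn0
    have hs0 := flipR hR hergR hsm hsflip
    have hFalse : ∀ᵐ x ∂μ, False := by
      filter_upwards [hs0, hnz] with x hx hz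
      rw [hsdef] at hx
      exact (mul_ne_zero hz.2.2.1 (inv_ne_zero hz.1)) hx
    obtain ⟨x, hx⟩ := hFalse.exists
    exact hx
end

section
/- Suppose w : X → ℂ ∪ {∞} is measurable and its graph is invariant under N, i.e., N(x, w(x)) = (T x, w(T x)) for μ-a.e. x. Then there exists a constant C ∈ [0,1] such that for μ-a.e. x, |w(x)| ∈ {C, 1/C} (with the conventions |∞| = ∞, 1/0 = ∞). Moreover, for every C ∈ [0,1], the set X × P_C, where P_C = {z ∈ ℂ ∪ {∞} : |z| = C or |z| = 1/C}, is invariant under N up to a μ-null set of x-fibres. -/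
open MeasureTheory Matrix

noncomputable instance : MeasurableSpace (OnePoint ℂ) := borel _

/-- The modulus on `ℂ ∪ {∞}`, with values in `[0,∞]` and the convention `|∞| = ∞`. -/
noncomputable def opAbs (z : OnePoint ℂ) : ENNReal :=
  Option.elim (α := ℂ) z ⊤ fun w => (‖w‖₊ : ENNReal)

/-- Multiplication of a point of `ℂ ∪ {∞}` by a complex scalar, with `c · ∞ = ∞`. -/
noncomputable def opSmul (c : ℂ) : OnePoint ℂ → OnePoint ℂ :=
  OnePoint.map (fun w => c * w)

open Classical in
/-- Inversion `z ↦ 1/z` on `ℂ ∪ {∞}`, with the conventions `1/0 = ∞` and `1/∞ = 0`. -/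
noncomputable def opInv (z : OnePoint ℂ) : OnePoint ℂ :=
  if z = OnePoint.infty then ((0 : ℂ) : OnePoint ℂ)
  else if z = ((0 : ℂ) : OnePoint ℂ) then OnePoint.infty
  else OnePoint.map (fun w => w⁻¹) z

instance : BorelSpace (OnePoint ℂ) := ⟨rfl⟩

lemma opAbs_infty : opAbs OnePoint.infty = ⊤ := rfl
lemma opAbs_coe (w : ℂ) : opAbs (w : OnePoint ℂ) = (‖w‖₊ : ENNReal) := rfl

lemma opAbs_opSmul (c : ℂ) (hc : ‖c‖₊ = 1) (z : OnePoint ℂ) :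
    opAbs (opSmul c z) = opAbs z := by
  cases z with
  | infty => rfl
  | coe w =>
    show ((‖c * w‖₊ : ENNReal)) = (‖w‖₊ : ENNReal)
    rw [nnnorm_mul, hc, one_mul]

lemma opAbs_opInv (z : OnePoint ℂ) : opAbs (opInv z) = (opAbs z)⁻¹ := by
  cases z with
  | infty =>
    show opAbs (opInv OnePoint.infty) = (opAbs OnePoint.infty)⁻¹
    rw [opInv, if_pos rfl, opAbs_coe, opAbs_infty]
    simp
  | coe w =>
    by_cases hw : w = 0
    · subst hw
      rw [opInv]
      rw [if_neg (OnePoint.coe_ne_infty 0), if_pos rfl, opAbs_infty, opAbs_coe]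
      simp
    · rw [opInv, if_neg (OnePoint.coe_ne_infty w),
        if_neg (by simpa [OnePoint.coe_eq_coe] using hw)]
      show ((‖w⁻¹‖₊ : ENNReal)) = ((‖w‖₊ : ENNReal))⁻¹
      rw [nnnorm_inv, ENNReal.coe_inv (by simpa using hw)]

open Classical in
lemma measurable_opAbs : Measurable opAbs := by
  intro S hS
  have he : MeasurableEmbedding ((↑) : ℂ → OnePoint ℂ) :=
    OnePoint.isOpenEmbedding_coe.measurableEmbedding
  have key : opAbs ⁻¹' S =
      ((↑) : ℂ → OnePoint ℂ) '' ((fun w : ℂ => (‖w‖₊ : ENNReal)) ⁻¹' S) ∪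
      (if ⊤ ∈ S then {OnePoint.infty} else ∅) := by
    ext z
    cases z with
    | infty =>
      simp only [Set.mem_preimage, opAbs_infty, Set.mem_union]
      constructor
      · intro h
        right; rw [if_pos h]; rfl
      · rintro (h | h)
        · exact absurd h OnePoint.infty_notMem_image_coe
        · split_ifs at h with h'
          · exact h'
          · exact absurd h (Set.notMem_empty _)
    | coe w =>
      simp only [Set.mem_preimage, Set.mem_union]
      constructor
      · intro h
        left; exact ⟨w, h, rfl⟩
      · rintro (⟨v, hv, hvw⟩ | h)
        · rw [OnePoint.coe_eq_coe] at hvw; subst hvw; exact hv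
        · split_ifs at h with h'
          · exact absurd h.symm (OnePoint.infty_ne_coe w)
          · exact absurd h (Set.notMem_empty _)
  rw [key]
  refine (he.measurableSet_image.2 ?_).union ?_
  · exact (measurable_coe_nnreal_ennreal.comp measurable_nnnorm) hS
  · split_ifs
    · exact measurableSet_singleton _
    · exact MeasurableSet.empty

lemma nnnorm_exp_im (c : ℂ) (h : c.re = 0) : ‖Complex.exp c‖₊ = 1 := by
  ext
  simp [Complex.norm_exp, h]

open Classical in
/-- If `w : X → ℂ ∪ {∞}` is measurable and its graph is invariant under `N`, then there is a
constant `C ∈ [0,1]` such that for a.e. `x`, `|w(x)| ∈ {C, 1/C}`; moreover, for every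
`C ∈ [0,1]` the set `X × P_C` is invariant under `N` up to a null set of `x`-fibres. -/
theorem stmt3
    {X : Type*} [MeasurableSpace X] (μ : Measure X) [IsProbabilityMeasure μ]
    (T T' : X → X) (hT : Ergodic T μ)
    (hT'meas : MeasurePreserving T' μ μ)
    (hTinv : Function.LeftInverse T' T) (hTinv' : Function.RightInverse T' T)
    (Xr : Set X) (hXr : MeasurableSet Xr)
    (α β : X → ℝ) (hα : Measurable α) (hβ : Measurable β)
    (A : X → Matrix (Fin 2) (Fin 2) ℝ) (hAmeas : ∀ i j, Measurable fun x => A x i j)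
    (hAr : ∀ x ∈ Xr, A x = rotM (α x))
    (hAf : ∀ x ∉ Xr, A x = reflM (β x))
    (N : X × OnePoint ℂ → X × OnePoint ℂ)
    (hN : ∀ x z, N (x, z) =
      (T x, if x ∈ Xr then opSmul (Complex.exp (2 * (α x) * Complex.I)) z
        else opSmul (Complex.exp (4 * (β x) * Complex.I)) (opInv z)))
    (w : X → OnePoint ℂ) (hw : Measurable w)
    (hgraph : ∀ᵐ x ∂μ, N (x, w x) = (T x, w (T x))) :
    (∃ C : ENNReal, C ≤ 1 ∧ ∀ᵐ x ∂μ, opAbs (w x) = C ∨ opAbs (w x) = C⁻¹) ∧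
    (∀ C : ENNReal, C ≤ 1 → ∀ᵐ x ∂μ, ∀ z : OnePoint ℂ,
      (opAbs z = C ∨ opAbs z = C⁻¹) →
      (opAbs (N (x, z)).2 = C ∨ opAbs (N (x, z)).2 = C⁻¹)) := by
  have hn1 : ∀ x : X, ‖Complex.exp (2 * (α x) * Complex.I)‖₊ = 1 := fun x =>
    nnnorm_exp_im _ (by simp)
  have hn2 : ∀ x : X, ‖Complex.exp (4 * (β x) * Complex.I)‖₊ = 1 := fun x =>
    nnnorm_exp_im _ (by simp)
  set g : X → ENNReal := fun x => opAbs (w x) with hgdef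
  have hkey : ∀ᵐ x ∂μ, g (T x) = g x ∨ g (T x) = (g x)⁻¹ := by
    filter_upwards [hgraph] with x hx
    rw [hN x (w x)] at hx
    have hsnd : (if x ∈ Xr then opSmul (Complex.exp (2 * (α x) * Complex.I)) (w x)
        else opSmul (Complex.exp (4 * (β x) * Complex.I)) (opInv (w x))) = w (T x) :=
      congrArg Prod.snd hx
    by_cases hxr : x ∈ Xr
    · left
      rw [if_pos hxr] at hsnd
      show opAbs (w (T x)) = opAbs (w x)
      rw [← hsnd, opAbs_opSmul _ (hn1 x)]
    · right
      rw [if_neg hxr] at hsnd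
      show opAbs (w (T x)) = (opAbs (w x))⁻¹
      rw [← hsnd, opAbs_opSmul _ (hn2 x), opAbs_opInv]
  set h : X → ENNReal := fun x => min (g x) (g x)⁻¹ with hhdef
  have hgm : Measurable g := measurable_opAbs.comp hw
  have hhm : Measurable h := hgm.min hgm.inv
  have hinv : h ∘ T =ᵐ[μ] h := by
    filter_upwards [hkey] with x hx
    rcases hx with h1 | h1
    · show min (g (T x)) (g (T x))⁻¹ = min (g x) (g x)⁻¹
      rw [h1]
    · show min (g (T x)) (g (T x))⁻¹ = min (g x) (g x)⁻¹
      rw [h1, inv_inv, min_comm]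
  obtain ⟨c, hc⟩ := hT.ae_eq_const_of_ae_eq_comp₀ hhm.nullMeasurable hinv
  have hle : ∀ x, h x ≤ 1 := by
    intro x
    rcases le_total (g x) 1 with h' | h'
    · exact (min_le_left _ _).trans h'
    · exact (min_le_right _ _).trans (ENNReal.inv_le_one.2 h')
  have hne : (MeasureTheory.ae μ).NeBot := ae_neBot.2 (IsProbabilityMeasure.ne_zero μ)
  have hcle : c ≤ 1 := by
    obtain ⟨x, hx⟩ := hc.exists
    rw [show c = h x from hx.symm]
    exact hle x
  constructor
  · refine ⟨c, hcle, ?_⟩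
    filter_upwards [hc] with x hx
    rcases min_choice (g x) (g x)⁻¹ with hm | hm
    · left
      calc g x = h x := hm.symm
        _ = c := hx
    · right
      have : (g x)⁻¹ = c := by
        calc (g x)⁻¹ = h x := hm.symm
          _ = c := hx
      rw [← this, inv_inv]
  · intro C _
    refine Filter.Eventually.of_forall fun x z hz => ?_
    rw [hN x z]
    by_cases hxr : x ∈ Xr
    · simpa only [if_pos hxr, opAbs_opSmul _ (hn1 x)] using hz
    · simp only [if_neg hxr, opAbs_opSmul _ (hn2 x), opAbs_opInv]
      rcases hz with hz | hz
      · right; rw [hz]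
      · left; rw [hz, inv_inv]
end

section
/- For the cocycle generated by A(x) = rot_{πx} over the irrational rotation T(x) = x + η on 𝕋, the trivial bundle 𝕋×ℂ² is reducible but 𝕋×ℝ² is irreducible. Precisely: (i) A(x)·(1, i)ᵀ = e^{−iπx}·(1, i)ᵀ for every x, so the constant map v(x) = (1, i) is a measurable equivariant family of one-dimensional complex subspaces; (ii) there is no measurable map v : 𝕋 → ℝ² with v(x) ≠ 0 for a.e. x and A(x)·v(x) ∈ span_ℝ{v(x + η)} for a.e. x. -/
open MeasureTheory Matrix

/-- The canonical representative in `[0,1)` of a point of `𝕋 = ℝ/ℤ`. -/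
noncomputable def rep (x : UnitAddCircle) : ℝ := ((AddCircle.equivIco 1 0) x : ℝ)

open AddCircle

lemma my_fourier_hom (n : ℤ) (x y : UnitAddCircle) :
    fourier n (x + y) = fourier n x * fourier n y := by
  simp [fourier_apply, smul_add, AddCircle.toCircle_add]

lemma my_norm_fourier (n : ℤ) (x : UnitAddCircle) : ‖(fourier n x : ℂ)‖ = 1 := by
  simp [fourier_apply, Circle.norm_coe]

lemma my_coeff_shift (f : UnitAddCircle → ℂ) (η : ℝ) (n : ℤ) :
    ‖fourierCoeff (fun x => f (x + (η:UnitAddCircle))) n‖ = ‖fourierCoeff f n‖ := by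
  have h1 : fourierCoeff (fun x => f (x + (η:UnitAddCircle))) n
      = fourier (-n) (-((η:ℝ):UnitAddCircle)) • fourierCoeff f n := by
    rw [fourierCoeff, fourierCoeff]
    have h : ∀ x : UnitAddCircle, fourier (-n) x • f (x + ((η:ℝ):UnitAddCircle))
        = (fun y => fourier (-n) (-((η:ℝ):UnitAddCircle)) • (fourier (-n) y • f y))
            (x + ((η:ℝ):UnitAddCircle)) := by
      intro x
      simp only [smul_smul, ← my_fourier_hom]
      congr 2
      abel
    simp_rw [h]
    rw [integral_add_right_eq_self
      (fun y => fourier (-n) (-((η:ℝ):UnitAddCircle)) • (fourier (-n) y • f y))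
      ((η:ℝ):UnitAddCircle), integral_smul]
  rw [h1, norm_smul, my_norm_fourier, one_mul]

lemma my_coeff_mul (f : UnitAddCircle → ℂ) (n : ℤ) :
    fourierCoeff (fun x => fourier 1 x * f x) n = fourierCoeff f (n - 1) := by
  rw [fourierCoeff, fourierCoeff]
  congr 1
  funext x
  rw [smul_eq_mul, smul_eq_mul, ← mul_assoc, ← fourier_add,
    show -n + 1 = -(n-1) by ring]

lemma my_fourier_one_eq (x : UnitAddCircle) :
    (fourier 1 x : ℂ) = Complex.exp (2 * Real.pi * rep x * Complex.I) := by
  have h : x = ((rep x : ℝ) : UnitAddCircle) := ((AddCircle.equivIco 1 0).symm_apply_apply x).symm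
  conv_lhs => rw [h, fourier_coe_apply]
  push_cast
  ring_nf

lemma my_rot_cx (θ : ℝ) (u : Fin 2 → ℝ) :
    ((rotM θ).mulVec u 0 : ℂ) + (rotM θ).mulVec u 1 * Complex.I
      = Complex.exp (θ * Complex.I) * (u 0 + u 1 * Complex.I) := by
  simp only [rotM, Matrix.mulVec, dotProduct, Fin.sum_univ_two, Complex.exp_mul_I,
    Matrix.cons_val', Matrix.cons_val_zero, Matrix.cons_val_one, Matrix.head_cons,
    Matrix.empty_val', Matrix.cons_val_fin_one, Matrix.head_fin_const]
  push_cast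
  simp [Complex.ext_iff]
  constructor <;> ring

lemma my_rotM_part1 (θ : ℝ) :
    ((rotM θ).map Complex.ofReal).mulVec ![1, Complex.I] =
        Complex.exp (-(θ) * Complex.I) • ![1, Complex.I] := by
  funext i
  fin_cases i <;>
  · simp only [rotM, Matrix.map_apply, Matrix.mulVec, dotProduct, Fin.sum_univ_two,
      Pi.smul_apply, smul_eq_mul, Matrix.cons_val_zero, Matrix.cons_val_one, Matrix.head_cons,
      Complex.ofReal_neg, Matrix.cons_val', Matrix.empty_val',
      Matrix.cons_val_fin_one, Matrix.head_fin_const]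
    rw [show (-(θ:ℂ)) * Complex.I = ((-θ : ℝ):ℂ) * Complex.I by push_cast; ring,
      Complex.exp_mul_I]
    push_cast
    simp [Complex.ext_iff]

/-- For the cocycle generated by `A(x) = rot_{πx}` over the irrational rotation `T(x) = x + η`:
(i) `A(x)·(1,i)ᵀ = e^{-iπx}·(1,i)ᵀ` for every `x`, so the constant map `v(x) = (1,i)` is an
equivariant family of one-dimensional complex subspaces (hence `𝕋 × ℂ²` is reducible);
(ii) there is no equivariant family of one-dimensional real subspaces (so `𝕋 × ℝ²` is
irreducible). -/
theorem stmt4 (η : ℝ) (hη : Irrational η)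
    (T : UnitAddCircle → UnitAddCircle) (hT : ∀ x, T x = x + ↑η)
    (A : UnitAddCircle → Matrix (Fin 2) (Fin 2) ℝ)
    (hA : ∀ x, A x = rotM (Real.pi * rep x)) :
    (∀ x, ((A x).map Complex.ofReal).mulVec ![1, Complex.I] =
        Complex.exp (-(Real.pi * rep x) * Complex.I) • ![1, Complex.I]) ∧
    (∀ x, ((A x).map Complex.ofReal).mulVec ![1, Complex.I] ∈
        Submodule.span ℂ {![1, Complex.I]}) ∧
    ¬ ∃ v : UnitAddCircle → (Fin 2 → ℝ), Measurable v ∧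
        (∀ᵐ x ∂(volume : Measure UnitAddCircle), v x ≠ 0) ∧
        (∀ᵐ x ∂(volume : Measure UnitAddCircle),
          (A x).mulVec (v x) ∈ Submodule.span ℝ {v (T x)}) := by
  have part1 : ∀ x, ((A x).map Complex.ofReal).mulVec ![1, Complex.I] =
      Complex.exp (-(Real.pi * rep x) * Complex.I) • ![1, Complex.I] := by
    intro x
    rw [hA x]
    have := my_rotM_part1 (Real.pi * rep x)
    rw [this]
    norm_num
  refine ⟨part1, fun x => ?_, ?_⟩
  · rw [part1 x]
    exact Submodule.smul_mem _ _ (Submodule.mem_span_singleton_self _)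
  rintro ⟨v, hv, hv0, hsp⟩
  have hvol : (volume : Measure UnitAddCircle) = haarAddCircle := by
    rw [AddCircle.volume_eq_smul_haarAddCircle]; simp
  -- the complexified vector and the projective square map
  set w : UnitAddCircle → ℂ := fun x => (v x 0 : ℂ) + (v x 1 : ℂ) * Complex.I with hwdef
  set f : UnitAddCircle → ℂ := fun x => (w x)^2 / ((Complex.normSq (w x) : ℝ) : ℂ) with hfdef
  have hwne : ∀ y, v y ≠ 0 → w y ≠ 0 := by
    intro y hy h
    apply hy
    funext i
    have hre := congrArg Complex.re h
    have him := congrArg Complex.im h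
    simp [hwdef] at hre him
    fin_cases i <;> simpa
  have hwmeas : Measurable w := by
    apply Measurable.add
    · exact Complex.measurable_ofReal.comp ((measurable_pi_apply 0).comp hv)
    · exact ((Complex.measurable_ofReal.comp ((measurable_pi_apply 1).comp hv)).mul
        measurable_const)
  have hfmeas : Measurable f := by
    apply Measurable.div
    · exact (hwmeas.pow measurable_const)
    · exact Complex.measurable_ofReal.comp ((Complex.continuous_normSq : Continuous Complex.normSq).measurable.comp hwmeas)
  have hfb : ∀ x, ‖f x‖ ≤ 1 := by
    intro x
    by_cases h : w x = 0
    · simp [hfdef, h]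
    · have : ‖f x‖ = 1 := by
        rw [hfdef]
        simp only [norm_div, norm_pow, Complex.norm_real,
          Real.norm_of_nonneg (Complex.normSq_nonneg _)]
        rw [Complex.sq_norm, div_self ((Complex.normSq_pos.mpr h).ne')]
      rw [this]
  have hf1 : ∀ᵐ x ∂(haarAddCircle : Measure UnitAddCircle), ‖f x‖ = 1 := by
    rw [← hvol]
    filter_upwards [hv0] with x hx
    have h := hwne x hx
    rw [hfdef]
    simp only [norm_div, norm_pow, Complex.norm_real,
      Real.norm_of_nonneg (Complex.normSq_nonneg _)]
    rw [Complex.sq_norm, div_self ((Complex.normSq_pos.mpr h).ne')]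
  -- the cohomological equation
  have key : ∀ᵐ x ∂(haarAddCircle : Measure UnitAddCircle),
      f (T x) = fourier 1 x * f x := by
    rw [← hvol]
    filter_upwards [hv0, hsp] with x hx hxs
    obtain ⟨c, hc⟩ := Submodule.mem_span_singleton.mp hxs
    -- hc : c • v (T x) = (A x).mulVec (v x)
    have hcx : (c : ℂ) * w (T x)
        = Complex.exp (((Real.pi * rep x : ℝ) : ℂ) * Complex.I) * w x := by
      have h0 := congrArg (fun u : Fin 2 → ℝ => ((u 0 : ℂ) + (u 1 : ℂ) * Complex.I)) hc
      simp only [hA x] at h0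
      rw [my_rot_cx] at h0
      rw [← h0, hwdef]
      simp only [Pi.smul_apply, smul_eq_mul]
      push_cast
      ring
    have hwx : w x ≠ 0 := hwne x hx
    have hprod : (c : ℂ) * w (T x) ≠ 0 := by
      rw [hcx]
      exact mul_ne_zero (Complex.exp_ne_zero _) hwx
    have hc0 : (c : ℂ) ≠ 0 := left_ne_zero_of_mul hprod
    have hwT : w (T x) ≠ 0 := right_ne_zero_of_mul hprod
    have e1 : f (T x) = ((c:ℂ) * w (T x))^2 / ((Complex.normSq ((c:ℂ) * w (T x)) : ℝ) : ℂ) := by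
      rw [hfdef]
      simp only [mul_pow, Complex.normSq_mul, Complex.normSq_ofReal]
      push_cast
      rw [mul_div_mul_comm]
      rw [show ((c:ℂ))^2 / ((c:ℂ) * (c:ℂ)) = 1 by rw [sq]; exact div_self (mul_ne_zero hc0 hc0),
        one_mul]
    rw [e1, hcx]
    have habs : Complex.normSq (Complex.exp (((Real.pi * rep x : ℝ) : ℂ) * Complex.I)) = 1 := by
      rw [← Complex.sq_norm, Complex.norm_exp_ofReal_mul_I]
      norm_num
    rw [mul_pow, Complex.normSq_mul, habs, one_mul]
    rw [my_fourier_one_eq, hfdef]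
    simp only
    rw [← Complex.exp_nat_mul]
    · rw [mul_div_assoc]
      congr 1
      push_cast
      ring_nf
  -- Fourier coefficients have constant norm
  have hrec : ∀ n : ℤ, ‖fourierCoeff f (n - 1)‖ = ‖fourierCoeff f n‖ := by
    intro n
    have h1 : fourierCoeff (fun x => f (T x)) n = fourierCoeff (fun x => fourier 1 x * f x) n := by
      rw [fourierCoeff, fourierCoeff]
      apply integral_congr_ae
      filter_upwards [key] with x hx
      rw [hx]
    have h2 : ‖fourierCoeff (fun x => f (T x)) n‖ = ‖fourierCoeff f n‖ := by
      have : (fun x => f (T x)) = fun x => f (x + ((η:ℝ):UnitAddCircle)) := by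
        funext x; rw [hT]
      rw [this]
      exact my_coeff_shift f η n
    rw [← my_coeff_mul f n, ← h1, h2]
  have hconst : ∀ n : ℤ, ‖fourierCoeff f n‖ = ‖fourierCoeff f 0‖ := by
    intro n
    induction n using Int.induction_on with
    | zero => rfl
    | succ k ih => rw [← ih, ← hrec (k + 1)]; norm_num
    | pred k ih => rw [← ih]; exact hrec (-k)
  -- Parseval
  have hmem : MemLp f 2 (haarAddCircle : Measure UnitAddCircle) :=
    MemLp.of_bound hfmeas.aestronglyMeasurable 1 (Filter.Eventually.of_forall hfb)
  set F := hmem.toLp f with hFdef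
  have hFcoe : (F : UnitAddCircle → ℂ) =ᵐ[haarAddCircle] f := hmem.coeFn_toLp
  have hFc : ∀ n, fourierCoeff (F : UnitAddCircle → ℂ) n = fourierCoeff f n := by
    intro n
    rw [fourierCoeff, fourierCoeff]
    apply integral_congr_ae
    filter_upwards [hFcoe] with x hx
    rw [hx]
  have hpar := tsum_sq_fourierCoeff F
  have hint : ∫ t : UnitAddCircle, ‖(F : UnitAddCircle → ℂ) t‖ ^ 2 ∂haarAddCircle = 1 := by
    have : ∀ᵐ t ∂(haarAddCircle : Measure UnitAddCircle),
        ‖(F : UnitAddCircle → ℂ) t‖ ^ 2 = 1 := by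
      filter_upwards [hFcoe, hf1] with t h1 h2
      rw [h1, h2]; norm_num
    rw [integral_congr_ae this]
    simp
  rw [hint] at hpar
  simp_rw [hFc, hconst] at hpar
  by_cases h0 : ‖fourierCoeff f 0‖ ^ 2 = 0
  · rw [h0] at hpar
    simp at hpar
  · have : ¬ Summable (fun _ : ℤ => ‖fourierCoeff f 0‖ ^ 2) := by
      rw [summable_const_iff]
      exact h0
    rw [tsum_eq_zero_of_not_summable this] at hpar
    norm_num at hpar
end

section
/- Suppose σ : 𝕋 → 𝕋 is measure-preserving and ergodic with respect to Lebesgue measure, f : 𝕋 → ℤ is measurable, and α is irrational. Define T_f : 𝕋² → 𝕋² by T_f(x, y) = (σ(x), y + α·f(x) mod 1), and define T̃_f : 𝕋×ℤ → 𝕋×ℤ by T̃_f(x, n) = (σ(x), n + f(x)). If T̃_f is ergodic with respect to the σ-finite measure λ×c, then T_f is ergodic with respect to Lebesgue measure λ×λ on 𝕋². -/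
open MeasureTheory Set Function Filter Topology Pointwise
open scoped ENNReal

private instance count_int_sigmaFinite : SigmaFinite (Measure.count : Measure ℤ) :=
  ⟨⟨{ set := fun n => Set.Icc (-(n:ℤ)) n
      set_mem := fun _ => trivial
      finite := fun n => by
        rw [Measure.count_apply_finite _ (Set.finite_Icc _ _)]
        exact ENNReal.natCast_lt_top _
      spanning := by
        apply Set.eq_univ_of_forall
        intro m
        simp only [Set.mem_iUnion, Set.mem_Icc]
        exact ⟨m.natAbs, by omega, by omega⟩ }⟩⟩

private instance unit_circle_prob : IsProbabilityMeasure (volume : Measure UnitAddCircle) := by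
  constructor; rw [AddCircle.measure_univ]; simp

private lemma dense_zmult {α : ℝ} (hα : Irrational α) :
    Dense ((AddSubgroup.zmultiples ((α : UnitAddCircle))) : Set UnitAddCircle) := by
  have hS : Dense ((AddSubgroup.closure {α, 1} : AddSubgroup ℝ) : Set ℝ) := by
    rcases (AddSubgroup.closure {α, 1}).dense_or_cyclic with h | ⟨a, ha⟩
    · exact h
    · exfalso
      have hαS : α ∈ AddSubgroup.closure ({α, 1} : Set ℝ) :=
        AddSubgroup.subset_closure (by simp)
      have h1S : (1 : ℝ) ∈ AddSubgroup.closure ({α, 1} : Set ℝ) :=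
        AddSubgroup.subset_closure (by simp)
      rw [ha, AddSubgroup.mem_closure_singleton] at hαS h1S
      obtain ⟨m, hm⟩ := hαS
      obtain ⟨n, hn⟩ := h1S
      have hn0 : (n : ℝ) ≠ 0 := by
        rintro h
        rw [zsmul_eq_mul, h, zero_mul] at hn
        exact one_ne_zero hn.symm
      apply hα
      refine ⟨(m : ℚ) / (n : ℚ), ?_⟩
      rw [zsmul_eq_mul] at hm hn
      have ha' : a = (n : ℝ)⁻¹ := by field_simp at hn ⊢; linarith [hn]
      push_cast
      rw [← hm, ha']
      field_simp
  have hcont : Continuous (fun x : ℝ => (x : UnitAddCircle)) := AddCircle.continuous_mk' 1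
  intro z
  obtain ⟨x, rfl⟩ : ∃ x : ℝ, (x : UnitAddCircle) = z := ⟨z.out, by simp⟩
  have hx : x ∈ closure ((AddSubgroup.closure {α, 1} : AddSubgroup ℝ) : Set ℝ) := hS x
  have himg : (fun x : ℝ => (x : UnitAddCircle)) ''
      ((AddSubgroup.closure {α, 1} : AddSubgroup ℝ) : Set ℝ)
      ⊆ ((AddSubgroup.zmultiples ((α : UnitAddCircle))) : Set UnitAddCircle) := by
    rintro _ ⟨y, hy, rfl⟩
    have : (y : UnitAddCircle) ∈ (AddSubgroup.closure ({α, 1} : Set ℝ)).map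
        (QuotientAddGroup.mk' _ : ℝ →+ UnitAddCircle) := ⟨y, hy, rfl⟩
    rw [AddMonoidHom.map_closure] at this
    refine AddSubgroup.closure_le (AddSubgroup.zmultiples ((α : UnitAddCircle))) |>.mpr ?_ this
    rintro w hw
    simp only [Set.mem_image, Set.mem_insert_iff, Set.mem_singleton_iff] at hw
    obtain ⟨v, hv | hv, rfl⟩ := hw
    · subst hv; exact AddSubgroup.mem_zmultiples _
    · subst hv
      have : ((1 : ℝ) : UnitAddCircle) = 0 := by
        simp [AddCircle.coe_eq_zero_iff]
      show ((1:ℝ) : UnitAddCircle) ∈ _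
      rw [this]; exact zero_mem _
  have hsub := image_closure_subset_closure_image
    (s := ((AddSubgroup.closure {α, 1} : AddSubgroup ℝ) : Set ℝ)) hcont
  have hmem : (x : UnitAddCircle) ∈ closure ((fun x : ℝ => (x : UnitAddCircle)) ''
      ((AddSubgroup.closure {α, 1} : AddSubgroup ℝ) : Set ℝ)) := hsub ⟨x, hx, rfl⟩
  exact closure_mono himg hmem

/-- An exactly rotation-invariant measurable set on the circle, for an irrational rotation,
is null or conull. -/
private lemma rot_dichotomy {α : ℝ} (hα : Irrational α) {E : Set UnitAddCircle}
    (hE : MeasurableSet E) (hinv : (fun y => y + ((α : UnitAddCircle))) ⁻¹' E = E) :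
    E =ᵐ[volume] (∅ : Set UnitAddCircle) ∨ E =ᵐ[volume] Set.univ := by
  set a : UnitAddCircle := (α : UnitAddCircle) with ha
  have hneg : (fun y => y + (-a)) ⁻¹' E = E := by
    conv_lhs => rw [← hinv]
    rw [← Set.preimage_comp]
    convert Set.preimage_id
    ext y
    simp [comp]
  have hz : ∀ n : ℤ, (fun y => y + n • a) ⁻¹' E = E := by
    intro n
    induction n using Int.induction_on with
    | zero => simp
    | succ k ih =>
      have : (fun y : UnitAddCircle => y + ((k : ℤ) + 1) • a)
          = (fun y => y + a) ∘ (fun y => y + (k : ℤ) • a) := by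
        funext y; show y + ((k : ℤ) + 1) • a = (y + (k : ℤ) • a) + a
        rw [add_zsmul, one_zsmul, ← add_assoc]
      rw [this, Set.preimage_comp, hinv, ih]
    | pred k ih =>
      have : (fun y : UnitAddCircle => y + (-(k : ℤ) - 1) • a)
          = (fun y => y + (-a)) ∘ (fun y => y + (-(k : ℤ)) • a) := by
        funext y; show y + (-(k : ℤ) - 1) • a = (y + (-(k : ℤ)) • a) + (-a)
        rw [sub_zsmul, one_zsmul, ← add_assoc]
      rw [this, Set.preimage_comp, hneg, ih]
  have key : ∀ z : UnitAddCircle, (fun y => y + z) ⁻¹' E =ᵐ[volume] E := by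
    set F : C(UnitAddCircle × UnitAddCircle, UnitAddCircle) :=
      ⟨fun p => p.2 + p.1, by continuity⟩ with hF
    have hclosed : IsClosed {z : UnitAddCircle | (F.curry z) ⁻¹' E =ᵐ[volume] E} := by
      apply isClosed_setOf_preimage_ae_eq F.curry.continuous
        (fun z => measurePreserving_add_right volume z) E hE.nullMeasurableSet
        (measure_ne_top _ _)
    have hsub : ((AddSubgroup.zmultiples a) : Set UnitAddCircle)
        ⊆ {z : UnitAddCircle | (F.curry z) ⁻¹' E =ᵐ[volume] E} := by
      rintro z ⟨n, rfl⟩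
      have : (F.curry ((n : ℤ) • a)) ⁻¹' E = E := hz n
      simp only [Set.mem_setOf_eq, this]
      exact Filter.EventuallyEq.rfl
    intro z
    have hmem : z ∈ closure ((AddSubgroup.zmultiples a) : Set UnitAddCircle) :=
      (dense_zmult hα) z
    exact (hclosed.closure_subset_iff.mpr hsub) hmem
  apply AddCircle.ae_empty_or_univ_of_forall_vadd_ae_eq_self hE.nullMeasurableSet
    (u := fun j : ℕ => (((1 : ℕ) / (j : ℝ) * 1 : ℝ) : UnitAddCircle)) (l := atTop)
  · intro j
    have h1 : ((((1 : ℕ) / (j : ℝ) * 1 : ℝ) : UnitAddCircle) +ᵥ E)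
        = (fun y => y + (-(((1 : ℕ) / (j : ℝ) * 1 : ℝ) : UnitAddCircle))) ⁻¹' E := by
      ext y
      rw [Set.mem_vadd_set_iff_neg_vadd_mem]
      simp [add_comm]
    rw [h1]
    exact key _
  · have hev : ∀ᶠ j : ℕ in atTop, (addOrderOf ∘ fun j : ℕ =>
        (((1 : ℕ) / (j : ℝ) * 1 : ℝ) : UnitAddCircle)) j = j := by
      filter_upwards [eventually_gt_atTop 0] with j hj
      exact AddCircle.addOrderOf_div_of_gcd_eq_one hj (Nat.gcd_one_left j)
    have h3 : (addOrderOf ∘ fun j : ℕ => (((1 : ℕ) / (j : ℝ) * 1 : ℝ) : UnitAddCircle))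
        =ᶠ[atTop] id := hev
    exact tendsto_id.congr' h3.symm

/-- If `σ : 𝕋 → 𝕋` is measure-preserving and ergodic, `f : 𝕋 → ℤ` is measurable, `α` is
irrational, and the skew product `T̃_f(x,n) = (σ(x), n + f(x))` on `𝕋 × ℤ` is ergodic with
respect to the σ-finite measure `λ × c`, then the skew product
`T_f(x,y) = (σ(x), y + α·f(x))` on `𝕋²` is ergodic with respect to `λ × λ`. -/
theorem stmt8 (α : ℝ) (hα : Irrational α)
    (σ : UnitAddCircle → UnitAddCircle)
    (hσ : Ergodic σ (volume : Measure UnitAddCircle))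
    (f : UnitAddCircle → ℤ) (hf : Measurable f)
    (Tf : UnitAddCircle × UnitAddCircle → UnitAddCircle × UnitAddCircle)
    (hTf : ∀ x y, Tf (x, y) = (σ x, y + ↑(α * (f x : ℝ))))
    (Tf' : UnitAddCircle × ℤ → UnitAddCircle × ℤ)
    (hTf' : ∀ x n, Tf' (x, n) = (σ x, n + f x))
    (herg : Ergodic Tf'
      ((volume : Measure UnitAddCircle).prod (Measure.count : Measure ℤ))) :
    Ergodic Tf ((volume : Measure UnitAddCircle).prod (volume : Measure UnitAddCircle)) := by
  set μ : Measure UnitAddCircle := volume with hμ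
  set a : UnitAddCircle := ((α : ℝ) : UnitAddCircle) with haa
  have hca : ∀ k : ℤ, ((α * (k : ℝ) : ℝ) : UnitAddCircle) = k • a := by
    intro k
    rw [mul_comm, ← zsmul_eq_mul]
    exact (map_zsmul (QuotientAddGroup.mk' _ : ℝ →+ UnitAddCircle) k α)
  have hc : Measurable fun x : UnitAddCircle => ((α * (f x : ℝ) : ℝ) : UnitAddCircle) := by
    apply AddCircle.measurable_mk'.comp
    exact (measurable_from_top.comp hf).const_mul α
  constructor
  -- measure preservation
  · have hTfeq : Tf = fun p : UnitAddCircle × UnitAddCircle =>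
        (σ p.1, p.2 + ((α * (f p.1 : ℝ) : ℝ) : UnitAddCircle)) := by
      funext p
      rw [← hTf p.1 p.2]
    rw [hTfeq]
    exact hσ.toMeasurePreserving.skew_product
      (g := fun x y => y + ((α * (f x : ℝ) : ℝ) : UnitAddCircle))
      (measurable_snd.add (hc.comp measurable_fst))
      (ae_of_all _ fun x => (measurePreserving_add_right μ _).map_eq)
  -- pre-ergodicity
  · refine ⟨fun s hs hsi => ?_⟩
    rw [Filter.eventuallyConst_set']
    set g : UnitAddCircle → ℝ≥0∞ := fun y => μ ((fun x => (x, y)) ⁻¹' s) with hg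
    have hgm : Measurable g := measurable_measure_prodMk_right hs
    have dich : ∀ y, (∀ n : ℤ, g (y + n • a) = 0) ∨ (∀ n : ℤ, g (y + n • a) = 1) := by
      intro y
      set C : ℤ → Set UnitAddCircle := fun n => (fun x => (x, y + n • a)) ⁻¹' s with hC
      have hCm : ∀ n, MeasurableSet (C n) := fun n => hs.preimage measurable_prodMk_right
      set B : Set (UnitAddCircle × ℤ) := ⋃ n : ℤ, (C n) ×ˢ ({n} : Set ℤ) with hB
      have hBmem : ∀ p : UnitAddCircle × ℤ, p ∈ B ↔ (p.1, y + p.2 • a) ∈ s := by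
        intro p
        simp only [hB, Set.mem_iUnion, Set.mem_prod, Set.mem_singleton_iff, hC,
          Set.mem_preimage]
        constructor
        · rintro ⟨n, h1, rfl⟩; exact h1
        · intro h; exact ⟨p.2, h, rfl⟩
      have hBm : MeasurableSet B :=
        MeasurableSet.iUnion fun n => (hCm n).prod (measurableSet_singleton n)
      have hBinv : Tf' ⁻¹' B = B := by
        ext ⟨x, m⟩
        rw [Set.mem_preimage, hTf' x m, hBmem, hBmem]
        show (σ x, y + (m + f x) • a) ∈ s ↔ (x, y + m • a) ∈ s
        have h2 : y + (m + f x) • a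
            = (y + m • a) + ((α * (f x : ℝ) : ℝ) : UnitAddCircle) := by
          rw [hca (f x), add_zsmul, ← add_assoc]
        have h1 : (σ x, y + (m + f x) • a) = Tf (x, y + m • a) := by
          rw [hTf x (y + m • a), h2]
        rw [h1, ← Set.mem_preimage, hsi]
      rcases herg.ae_empty_or_univ hBm hBinv with hB0 | hB1
      · left
        intro n
        have h0 : (μ.prod Measure.count) B = 0 := ae_eq_empty.mp hB0
        rw [hB, measure_iUnion_null_iff] at h0
        have h1 := h0 n
        rwa [Measure.prod_prod, Measure.count_singleton, mul_one] at h1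
      · right
        intro n
        have h0 : (μ.prod Measure.count) Bᶜ = 0 := ae_eq_univ.mp hB1
        have hBc : Bᶜ = ⋃ n : ℤ, ((C n)ᶜ) ×ˢ ({n} : Set ℤ) := by
          ext ⟨x, m⟩
          simp only [Set.mem_compl_iff, hBmem, Set.mem_iUnion, Set.mem_prod,
            Set.mem_singleton_iff]
          constructor
          · intro h; exact ⟨m, h, rfl⟩
          · rintro ⟨k, h1, rfl⟩; exact h1
        rw [hBc, measure_iUnion_null_iff] at h0
        have h1 := h0 n
        rw [Measure.prod_prod, Measure.count_singleton, mul_one] at h1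
        exact (prob_compl_eq_zero_iff (hCm n)).mp h1
    have hg01 : ∀ y, g y = 0 ∨ g y = 1 := by
      intro y
      rcases dich y with h | h
      · left; simpa using h 0
      · right; simpa using h 0
    have hper : ∀ y, g (y + a) = g y := by
      intro y
      rcases dich y with h | h
      · have h1 := h 1
        have h0 := h 0
        simp only [one_zsmul] at h1
        simp only [zero_zsmul, add_zero] at h0
        rw [h1, h0]
      · have h1 := h 1
        have h0 := h 0
        simp only [one_zsmul] at h1
        simp only [zero_zsmul, add_zero] at h0
        rw [h1, h0]
    set E : Set UnitAddCircle := {y | g y = 1} with hE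
    have hEm : MeasurableSet E := hgm (measurableSet_singleton 1)
    have hEinv : (fun y => y + a) ⁻¹' E = E := by
      ext y
      simp only [Set.mem_preimage, hE, Set.mem_setOf_eq, hper y]
    rcases rot_dichotomy hα hEm hEinv with h0 | h1
    · left
      rw [ae_eq_empty, Measure.prod_apply_symm hs]
      have hae : ∀ᵐ y ∂μ, g y = 0 := by
        have hE0 : μ E = 0 := ae_eq_empty.mp h0
        filter_upwards [measure_eq_zero_iff_ae_notMem.mp hE0] with y hy
        rcases hg01 y with h | h
        · exact h
        · exact absurd h hy
      calc ∫⁻ y, μ ((fun x => (x, y)) ⁻¹' s) ∂μ = ∫⁻ _, (0 : ℝ≥0∞) ∂μ :=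
            lintegral_congr_ae hae
        _ = 0 := lintegral_zero
    · right
      rw [ae_eq_univ, Measure.prod_apply_symm hs.compl]
      have hae : ∀ᵐ y ∂μ, μ ((fun x => (x, y)) ⁻¹' sᶜ) = 0 := by
        have hE1 : μ Eᶜ = 0 := ae_eq_univ.mp h1
        filter_upwards [measure_eq_zero_iff_ae_notMem.mp hE1] with y hy
        have hy' : g y = 1 := not_not.mp hy
        have hpre : (fun x => (x, y)) ⁻¹' sᶜ = ((fun x => (x, y)) ⁻¹' s)ᶜ := rfl
        rw [hpre]
        exact (prob_compl_eq_zero_iff (hs.preimage measurable_prodMk_right)).mpr hy'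
      calc ∫⁻ y, μ ((fun x => (x, y)) ⁻¹' sᶜ) ∂μ = ∫⁻ _, (0 : ℝ≥0∞) ∂μ :=
            lintegral_congr_ae hae
        _ = 0 := lintegral_zero
end

section
/- Let η ∈ (0,1) be irrational. The map R : 𝕋×ℤ₂ → 𝕋×ℤ₂ defined by R(x, a) = (x + η, a) if the canonical representative of x lies in [0, 1−η), and R(x, a) = (x + η, a + 1) if it lies in [1−η, 1), preserves the product measure λ×c and is ergodic. -/
open MeasureTheory
lemma rep_coe (t : ℝ) : rep ((t : ℝ) : UnitAddCircle) = Int.fract t := by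
  simp [rep, AddCircle.coe_equivIco_mk_apply]

lemma rep_mem (x : UnitAddCircle) : rep x ∈ Set.Ico (0:ℝ) 1 := by
  have := ((AddCircle.equivIco 1 0) x).2
  simpa [rep] using this

lemma coe_rep (x : UnitAddCircle) : ((rep x : ℝ) : UnitAddCircle) = x :=
  (AddCircle.equivIco 1 0).symm_apply_apply x

lemma measurable_rep : Measurable rep :=
  measurable_subtype_coe.comp (AddCircle.measurableEquivIco 1 0).measurable

lemma coe_int_zero (n : ℤ) : (((n : ℝ)) : UnitAddCircle) = 0 := by
  rw [AddCircle.coe_eq_zero_iff]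
  exact ⟨n, by simp⟩

lemma coe_sub_int (r : ℝ) (n : ℤ) : (((r - (n:ℝ) : ℝ)) : UnitAddCircle) = (r : UnitAddCircle) := by
  rw [AddCircle.coe_sub, coe_int_zero, sub_zero]

lemma floor_key {u η : ℝ} (hη0 : 0 < η) (hη1 : η < 1) :
    ((⌊u + η⌋ : ℤ) : ZMod 2) = if Int.fract u < 1 - η then ((⌊u⌋ : ℤ) : ZMod 2)
      else (((⌊u⌋ + 1 : ℤ)) : ZMod 2) := by
  have hfl := Int.floor_le u
  have hlt := Int.lt_floor_add_one u
  have hfr : Int.fract u = u - ⌊u⌋ := rfl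
  split_ifs with h <;> rw [hfr] at h <;> congr 1
  · exact Int.floor_eq_iff.2 ⟨by push_cast; linarith, by push_cast; linarith⟩
  · push_neg at h
    exact Int.floor_eq_iff.2 ⟨by push_cast; linarith, by push_cast; linarith⟩

noncomputable def phi (y : UnitAddCircle) : UnitAddCircle × ZMod 2 :=
  (((2 * rep y : ℝ) : UnitAddCircle), ((⌊2 * rep y⌋ : ℤ) : ZMod 2))

lemma measurable_phi : Measurable phi := by
  apply Measurable.prodMk
  · exact (AddCircle.continuous_mk' 1).measurable.comp (measurable_rep.const_mul 2)
  · exact (measurable_of_countable _).comp (measurable_rep.const_mul 2).floor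

open Classical in
lemma semiconj (η : ℝ) (hη0 : 0 < η) (hη1 : η < 1)
    (R : UnitAddCircle × ZMod 2 → UnitAddCircle × ZMod 2)
    (hR : ∀ x a, R (x, a) = (x + ↑η, if rep x < 1 - η then a else a + 1)) (y : UnitAddCircle) :
    phi (((η/2 : ℝ) : UnitAddCircle) + y) = R (phi y) := by
  set t := rep y with htdef
  have hy : ((t : ℝ) : UnitAddCircle) = y := coe_rep y
  have h1 : ((η/2 : ℝ) : UnitAddCircle) + y = ((t + η/2 : ℝ) : UnitAddCircle) := by
    rw [← hy, ← AddCircle.coe_add, add_comm]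
  set k : ℤ := ⌊t + η/2⌋ with hk
  have h2 : 2 * Int.fract (t + η/2) = (2*t + η) - ((2*k : ℤ) : ℝ) := by
    rw [Int.fract]; push_cast; ring
  have h2k : ((2*k : ℤ) : ZMod 2) = 0 := by
    push_cast
    rw [show (2 : ZMod 2) = 0 from rfl, zero_mul]
  unfold phi
  rw [hR, h1, rep_coe, rep_coe, h2, Prod.mk.injEq]
  refine ⟨by rw [coe_sub_int, AddCircle.coe_add], ?_⟩
  rw [Int.floor_sub_intCast, Int.cast_sub, h2k, sub_zero, floor_key hη0 hη1]
  rcases lt_or_ge (Int.fract (2*t)) (1-η) with h | h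
  · rw [if_pos h, if_pos h]
  · rw [if_neg (not_lt.2 h), if_neg (not_lt.2 h)]
    push_cast
    ring
open Classical in
lemma count_zmod2 (s : Set (ZMod 2)) : Measure.count s =
    (if (0:ZMod 2) ∈ s then 1 else 0) + (if (1:ZMod 2) ∈ s then 1 else 0) := by
  have hz : ∀ x : ZMod 2, x = 0 ∨ x = 1 := by decide
  have hne : (1:ZMod 2) ≠ 0 := by decide
  by_cases h0 : (0:ZMod 2) ∈ s <;> by_cases h1 : (1:ZMod 2) ∈ s
  · have hs : s = Set.univ :=
      Set.eq_univ_iff_forall.2 (fun x => by rcases hz x with rfl|rfl <;> assumption)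
    rw [hs, Measure.count_univ]
    norm_num [ZMod.card]
  · have hs : s = {0} := by
      ext x; constructor
      · intro hx; rcases hz x with rfl|rfl
        · rfl
        · exact absurd hx h1
      · rintro rfl; exact h0
    rw [hs, Measure.count_singleton]
    simp [hne]
  · have hs : s = {1} := by
      ext x; constructor
      · intro hx; rcases hz x with rfl|rfl
        · exact absurd hx h0
        · rfl
      · rintro rfl; exact h1
    rw [hs, Measure.count_singleton]
    simp [hne]
  · have hs : s = ∅ := by
      ext x; simp only [Set.mem_empty_iff_false, iff_false]
      intro hx; rcases hz x with rfl|rfl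
      · exact h0 hx
      · exact h1 hx
    rw [hs, measure_empty]
    simp

lemma measurePreserving_mk_Ico :
    MeasurePreserving ((↑) : ℝ → UnitAddCircle) (volume.restrict (Set.Ico (0:ℝ) 1)) volume := by
  have h := AddCircle.measurePreserving_mk 1 0
  have he : (volume : Measure ℝ).restrict (Set.Ioc 0 (0+1)) = volume.restrict (Set.Ico 0 1) := by
    rw [zero_add]; exact (Measure.restrict_congr_set Ico_ae_eq_Ioc).symm
  rwa [he] at h

lemma ofReal_half : ENNReal.ofReal |(2:ℝ)⁻¹| = (2:ENNReal)⁻¹ := by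
  rw [abs_of_pos (by norm_num), ENNReal.ofReal_inv_of_pos (by norm_num)]
  norm_num

open Classical in
lemma map_phi_eq : Measure.map phi (volume : Measure UnitAddCircle)
    = (volume : Measure UnitAddCircle).prod
      ((2 : ENNReal)⁻¹ • (Measure.count : Measure (ZMod 2))) := by
  have hc : IsFiniteMeasure ((2:ENNReal)⁻¹ • (Measure.count : Measure (ZMod 2))) := by
    constructor
    rw [Measure.smul_apply, smul_eq_mul, Measure.count_univ]
    have h2 : ((Fintype.card (ZMod 2) : ℕ) : ENNReal) = 2 := by
      rw [ZMod.card]; norm_num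
    rw [ENat.card_eq_coe_fintype_card, ENat.toENNReal_coe, h2, ENNReal.inv_mul_cancel (by norm_num) (by norm_num)]
    exact ENNReal.one_lt_top
  refine (Measure.prod_eq ?_).symm
  intro s u hs hu
  rw [Measure.map_apply measurable_phi (hs.prod hu)]
  set B : Set ℝ := ((↑) : ℝ → UnitAddCircle) ⁻¹' s with hBdef
  have hB : MeasurableSet B := (AddCircle.continuous_mk' 1).measurable hs
  have hvolB : volume (B ∩ Set.Ico 0 1) = volume s := by
    have := measurePreserving_mk_Ico.measure_preimage hs.nullMeasurableSet
    rwa [Measure.restrict_apply hB] at this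
  set E0 : Set ℝ := (fun x : ℝ => 2*x) ⁻¹' (B ∩ Set.Ico 0 1) with hE0def
  set E1 : Set ℝ := (fun x : ℝ => 2*x - 1) ⁻¹' (B ∩ Set.Ico 0 1) with hE1def
  have hmem0 : ∀ x : ℝ, x ∈ E0 ↔ (((2*x : ℝ)) : UnitAddCircle) ∈ s ∧ 0 ≤ 2*x ∧ 2*x < 1 := by
    intro x
    simp only [hE0def, Set.mem_preimage, Set.mem_inter_iff, Set.mem_Ico, hBdef]
  have hmem1 : ∀ x : ℝ, x ∈ E1 ↔
      (((2*x - 1 : ℝ)) : UnitAddCircle) ∈ s ∧ 0 ≤ 2*x - 1 ∧ 2*x - 1 < 1 := by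
    intro x
    simp only [hE1def, Set.mem_preimage, Set.mem_inter_iff, Set.mem_Ico, hBdef]
  have hvol0 : volume E0 = 2⁻¹ * volume s := by
    rw [hE0def, Real.volume_preimage_mul_left (two_ne_zero), ofReal_half, hvolB]
  have hvol1 : volume E1 = 2⁻¹ * volume s := by
    have hcomp : (fun x : ℝ => 2*x - 1) = (fun y : ℝ => y + (-1)) ∘ (fun x : ℝ => 2*x) := by
      funext x; simp [sub_eq_add_neg]
    rw [hE1def, hcomp, Set.preimage_comp, Real.volume_preimage_mul_left (two_ne_zero),
      ofReal_half, measure_preimage_add_right, hvolB]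
  have hone : ((1:ℤ):ℝ) = 1 := by norm_num
  have hkey : ((↑) : ℝ → UnitAddCircle) ⁻¹' (phi ⁻¹' (s ×ˢ u)) ∩ Set.Ico 0 1
      = (if (0:ZMod 2) ∈ u then E0 else ∅) ∪ (if (1:ZMod 2) ∈ u then E1 else ∅) := by
    ext x
    simp only [Set.mem_inter_iff, Set.mem_preimage, Set.mem_prod, Set.mem_union, Set.mem_Ico]
    constructor
    · rintro ⟨⟨hps, hpu⟩, hx0, hx1⟩
      have hfr : Int.fract x = x := Int.fract_eq_self.2 ⟨hx0, hx1⟩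
      rw [phi] at hps hpu
      simp only [rep_coe, hfr] at hps hpu
      rcases lt_or_ge x (1/2) with hhalf | hhalf
      · have hfloor : ⌊2*x⌋ = 0 :=
          Int.floor_eq_iff.2 ⟨by push_cast; linarith, by push_cast; linarith⟩
        rw [hfloor] at hpu
        norm_num at hpu
        left
        rw [if_pos hpu, hmem0 x]
        exact ⟨hps, by linarith, by linarith⟩
      · have hfloor : ⌊2*x⌋ = 1 :=
          Int.floor_eq_iff.2 ⟨by push_cast; linarith, by push_cast; linarith⟩
        rw [hfloor] at hpu
        norm_num at hpu
        right
        rw [if_pos hpu, hmem1 x]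
        refine ⟨?_, by linarith, by linarith⟩
        rw [show (2*x - 1 : ℝ) = 2*x - ((1:ℤ):ℝ) by rw [hone], coe_sub_int]
        exact hps
    · rintro (hx | hx)
      · split_ifs at hx with h0
        · rw [hmem0 x] at hx
          obtain ⟨hxB, hx0, hx1⟩ := hx
          have hx0' : (0:ℝ) ≤ x := by linarith
          have hx1' : x < 1 := by linarith
          have hfr : Int.fract x = x := Int.fract_eq_self.2 ⟨hx0', hx1'⟩
          have hfloor : ⌊2*x⌋ = 0 :=
            Int.floor_eq_iff.2 ⟨by push_cast; linarith, by push_cast; linarith⟩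
          refine ⟨⟨?_, ?_⟩, hx0', hx1'⟩
          · rw [phi]; simp only [rep_coe, hfr]; exact hxB
          · rw [phi]; simp only [rep_coe, hfr, hfloor]; exact_mod_cast h0
        · exact absurd hx (Set.notMem_empty x)
      · split_ifs at hx with h1
        · rw [hmem1 x] at hx
          obtain ⟨hxB, hx0, hx1⟩ := hx
          have hx0' : (0:ℝ) ≤ x := by linarith
          have hx1' : x < 1 := by linarith
          have hfr : Int.fract x = x := Int.fract_eq_self.2 ⟨hx0', hx1'⟩
          have hfloor : ⌊2*x⌋ = 1 :=
            Int.floor_eq_iff.2 ⟨by push_cast; linarith, by push_cast; linarith⟩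
          refine ⟨⟨?_, ?_⟩, hx0', hx1'⟩
          · rw [phi]; simp only [rep_coe, hfr]
            rw [show ((2*x : ℝ) : UnitAddCircle) = ((2*x - ((1:ℤ):ℝ) : ℝ) : UnitAddCircle) from
              (coe_sub_int _ _).symm, hone]
            exact hxB
          · rw [phi]; simp only [rep_coe, hfr, hfloor]; exact_mod_cast h1
        · exact absurd hx (Set.notMem_empty x)
  have hm0 : MeasurableSet E0 := (measurable_const_mul 2) (hB.inter measurableSet_Ico)
  have hm1 : MeasurableSet E1 :=
    ((measurable_const_mul 2).sub measurable_const) (hB.inter measurableSet_Ico)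
  have hdisj : Disjoint (if (0:ZMod 2) ∈ u then E0 else ∅) (if (1:ZMod 2) ∈ u then E1 else ∅) := by
    have hd : Disjoint E0 E1 := by
      rw [Set.disjoint_left]
      intro x hx0 hx1
      rw [hmem0 x] at hx0
      rw [hmem1 x] at hx1
      linarith [hx0.2.2, hx1.2.1]
    split_ifs <;> simp [hd]
  have hmeas : MeasurableSet (((↑) : ℝ → UnitAddCircle) ⁻¹' (phi ⁻¹' (s ×ˢ u))) :=
    (AddCircle.continuous_mk' 1).measurable (measurable_phi (hs.prod hu))
  have hpre := measurePreserving_mk_Ico.measure_preimage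
    (measurable_phi (hs.prod hu)).nullMeasurableSet
  rw [Measure.restrict_apply hmeas, hkey] at hpre
  rw [← hpre, measure_union hdisj (by split_ifs; exacts [hm1, MeasurableSet.empty])]
  rw [Measure.smul_apply, smul_eq_mul, count_zmod2]
  split_ifs <;> simp [hvol0, hvol1] <;> ring

lemma ergodic_factor {α β : Type*} [MeasurableSpace α] [MeasurableSpace β] {T : α → α}
    {S : β → β} {μ : Measure α} {Φ : α → β} (hT : Ergodic T μ) (hΦ : Measurable Φ)
    (hS : Measurable S) (hcomm : ∀ y, Φ (T y) = S (Φ y)) :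
    Ergodic S (Measure.map Φ μ) := by
  have hTm : Measurable T := hT.toMeasurePreserving.measurable
  have hfun : S ∘ Φ = Φ ∘ T := funext fun y => (hcomm y).symm
  constructor
  · refine ⟨hS, ?_⟩
    rw [Measure.map_map hS hΦ, hfun, ← Measure.map_map hΦ hTm,
      hT.toMeasurePreserving.map_eq]
  · constructor
    intro t ht hinv
    have h1 : T ⁻¹' (Φ ⁻¹' t) = Φ ⁻¹' t := by
      rw [← Set.preimage_comp, ← hfun, Set.preimage_comp, hinv]
    have h2 := hT.measure_self_or_compl_eq_zero (hΦ ht) h1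
    rw [Filter.eventuallyConst_set]
    rcases h2 with h2 | h2
    · right
      refine measure_eq_zero_iff_ae_notMem.1 ?_
      rw [Measure.map_apply hΦ ht]
      exact h2
    · left
      have h3 : (Measure.map Φ μ) tᶜ = 0 := by
        rw [Measure.map_apply hΦ ht.compl, Set.preimage_compl]
        exact h2
      have h4 := measure_eq_zero_iff_ae_notMem.1 h3
      filter_upwards [h4] with x hx
      simpa using hx

lemma dense_mult {x : ℝ} (hx : Irrational x) :
    DenseRange (fun n : ℤ => n • ((x : ℝ) : UnitAddCircle)) := by
  set S : AddSubgroup ℝ := AddSubgroup.closure {x, 1} with hS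
  have hd : Dense (S : Set ℝ) := by
    rcases S.dense_or_cyclic with h | ⟨a, ha⟩
    · exact h
    · exfalso
      have hxS : x ∈ S := AddSubgroup.subset_closure (by simp)
      have h1S : (1:ℝ) ∈ S := AddSubgroup.subset_closure (by simp)
      rw [ha] at hxS h1S
      rcases AddSubgroup.mem_closure_singleton.1 hxS with ⟨m, hm⟩
      rcases AddSubgroup.mem_closure_singleton.1 h1S with ⟨n, hn⟩
      rw [zsmul_eq_mul] at hm hn
      have hn0 : (n:ℝ) ≠ 0 := by
        rintro h
        rw [h, zero_mul] at hn
        exact one_ne_zero hn.symm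
      apply hx
      refine ⟨(m : ℚ) / (n : ℚ), ?_⟩
      have ha' : a = 1 / n := by field_simp; linarith [hn]
      rw [ha'] at hm
      push_cast
      rw [← hm]
      ring
  have hmk : DenseRange ((↑) : ℝ → UnitAddCircle) :=
    Function.Surjective.denseRange (fun y => ⟨_, (AddCircle.equivIco 1 0).symm_apply_apply y⟩)
  have hcont : Continuous ((↑) : ℝ → UnitAddCircle) := AddCircle.continuous_mk' 1
  have himg : Dense (((↑) : ℝ → UnitAddCircle) '' (S : Set ℝ)) := hmk.dense_image hcont hd
  have hsub : (((↑) : ℝ → UnitAddCircle) '' (S : Set ℝ)) ⊆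
      Set.range (fun n : ℤ => n • ((x : ℝ) : UnitAddCircle)) := by
    rintro _ ⟨s, hs, rfl⟩
    refine AddSubgroup.closure_induction (p := fun g _ =>
        ∃ n : ℤ, n • ((x : ℝ) : UnitAddCircle) = ((g : ℝ) : UnitAddCircle)) ?_ ?_ ?_ ?_ hs
    · rintro y (rfl | rfl)
      · exact ⟨1, one_zsmul _⟩
      · exact ⟨0, by rw [zero_zsmul, AddCircle.coe_period]⟩
    · exact ⟨0, by rw [zero_zsmul]; norm_cast⟩
    · rintro a b _ _ ⟨p, hp⟩ ⟨q, hq⟩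
      exact ⟨p + q, by rw [add_zsmul, hp, hq, AddCircle.coe_add]⟩
    · rintro a _ ⟨p, hp⟩
      exact ⟨-p, by rw [neg_zsmul, hp, AddCircle.coe_neg]⟩
  exact himg.mono hsub

open Classical in
/-- The skew product `R(x,a) = (x + η, a)` for `x` with representative in `[0, 1-η)` and
`R(x,a) = (x + η, a + 1)` for `x` with representative in `[1-η, 1)` preserves the product
measure `λ × c` on `𝕋 × ℤ₂` and is ergodic. -/
theorem stmt10 (η : ℝ) (hη0 : 0 < η) (hη1 : η < 1) (hη : Irrational η)
    (R : UnitAddCircle × ZMod 2 → UnitAddCircle × ZMod 2)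
    (hR : ∀ x a, R (x, a) = (x + ↑η, if rep x < 1 - η then a else a + 1)) :
    Ergodic R ((volume : Measure UnitAddCircle).prod
      ((2 : ENNReal)⁻¹ • (Measure.count : Measure (ZMod 2)))) := by
  have hη2 : Irrational (η/2) := by
    simpa using hη.div_natCast (two_ne_zero)
  have hdense := dense_mult hη2
  have hT : Ergodic (fun y => (((η/2 : ℝ)) : UnitAddCircle) + y) volume :=
    ergodic_add_left_of_denseRange_zsmul hdense _
  have hRm : Measurable R := by
    have hRfun : R = fun p : UnitAddCircle × ZMod 2 =>
        (p.1 + ↑η, if rep p.1 < 1 - η then p.2 else p.2 + 1) := by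
      funext p
      rcases p with ⟨x, a⟩
      rw [hR]
    rw [hRfun]
    apply Measurable.prodMk
    · exact measurable_fst.add_const _
    · refine Measurable.ite ?_ measurable_snd ?_
      · exact measurableSet_lt (measurable_rep.comp measurable_fst) measurable_const
      · exact (measurable_of_countable (fun a : ZMod 2 => a + 1)).comp measurable_snd
  have hresult := ergodic_factor hT measurable_phi hRm (semiconj η hη0 hη1 R hR)
  rwa [map_phi_eq] at hresult
end

section
/- The map R : X×ℤ₂ → X×ℤ₂ defined by R(ω, a) = (T ω, a + ω₀), where ω₀ ∈ {0,1} is viewed as an element of ℤ₂, preserves the product measure μ×c and is ergodic. -/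
open MeasureTheory Set Function
open scoped ENNReal symmDiff

namespace S12

abbrev Om : Type := (ℤ → Bool) × ZMod 2

def toZ (b : Bool) : ZMod 2 := if b = true then 1 else 0
def boolOf (x : ZMod 2) : Bool := decide (x = 1)

lemma toZ_eq_iff (b : Bool) (x : ZMod 2) : toZ b = x ↔ b = boolOf x := by
  cases b <;> revert x <;> decide

lemma toZ_inj (b c : Bool) : toZ b = toZ c ↔ b = c := by
  cases b <;> cases c <;> decide

def pr (s : Finset ℤ) (p : Om) : (s → ZMod 2) × ZMod 2 :=
  (fun i => toZ (p.1 i), p.2)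

lemma measurable_pr (s : Finset ℤ) : Measurable (pr s) := by
  refine Measurable.prod ?_ measurable_snd
  show Measurable fun p : Om => fun i : s => toZ (p.1 i)
  exact measurable_pi_lambda _ fun i =>
    Measurable.comp (g := toZ) measurable_from_top
      ((measurable_pi_apply (i:ℤ)).comp measurable_fst)

def R0 : Om → Om := fun p => (fun n => p.1 (n + 1), p.2 + toZ (p.1 0))

lemma measurable_R0 : Measurable R0 := by
  refine Measurable.prod ?_ ?_
  · show Measurable fun p : Om => fun n => p.1 (n + 1)
    exact measurable_pi_lambda _ fun n => (measurable_pi_apply _).comp measurable_fst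
  · show Measurable fun p : Om => p.2 + toZ (p.1 0)
    refine measurable_to_countable' fun a => ?_
    have : (fun p : Om => p.2 + toZ (p.1 0)) ⁻¹' {a}
        = ⋃ b : Bool, ((fun p : Om => p.1 0) ⁻¹' {b}) ∩ (Prod.snd ⁻¹' {a - toZ b}) := by
      ext ⟨ω, c⟩
      simp only [Set.mem_preimage, Set.mem_singleton_iff, Set.mem_iUnion, Set.mem_inter_iff]
      constructor
      · intro h; exact ⟨ω 0, rfl, by rw [← h]; ring⟩
      · rintro ⟨b, hb, hc⟩; subst hb; rw [hc]; ring
    rw [this]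
    exact MeasurableSet.iUnion fun b => (((measurable_pi_apply 0).comp measurable_fst)
      (MeasurableSet.singleton b)).inter (measurable_snd (MeasurableSet.singleton _))


noncomputable def Ic (N : ℕ) : Finset ℤ := Finset.Icc (-(N:ℤ)) (N:ℤ)

lemma Ic_mono {M N : ℕ} (h : M ≤ N) : Ic M ⊆ Ic N := by
  apply Finset.Icc_subset_Icc <;> omega

def alg : Set (Set Om) :=
  {A | ∃ (N : ℕ) (U : Set ((Ic N → ZMod 2) × ZMod 2)), A = pr (Ic N) ⁻¹' U}

lemma pr_comp {s t : Finset ℤ} (h : s ⊆ t) (U : Set ((s → ZMod 2) × ZMod 2)) :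
    pr s ⁻¹' U = pr t ⁻¹' ((fun q : (t → ZMod 2) × ZMod 2 =>
      ((fun i : s => q.1 ⟨i.1, h i.2⟩, q.2) : (s → ZMod 2) × ZMod 2)) ⁻¹' U) := rfl

lemma alg_isSetAlgebra : IsSetAlgebra alg := by
  constructor
  · exact ⟨0, ∅, by simp⟩
  · rintro A ⟨N, U, rfl⟩; exact ⟨N, Uᶜ, by rw [Set.preimage_compl]⟩
  · rintro A B ⟨N, U, rfl⟩ ⟨M, V, rfl⟩
    refine ⟨max N M,
      ((fun q : (Ic (max N M) → ZMod 2) × ZMod 2 =>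
        ((fun i : Ic N => q.1 ⟨i.1, Ic_mono (le_max_left N M) i.2⟩, q.2)
          : (Ic N → ZMod 2) × ZMod 2)) ⁻¹' U) ∪
      ((fun q : (Ic (max N M) → ZMod 2) × ZMod 2 =>
        ((fun i : Ic M => q.1 ⟨i.1, Ic_mono (le_max_right N M) i.2⟩, q.2)
          : (Ic M → ZMod 2) × ZMod 2)) ⁻¹' V), ?_⟩
    rw [Set.preimage_union, pr_comp (Ic_mono (le_max_left N M)) U,
      pr_comp (Ic_mono (le_max_right N M)) V]

lemma mem_alg_measurableSet {A : Set Om} (hA : A ∈ alg) : MeasurableSet A := by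
  obtain ⟨N, U, rfl⟩ := hA
  exact (measurable_pr _) ((Set.to_countable U).measurableSet)

lemma alg_gen : (inferInstance : MeasurableSpace Om) = MeasurableSpace.generateFrom alg := by
  refine le_antisymm ?_ (MeasurableSpace.generateFrom_le fun A hA => mem_alg_measurableSet hA)
  have h1 : ∀ (i : ℤ) (b : Bool), MeasurableSet[MeasurableSpace.generateFrom alg]
      {p : Om | p.1 i = b} := by
    intro i b
    have hi : i ∈ Ic i.natAbs := by rw [Ic, Finset.mem_Icc]; omega
    have : {p : Om | p.1 i = b} = pr (Ic i.natAbs) ⁻¹' {q | q.1 ⟨i, hi⟩ = toZ b} := by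
      ext p
      simp only [Set.mem_setOf_eq, Set.mem_preimage, pr]
      exact (toZ_inj _ _).symm
    rw [this]
    exact MeasurableSpace.measurableSet_generateFrom ⟨_, _, rfl⟩
  have h2 : ∀ a : ZMod 2, MeasurableSet[MeasurableSpace.generateFrom alg]
      {p : Om | p.2 = a} := by
    intro a
    have : {p : Om | p.2 = a} = pr (Ic 0) ⁻¹' {q | q.2 = a} := by
      ext p; simp [pr]
    rw [this]
    exact MeasurableSpace.measurableSet_generateFrom ⟨_, _, rfl⟩
  letI m := MeasurableSpace.generateFrom alg
  have hid : @Measurable Om Om m Prod.instMeasurableSpace id := by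
    have hfst : Measurable[m] (Prod.fst : Om → ℤ → Bool) := by
      refine measurable_pi_iff.2 fun i => ?_
      refine measurable_to_countable' fun b => ?_
      exact h1 i b
    have hsnd : Measurable[m] (Prod.snd : Om → ZMod 2) :=
      measurable_to_countable' fun a => h2 a
    exact Measurable.prod hfst hsnd
  intro s hs
  have := hid hs
  rwa [Set.preimage_id] at this


noncomputable abbrev cm : Measure (ZMod 2) := (2 : ENNReal)⁻¹ • Measure.count

instance : IsProbabilityMeasure (cm) := by
  constructor
  rw [Measure.smul_apply, smul_eq_mul]
  have : (Measure.count : Measure (ZMod 2)) Set.univ = 2 := by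
    rw [Measure.count_apply_finite _ (Set.finite_univ)]
    simp [Set.toFinset_univ]
  rw [this, ENNReal.inv_mul_cancel] <;> norm_num

variable (μ : Measure (ℤ → Bool)) [IsProbabilityMeasure μ]
  (hμ : ∀ (s : Finset ℤ) (f : ℤ → Bool),
      μ {ω | ∀ i ∈ s, ω i = f i} = (1 / 2 : ENNReal) ^ s.card)
include hμ in
lemma meas_atom (s : Finset ℤ) (u : (s → ZMod 2) × ZMod 2) :
    (μ.prod cm) (pr s ⁻¹' {u}) = 2⁻¹ ^ s.card * 2⁻¹ := by
  classical
  obtain ⟨g, a⟩ := u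
  set f : ℤ → Bool := fun i => if h : i ∈ s then boolOf (g ⟨i, h⟩) else false with hf
  have hset : pr s ⁻¹' {(g, a)} = {ω | ∀ i ∈ s, ω i = f i} ×ˢ {a} := by
    ext ⟨ω, b⟩
    simp only [Set.mem_preimage, Set.mem_singleton_iff, Set.mem_prod, Set.mem_setOf_eq,
      pr, Prod.mk.injEq, funext_iff]
    constructor
    · rintro ⟨h1, h2⟩
      refine ⟨fun i hi => ?_, h2⟩
      have := h1 ⟨i, hi⟩
      rw [toZ_eq_iff] at this
      simp [hf, hi, this]
    · rintro ⟨h1, h2⟩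
      refine ⟨fun i => ?_, h2⟩
      rw [toZ_eq_iff]
      have := h1 i i.2
      simpa [hf, i.2] using this
  rw [hset, Measure.prod_prod, hμ s f, Measure.smul_apply, Measure.count_singleton,
    smul_eq_mul, mul_one, one_div]

include hμ in
lemma meas_cyl (s : Finset ℤ) (U : Set ((s → ZMod 2) × ZMod 2)) :
    (μ.prod cm) (pr s ⁻¹' U) = (Nat.card U) * 2⁻¹ ^ s.card * 2⁻¹ := by
  classical
  have hU : pr s ⁻¹' U = ⋃ u ∈ U.toFinite.toFinset, pr s ⁻¹' {u} := by
    ext p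
    simp only [Set.mem_preimage, Set.mem_iUnion, Set.Finite.mem_toFinset,
      Set.mem_singleton_iff, exists_prop]
    exact ⟨fun h => ⟨_, h, rfl⟩, fun ⟨u, hu, he⟩ => he ▸ hu⟩
  rw [hU, measure_biUnion_finset ?hd fun u _ => (measurable_pr s) (measurableSet_singleton u)]
  case hd =>
    intro u _ v _ huv
    refine Set.disjoint_left.2 fun p hp hp' => huv ?_
    simp only [Set.mem_preimage, Set.mem_singleton_iff] at hp hp'
    rw [← hp, ← hp']
  have hcard : (Nat.card U) = U.toFinite.toFinset.card := by
    rw [Nat.card_coe_set_eq, Set.ncard_eq_toFinset_card]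
  simp only [meas_atom μ hμ s]
  rw [Finset.sum_const, hcard, nsmul_eq_mul, mul_assoc]

lemma card_preimage_hom {A B : Type*} [AddCommGroup A] [AddCommGroup B] [Fintype A] [Fintype B]
    (φ : A →+ B) (hφ : Function.Surjective φ) (S : Set B) :
    Nat.card (φ ⁻¹' S) * Nat.card B = Nat.card S * Nat.card A := by
  classical
  have hfib : ∀ b : B, Nat.card (φ ⁻¹' {b}) = Nat.card φ.ker := by
    intro b
    obtain ⟨x, hx⟩ := hφ b
    refine Nat.card_congr ⟨fun y => ⟨y.1 - x, ?_⟩, fun k => ⟨x + k.1, ?_⟩, ?_, ?_⟩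
    · have hy : φ y.1 = b := y.2
      simp [AddMonoidHom.mem_ker, map_sub, hy, hx]
    · have hk : φ k.1 = 0 := k.2
      simp [Set.mem_preimage, map_add, hx, hk]
    · intro y; ext; simp
    · intro k; ext; simp
  have hA : Nat.card A = Nat.card B * Nat.card φ.ker := by
    rw [AddSubgroup.card_eq_card_quotient_mul_card_addSubgroup φ.ker,
      Nat.card_congr (QuotientAddGroup.quotientKerEquivOfSurjective φ hφ).toEquiv]
  have hS : Nat.card (φ ⁻¹' S) = Nat.card S * Nat.card φ.ker := by
    have e1 : (φ ⁻¹' S).toFinset = Finset.univ.filter (fun a => φ a ∈ S) := by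
      ext a; simp
    have e2 : ∀ b ∈ S.toFinset,
        ((Finset.univ.filter (fun a => φ a ∈ S)).filter (fun a => φ a = b)).card
          = Nat.card φ.ker := by
      intro b hb
      rw [Set.mem_toFinset] at hb
      rw [← hfib b]
      have : ((Finset.univ.filter (fun a => φ a ∈ S)).filter (fun a => φ a = b))
          = (φ ⁻¹' {b}).toFinset := by
        ext a
        simp only [Finset.mem_filter, Finset.mem_univ, true_and, Set.mem_toFinset,
          Set.mem_preimage, Set.mem_singleton_iff]
        constructor
        · rintro ⟨_, h⟩; exact h
        · intro h; exact ⟨h ▸ hb, h⟩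
      rw [this, Nat.card_coe_set_eq, Set.ncard_eq_toFinset_card']
    calc Nat.card (φ ⁻¹' S) = (φ ⁻¹' S).toFinset.card := by
          rw [Nat.card_coe_set_eq, Set.ncard_eq_toFinset_card']
      _ = (Finset.univ.filter (fun a => φ a ∈ S)).card := by rw [e1]
      _ = ∑ b ∈ S.toFinset,
            ((Finset.univ.filter (fun a => φ a ∈ S)).filter (fun a => φ a = b)).card :=
          Finset.card_eq_sum_card_fiberwise (fun a ha => by
            simpa using ha)
      _ = ∑ _b ∈ S.toFinset, Nat.card φ.ker := Finset.sum_congr rfl e2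
      _ = Nat.card S * Nat.card φ.ker := by
          rw [Finset.sum_const, smul_eq_mul, Nat.card_coe_set_eq, Set.ncard_eq_toFinset_card']
  rw [hS, hA]; ring


-- iterate formula
lemma R0_iterate (M : ℕ) (p : Om) :
    R0^[M] p = (fun n => p.1 (n + (M:ℤ)), p.2 + ∑ k ∈ Finset.range M, toZ (p.1 (k:ℤ))) := by
  induction M with
  | zero => simp
  | succ M ih =>
    rw [Function.iterate_succ_apply', ih]
    unfold R0
    refine Prod.ext ?_ ?_
    · funext n
      simp only
      push_cast
      ring_nf
    · simp only [Finset.sum_range_succ]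
      have : ((0:ℤ) + (M:ℤ)) = ((M:ℕ):ℤ) := by ring
      rw [this]
      ring

lemma key_arith {n m a b : ℕ} (h : n * 2 ^ b = m * 2 ^ a) :
    (n : ℝ≥0∞) * 2⁻¹ ^ a = (m : ℝ≥0∞) * 2⁻¹ ^ b := by
  have hcast : (n : ℝ≥0∞) * 2 ^ b = (m : ℝ≥0∞) * 2 ^ a := by
    exact_mod_cast congrArg (Nat.cast : ℕ → ℝ≥0∞) h
  have ha0 : ((2:ℝ≥0∞) ^ a) ≠ 0 := (pow_ne_zero _ (by norm_num))
  have hat : ((2:ℝ≥0∞) ^ a) ≠ ⊤ := (ENNReal.pow_ne_top (by norm_num))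
  have hb0 : ((2:ℝ≥0∞) ^ b) ≠ 0 := (pow_ne_zero _ (by norm_num))
  have hbt : ((2:ℝ≥0∞) ^ b) ≠ ⊤ := (ENNReal.pow_ne_top (by norm_num))
  have ca : (2:ℝ≥0∞) ^ a * (2⁻¹:ℝ≥0∞) ^ a = 1 := by
    rw [← ENNReal.inv_pow]; exact ENNReal.mul_inv_cancel ha0 hat
  have cb : (2:ℝ≥0∞) ^ b * (2⁻¹:ℝ≥0∞) ^ b = 1 := by
    rw [← ENNReal.inv_pow]; exact ENNReal.mul_inv_cancel hb0 hbt
  calc (n : ℝ≥0∞) * 2⁻¹ ^ a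
      = (n : ℝ≥0∞) * (2 ^ b * 2⁻¹ ^ b) * 2⁻¹ ^ a := by rw [cb, mul_one]
    _ = ((n : ℝ≥0∞) * 2 ^ b) * 2⁻¹ ^ b * 2⁻¹ ^ a := by ring
    _ = ((m : ℝ≥0∞) * 2 ^ a) * 2⁻¹ ^ b * 2⁻¹ ^ a := by rw [hcast]
    _ = (m : ℝ≥0∞) * 2⁻¹ ^ b * (2 ^ a * 2⁻¹ ^ a) := by ring
    _ = (m : ℝ≥0∞) * 2⁻¹ ^ b * 1 := by rw [ca]
    _ = (m : ℝ≥0∞) * 2⁻¹ ^ b := by rw [mul_one]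

lemma key_arith' {n m a b : ℕ} (h : n * 2 ^ (b+1) = m * 2 ^ (a+1)) :
    (n : ℝ≥0∞) * 2⁻¹ ^ a * 2⁻¹ = (m : ℝ≥0∞) * 2⁻¹ ^ b * 2⁻¹ := by
  have := key_arith h
  rw [pow_succ, pow_succ, ← mul_assoc, ← mul_assoc] at this
  exact this

lemma Ic_card (N : ℕ) : (Ic N).card = 2 * N + 1 := by
  show (Finset.Icc (-(N:ℤ)) (N:ℤ)).card = 2 * N + 1
  rw [Int.card_Icc]; omega

-- lifting hom for measure preservation
lemma mem_Ic_succ_shift {N : ℕ} (i : Ic N) : (i:ℤ) + 1 ∈ Ic (N+1) := by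
  have h2 := i.2
  simp only [Ic, Finset.mem_Icc] at h2 ⊢
  push_cast
  omega

lemma zero_mem_Ic (N : ℕ) : (0:ℤ) ∈ Ic N := by
  simp only [Ic, Finset.mem_Icc]; omega

noncomputable def Psi (N : ℕ) : ((Ic (N+1) → ZMod 2) × ZMod 2) →+ ((Ic N → ZMod 2) × ZMod 2) :=
  AddMonoidHom.mk' (fun q => (fun i => q.1 ⟨(i:ℤ) + 1, mem_Ic_succ_shift i⟩,
    q.2 + q.1 ⟨0, zero_mem_Ic (N+1)⟩))
    (by intro x y; refine Prod.ext ?_ ?_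
        · funext i; simp [Pi.add_apply]
        · simp [Pi.add_apply]; ring)

lemma Psi_surj (N : ℕ) : Function.Surjective (Psi N) := by
  rintro ⟨g, b⟩
  classical
  set H : Ic (N+1) → ZMod 2 := fun i => if h : (i:ℤ) - 1 ∈ Ic N then g ⟨(i:ℤ) - 1, h⟩ else 0
    with hH
  refine ⟨(H, b - H ⟨0, zero_mem_Ic (N+1)⟩), ?_⟩
  refine Prod.ext ?_ ?_
  · funext i
    show H ⟨(i:ℤ) + 1, _⟩ = g i
    rw [hH]
    simp only [add_sub_cancel_right]
    rw [dif_pos i.2]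
  · show (b - H ⟨0, zero_mem_Ic (N+1)⟩) + H ⟨0, zero_mem_Ic (N+1)⟩ = b
    ring

-- R0 preimage of cylinder
lemma R0_preimage (N : ℕ) (U : Set ((Ic N → ZMod 2) × ZMod 2)) :
    R0 ⁻¹' (pr (Ic N) ⁻¹' U) = pr (Ic (N+1)) ⁻¹' ((Psi N) ⁻¹' U) := by
  ext p
  simp only [Set.mem_preimage]
  have : (Psi N) (pr (Ic (N+1)) p) = pr (Ic N) (R0 p) := by
    refine Prod.ext ?_ ?_
    · funext i; rfl
    · rfl
  rw [this]

include hμ in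
lemma R0_measurePreserving : MeasurePreserving R0 (μ.prod cm) (μ.prod cm) := by
  refine ⟨measurable_R0, ?_⟩
  refine ext_of_generate_finite alg alg_gen (fun s hs t ht _ => alg_isSetAlgebra.inter_mem hs ht) ?_ ?_
  · rintro A ⟨N, U, rfl⟩
    rw [Measure.map_apply measurable_R0 (mem_alg_measurableSet ⟨N, U, rfl⟩)]
    rw [R0_preimage, meas_cyl μ hμ, meas_cyl μ hμ]
    have hc := card_preimage_hom (Psi N) (Psi_surj N) U
    have hcard : ∀ (K : ℕ), Nat.card ((Ic K → ZMod 2) × ZMod 2) = 2 ^ (2 * K + 1 + 1) := by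
      intro K
      rw [Nat.card_eq_fintype_card]
      simp [ZMod.card, Ic_card, pow_succ]
    rw [hcard, hcard] at hc
    rw [Ic_card, Ic_card]
    exact key_arith' hc
  · rw [Measure.map_apply measurable_R0 MeasurableSet.univ, Set.preimage_univ]

noncomputable def Jf (N : ℕ) : Finset ℤ := Finset.Icc (-(N:ℤ)) (3*N+2)

lemma Jf_card (N : ℕ) : (Jf N).card = 4 * N + 3 := by
  show (Finset.Icc (-(N:ℤ)) (3*N+2)).card = 4 * N + 3
  rw [Int.card_Icc]; omega

lemma mJ1 {N : ℕ} (i : Ic N) : (i:ℤ) ∈ Jf N := by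
  have h := i.2; simp only [Ic, Jf, Finset.mem_Icc] at h ⊢; omega

lemma mJ2 {N : ℕ} (i : Ic N) : (i:ℤ) + ((2*N+2 : ℕ) : ℤ) ∈ Jf N := by
  have h := i.2; simp only [Ic, Jf, Finset.mem_Icc] at h ⊢; push_cast; omega

lemma mJ3 {N : ℕ} {k : ℕ} (hk : k ∈ Finset.range (2*N+2)) : ((k : ℕ) : ℤ) ∈ Jf N := by
  simp only [Finset.mem_range] at hk
  simp only [Jf, Finset.mem_Icc]; push_cast; omega

noncomputable def Phi (N : ℕ) : ((Jf N → ZMod 2) × ZMod 2) →+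
    (((Ic N → ZMod 2) × ZMod 2) × ((Ic N → ZMod 2) × ZMod 2)) :=
  AddMonoidHom.mk' (fun q =>
    ((fun i => q.1 ⟨(i:ℤ), mJ1 i⟩, q.2),
     (fun i => q.1 ⟨(i:ℤ) + ((2*N+2 : ℕ) : ℤ), mJ2 i⟩,
      q.2 + ∑ k ∈ (Finset.range (2*N+2)).attach, q.1 ⟨((k:ℕ):ℤ), mJ3 k.2⟩)))
    (by
      intro x y
      refine Prod.ext (Prod.ext ?_ ?_) (Prod.ext ?_ ?_)
      · funext i; rfl
      · rfl
      · funext i; rfl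
      · show (x.2 + y.2) + ∑ k ∈ (Finset.range (2*N+2)).attach,
            (x.1 ⟨((k:ℕ):ℤ), mJ3 k.2⟩ + y.1 ⟨((k:ℕ):ℤ), mJ3 k.2⟩) = _
        rw [Finset.sum_add_distrib]
        show _ = (x.2 + ∑ k ∈ (Finset.range (2*N+2)).attach, x.1 ⟨((k:ℕ):ℤ), mJ3 k.2⟩)
          + (y.2 + ∑ k ∈ (Finset.range (2*N+2)).attach, y.1 ⟨((k:ℕ):ℤ), mJ3 k.2⟩)
        ring)

lemma Phi_surj (N : ℕ) : Function.Surjective (Phi N) := by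
  classical
  rintro ⟨⟨g₁, a₁⟩, ⟨g₂, a₂⟩⟩
  set base : ZMod 2 → Jf N → ZMod 2 := fun t i =>
    if h : (i:ℤ) ∈ Ic N then g₁ ⟨(i:ℤ), h⟩
    else if h2 : (i:ℤ) - ((2*N+2 : ℕ) : ℤ) ∈ Ic N then g₂ ⟨(i:ℤ) - ((2*N+2 : ℕ) : ℤ), h2⟩
    else if (i:ℤ) = (N:ℤ)+1 then t else 0 with hbase
  have hnotin1 : ∀ j : Jf N, (j:ℤ) = (N:ℤ)+1 → ¬((j:ℤ) ∈ Ic N) := by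
    intro j hj; simp only [Ic, Finset.mem_Icc]; omega
  have hnotin2 : ∀ j : Jf N, (j:ℤ) = (N:ℤ)+1 → ¬((j:ℤ) - ((2*N+2:ℕ):ℤ) ∈ Ic N) := by
    intro j hj; simp only [Ic, Finset.mem_Icc]; push_cast; omega
  -- pointwise decomposition
  have hpt : ∀ (t : ZMod 2) (j : Jf N),
      base t j = base 0 j + (if (j:ℤ) = (N:ℤ)+1 then t else 0) := by
    intro t j
    by_cases h1 : (j:ℤ) ∈ Ic N
    · have hne : ¬((j:ℤ) = (N:ℤ)+1) := fun hc => hnotin1 j hc h1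
      simp only [hbase, dif_pos h1, if_neg hne, add_zero]
    · by_cases h2 : (j:ℤ) - ((2*N+2:ℕ):ℤ) ∈ Ic N
      · have hne : ¬((j:ℤ) = (N:ℤ)+1) := fun hc => hnotin2 j hc h2
        simp only [hbase, dif_neg h1, dif_pos h2, if_neg hne, add_zero]
      · simp only [hbase, dif_neg h1, dif_neg h2]
        by_cases h3 : (j:ℤ) = (N:ℤ)+1
        · simp [h3]
        · simp [h3]
  set S : ZMod 2 := ∑ k ∈ (Finset.range (2*N+2)).attach,
    base 0 ⟨((k:ℕ):ℤ), mJ3 k.2⟩ with hS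
  set t : ZMod 2 := a₂ - a₁ - S with ht
  refine ⟨(base t, a₁), ?_⟩
  have hsum : ∑ k ∈ (Finset.range (2*N+2)).attach, base t ⟨((k:ℕ):ℤ), mJ3 k.2⟩
      = S + t := by
    calc ∑ k ∈ (Finset.range (2*N+2)).attach, base t ⟨((k:ℕ):ℤ), mJ3 k.2⟩
        = ∑ k ∈ (Finset.range (2*N+2)).attach,
            (base 0 ⟨((k:ℕ):ℤ), mJ3 k.2⟩ + if (((k:ℕ):ℕ):ℤ) = (N:ℤ)+1 then t else 0) :=
          Finset.sum_congr rfl (fun k _ => hpt t _)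
      _ = S + ∑ k ∈ (Finset.range (2*N+2)).attach,
            (if (((k:ℕ):ℕ):ℤ) = (N:ℤ)+1 then t else 0) := by
          rw [Finset.sum_add_distrib]
      _ = S + t := by
          congr 1
          rw [Finset.sum_attach (Finset.range (2*N+2))
            (fun k : ℕ => if (k:ℤ) = (N:ℤ)+1 then t else 0)]
          have hiff : ∀ k : ℕ, ((k:ℤ) = (N:ℤ)+1) ↔ (k = N+1) := by
            intro k; constructor <;> intro h <;> omega
          rw [Finset.sum_congr rfl (fun k _ => by rw [if_congr (hiff k) rfl rfl])]
          rw [Finset.sum_ite_eq' (Finset.range (2*N+2)) (N+1) (fun _ => t)]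
          rw [if_pos (by rw [Finset.mem_range]; omega)]
  refine Prod.ext (Prod.ext ?_ ?_) (Prod.ext ?_ ?_)
  · funext i
    show base t ⟨(i:ℤ), mJ1 i⟩ = g₁ i
    rw [hbase]
    simp only [dif_pos i.2]
  · rfl
  · funext i
    show base t ⟨(i:ℤ) + ((2*N+2:ℕ):ℤ), mJ2 i⟩ = g₂ i
    rw [hbase]
    have h1 : ¬((i:ℤ) + ((2*N+2:ℕ):ℤ) ∈ Ic N) := by
      have := i.2; simp only [Ic, Finset.mem_Icc] at this ⊢; push_cast; omega
    have h2 : (i:ℤ) + ((2*N+2:ℕ):ℤ) - ((2*N+2:ℕ):ℤ) ∈ Ic N := by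
      simpa using i.2
    simp only [dif_neg h1, dif_pos h2]
    congr 1
    exact Subtype.ext (by push_cast; ring)
  · show a₁ + ∑ k ∈ (Finset.range (2*N+2)).attach, base t ⟨((k:ℕ):ℤ), mJ3 k.2⟩ = a₂
    rw [hsum, ht]
    ring

lemma corr_set (N : ℕ) (U : Set ((Ic N → ZMod 2) × ZMod 2)) :
    (pr (Ic N) ⁻¹' U) ∩ (R0^[2*N+2] ⁻¹' (pr (Ic N) ⁻¹' U))
      = pr (Jf N) ⁻¹' ((Phi N) ⁻¹' (U ×ˢ U)) := by
  ext p
  simp only [Set.mem_inter_iff, Set.mem_preimage, Set.mem_prod]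
  have h1 : ((Phi N) (pr (Jf N) p)).1 = pr (Ic N) p := rfl
  have h2 : ((Phi N) (pr (Jf N) p)).2 = pr (Ic N) (R0^[2*N+2] p) := by
    rw [R0_iterate]
    refine Prod.ext ?_ ?_
    · funext i; rfl
    · show p.2 + ∑ k ∈ (Finset.range (2*N+2)).attach, toZ (p.1 ((k:ℕ):ℤ))
        = p.2 + ∑ k ∈ Finset.range (2*N+2), toZ (p.1 (k:ℤ))
      rw [Finset.sum_attach (Finset.range (2*N+2)) (fun k : ℕ => toZ (p.1 (k:ℤ)))]
  rw [h1, h2]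

include hμ in
lemma corr (N : ℕ) (U : Set ((Ic N → ZMod 2) × ZMod 2)) :
    (μ.prod cm) ((pr (Ic N) ⁻¹' U) ∩ (R0^[2*N+2] ⁻¹' (pr (Ic N) ⁻¹' U)))
      = (μ.prod cm) (pr (Ic N) ⁻¹' U) * (μ.prod cm) (pr (Ic N) ⁻¹' U) := by
  rw [corr_set, meas_cyl μ hμ, meas_cyl μ hμ]
  have hc := card_preimage_hom (Phi N) (Phi_surj N) (U ×ˢ U)
  have hUU : Nat.card (U ×ˢ U : Set _) = Nat.card U * Nat.card U := by
    rw [Nat.card_congr (Equiv.Set.prod U U), Nat.card_prod]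
  have hdom : Nat.card ((Jf N → ZMod 2) × ZMod 2) = 2 ^ (4*N+4) := by
    rw [Nat.card_eq_fintype_card]
    simp [ZMod.card, Jf_card]
    ring
  have hcodom : Nat.card ((((Ic N → ZMod 2) × ZMod 2) × ((Ic N → ZMod 2) × ZMod 2)))
      = 2 ^ (4*N+4) := by
    rw [Nat.card_eq_fintype_card]
    simp [ZMod.card, Ic_card]
    ring
  rw [hUU, hdom, hcodom] at hc
  have hW : Nat.card ((Phi N) ⁻¹' (U ×ˢ U)) = Nat.card U * Nat.card U :=
    Nat.eq_of_mul_eq_mul_right (by positivity) hc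
  rw [hW, Jf_card, Ic_card]
  push_cast
  ring


lemma abs_meas_sub {ν : Measure Om} [IsProbabilityMeasure ν] (s t : Set Om) :
    |(ν s).toReal - (ν t).toReal| ≤ (ν (s ∆ t)).toReal := by
  have hsub : ∀ u v : Set Om, u ⊆ v ∪ (u ∆ v) := by
    intro u v x hx
    by_cases h : x ∈ v
    · exact Or.inl h
    · exact Or.inr (Set.mem_symmDiff.2 (Or.inl ⟨hx, h⟩))
  have h1 : (ν s).toReal ≤ (ν t).toReal + (ν (s ∆ t)).toReal := by
    have := (measure_mono (μ := ν) (hsub s t)).trans (measure_union_le (μ := ν) t (s ∆ t))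
    have h2 := ENNReal.toReal_mono (by finiteness) this
    rwa [ENNReal.toReal_add (measure_ne_top _ _) (measure_ne_top _ _)] at h2
  have h2 : (ν t).toReal ≤ (ν s).toReal + (ν (s ∆ t)).toReal := by
    have hst : t ∆ s = s ∆ t := symmDiff_comm t s
    have := (measure_mono (μ := ν) (hsub t s)).trans (measure_union_le (μ := ν) s (t ∆ s))
    rw [hst] at this
    have h2 := ENNReal.toReal_mono (by finiteness) this
    rwa [ENNReal.toReal_add (measure_ne_top _ _) (measure_ne_top _ _)] at h2
  rw [abs_sub_le_iff]
  constructor <;> linarith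

include hμ in
theorem main : Ergodic R0 (μ.prod cm) := by
  have hMP := R0_measurePreserving μ hμ
  set ν := μ.prod cm with hν
  refine ⟨hMP, ⟨?_⟩⟩
  intro s hs hsinv
  rw [Filter.eventuallyConst_set']
  -- iterated invariance
  have hinv : ∀ M : ℕ, R0^[M] ⁻¹' s = s := by
    intro M
    induction M with
    | zero => simp
    | succ M ih => rw [Function.iterate_succ, Set.preimage_comp, ih, hsinv]
  set a : ℝ := (ν s).toReal with ha
  have key : ∀ ε : ℝ, 0 < ε → |a - a^2| ≤ 4*ε := by
    intro ε hε
    obtain ⟨E, hEalg, hsE⟩ := (Measure.MeasureDense.of_generateFrom_isSetAlgebra_finite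
      ν alg_isSetAlgebra alg_gen).approx s hs (measure_ne_top ν s) ε hε
    obtain ⟨N, U, rfl⟩ := hEalg
    set M := 2*N+2 with hM
    set E := pr (Ic N) ⁻¹' U with hE
    have hEmeas : MeasurableSet E := mem_alg_measurableSet ⟨N, U, rfl⟩
    have hMPM : MeasurePreserving (R0^[M]) ν ν := hMP.iterate M
    have hd2 : ν (s ∆ (R0^[M] ⁻¹' E)) < ENNReal.ofReal ε := by
      have hrw : s ∆ (R0^[M] ⁻¹' E) = R0^[M] ⁻¹' (s ∆ E) := by
        rw [show R0^[M] ⁻¹' (s ∆ E) = (R0^[M] ⁻¹' s) ∆ (R0^[M] ⁻¹' E) by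
          simp [Set.symmDiff_def, Set.preimage_union, Set.preimage_diff], hinv M]
      rw [hrw, hMPM.measure_preimage (hs.symmDiff hEmeas).nullMeasurableSet]
      exact hsE
    set F := E ∩ R0^[M] ⁻¹' E with hF
    have hFsub : s ∆ F ⊆ (s ∆ E) ∪ (s ∆ (R0^[M] ⁻¹' E)) := by
      intro x hx
      simp only [hF, Set.mem_symmDiff, Set.mem_union, Set.mem_inter_iff] at *
      tauto
    have hdF : ν (s ∆ F) ≤ ENNReal.ofReal ε + ENNReal.ofReal ε :=
      ((measure_mono hFsub).trans (measure_union_le _ _)).trans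
        (add_le_add hsE.le hd2.le)
    have hcor : ν F = ν E * ν E := corr μ hμ N U
    set b : ℝ := (ν E).toReal with hb
    have hfb : (ν F).toReal = b^2 := by rw [hcor, ENNReal.toReal_mul]; ring
    have h1 : |a - b| ≤ ε := by
      refine (abs_meas_sub s E).trans ?_
      exact ENNReal.toReal_le_of_le_ofReal hε.le hsE.le
    have h2 : |a - b^2| ≤ 2*ε := by
      rw [← hfb]
      refine (abs_meas_sub s F).trans ?_
      have := ENNReal.toReal_mono (by finiteness) hdF
      rw [← ENNReal.ofReal_add hε.le hε.le, ENNReal.toReal_ofReal (by linarith)] at this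
      linarith
    have ha0 : 0 ≤ a := ENNReal.toReal_nonneg
    have ha1 : a ≤ 1 := by
      rw [ha]; exact ENNReal.toReal_le_of_le_ofReal zero_le_one (by simpa using prob_le_one)
    have hb0 : 0 ≤ b := ENNReal.toReal_nonneg
    have hb1 : b ≤ 1 := by
      rw [hb]; exact ENNReal.toReal_le_of_le_ofReal zero_le_one (by simpa using prob_le_one)
    rw [abs_le] at h1 h2 ⊢
    constructor <;> nlinarith [h1.1, h1.2, h2.1, h2.2]
  have haa : a = a^2 := by
    by_contra h
    have hpos : 0 < |a - a^2| := abs_pos.2 (sub_ne_zero.2 h)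
    have := key (|a - a^2|/8) (by positivity)
    linarith
  have hcases : a = 0 ∨ a = 1 := by
    have : a * (1 - a) = 0 := by nlinarith
    rcases mul_eq_zero.1 this with h | h
    · exact Or.inl h
    · right; linarith
  rcases hcases with h0 | h1
  · left
    rw [ae_eq_empty]
    have := ENNReal.toReal_eq_zero_iff (ν s)
    rcases this.1 h0 with h | h
    · exact h
    · exact absurd h (measure_ne_top ν s)
  · right
    rw [ae_eq_univ]
    have hνs : ν s = 1 := by
      rw [← ENNReal.ofReal_toReal (measure_ne_top ν s), ← ha, h1]; simp
    rw [measure_compl hs (measure_ne_top ν s), hνs, measure_univ, tsub_self]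

end S12

open MeasureTheory

/-- The skew product `R(ω,a) = (T ω, a + ω₀)` over the Bernoulli shift on `{0,1}^ℤ` with
weights `(1/2, 1/2)`, where `ω₀` is viewed as an element of `ℤ₂`, preserves the product
measure `μ × c` and is ergodic. -/
theorem stmt12
    (μ : Measure (ℤ → Bool)) [IsProbabilityMeasure μ]
    (hμ : ∀ (s : Finset ℤ) (f : ℤ → Bool),
      μ {ω | ∀ i ∈ s, ω i = f i} = (1 / 2 : ENNReal) ^ s.card)
    (T : (ℤ → Bool) → (ℤ → Bool)) (hT : ∀ ω n, T ω n = ω (n + 1))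
    (R : (ℤ → Bool) × ZMod 2 → (ℤ → Bool) × ZMod 2)
    (hR : ∀ ω a, R (ω, a) = (T ω, a + if ω 0 = true then (1 : ZMod 2) else 0)) :
    Ergodic R (μ.prod ((2 : ENNReal)⁻¹ • (Measure.count : Measure (ZMod 2)))) := by
  have hR0 : R = S12.R0 := by
    funext p
    rcases p with ⟨ω, a⟩
    rw [hR]
    refine Prod.ext ?_ ?_
    · funext n; exact hT ω n
    · rfl
  rw [hR0]
  exact S12.main μ hμ
end

section
/- For the constant cocycle A(x) = rot_{π/3} over the irrational rotation T(x) = x + η on 𝕋, the cocycle is not cohomologous to a scalar multiple of the identity: there exist no measurable maps C : 𝕋 → GL₂(ℂ) and λ : 𝕋 → ℂ such that C(x + η)⁻¹ · rot_{π/3} · C(x) = λ(x)·I for a.e. x. (This holds even though neither of the associated skew products R(x,a) = (x+η, a) on 𝕋×ℤ₂ nor S(x,y) = (x+η, y+1/3) on 𝕋² is ergodic, showing that ergodicity of R or S is not necessary for this conclusion.) -/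
open MeasureTheory Matrix Complex

lemma fourier_pt_add (n : ℤ) (x y : UnitAddCircle) :
    (fourier n (x + y) : ℂ) = fourier n x * fourier n y := by
  simp [fourier_apply, smul_add, AddCircle.toCircle_add]

lemma vol_eq_haar : (volume : Measure UnitAddCircle) = AddCircle.haarAddCircle := by
  rw [AddCircle.volume_eq_smul_haarAddCircle]; simp

lemma fourierCoeff_shift (g : UnitAddCircle → ℂ) (c : UnitAddCircle) (n : ℤ) :
    fourierCoeff (fun x => g (x + c)) n = fourier n c * fourierCoeff g n := by
  unfold fourierCoeff
  have h1 : ∫ t : UnitAddCircle, fourier (-n) t • g (t + c) ∂AddCircle.haarAddCircle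
      = ∫ t : UnitAddCircle, fourier (-n) (t - c) • g t ∂AddCircle.haarAddCircle := by
    rw [← MeasureTheory.integral_add_right_eq_self (μ := AddCircle.haarAddCircle)
      (fun t => fourier (-n) (t - c) • g t) c]
    simp
  rw [h1]
  have h2 : ∀ t : UnitAddCircle, (fourier (-n) (t - c) : ℂ) • g t
      = (fourier n c : ℂ) • ((fourier (-n) t : ℂ) • g t) := by
    intro t
    have e1 : (fourier (-n) (t - c) : ℂ) = fourier (-n) t * fourier (-n) (-c) := by
      rw [sub_eq_add_neg, fourier_pt_add]
    have e2 : (fourier (-n) (-c) : ℂ) = fourier n c := by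
      simp [fourier_apply]
    rw [e1, e2]
    simp [smul_eq_mul]
    ring
  simp_rw [h2]
  rw [integral_smul]
  simp [smul_eq_mul]

lemma ae_zero_of_fourierCoeff_zero (g : UnitAddCircle → ℂ) (hm : Measurable g)
    (hb : ∀ x, ‖g x‖ ≤ 1) (hc : ∀ n : ℤ, fourierCoeff g n = 0) :
    g =ᵐ[AddCircle.haarAddCircle] 0 := by
  have hmem : MemLp g 2 AddCircle.haarAddCircle := by
    refine MemLp.mono_exponent ?_ (le_top : (2:ENNReal) ≤ ⊤)
    exact memLp_top_of_bound hm.aestronglyMeasurable 1 (Filter.Eventually.of_forall hb)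
  set f : Lp ℂ 2 AddCircle.haarAddCircle := hmem.toLp g with hf
  have hfg : g =ᵐ[AddCircle.haarAddCircle] f := (MemLp.coeFn_toLp hmem).symm
  have hrepr : fourierBasis.repr f = 0 := by
    ext n
    rw [fourierBasis_repr]
    have : fourierCoeff (f : UnitAddCircle → ℂ) n = fourierCoeff g n := by
      unfold fourierCoeff
      exact integral_congr_ae (hfg.mono fun x hx => by simp [hx])
    simp [this, hc n]
  have hf0 : f = 0 := by
    apply fourierBasis.repr.injective
    simpa using hrepr
  calc g =ᵐ[AddCircle.haarAddCircle] f := hfg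
    _ =ᵐ[AddCircle.haarAddCircle] 0 := by rw [hf0]; exact Lp.coeFn_zero _ _ _

lemma fourier_ne_mu (η : ℝ) (hη : Irrational η) (n : ℤ) :
    (fourier n (↑η : UnitAddCircle) : ℂ) ≠ Complex.exp (-(2 * Real.pi * Complex.I) / 3) := by
  have hfe : (fourier n (↑η : UnitAddCircle) : ℂ)
      = Complex.exp (2 * Real.pi * Complex.I * (n * η)) := by
    rw [fourier_coe_apply]; norm_num; ring_nf
  rw [hfe]
  intro h
  rw [Complex.exp_eq_exp_iff_exists_int] at h
  obtain ⟨k, hk⟩ := h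
  have h2πI : (2 * Real.pi * Complex.I) ≠ 0 := by
    simp [Real.pi_ne_zero, Complex.I_ne_zero]
  have hk' : (n : ℂ) * η = -1/3 + k := by
    apply mul_left_cancel₀ h2πI
    rw [hk]; ring
  have hre : (n : ℝ) * η = -1/3 + k := by
    have := congrArg Complex.re hk'
    simpa [Complex.ofReal_mul] using this
  rcases eq_or_ne n 0 with rfl | hn
  · simp at hre
    have : (3:ℝ) * k = 1 := by linarith
    have : (3:ℤ) * k = 1 := by exact_mod_cast this
    omega
  · apply hη
    refine ⟨((3*k-1 : ℤ) : ℚ) / ((3*n : ℤ) : ℚ), ?_⟩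
    have hn' : (n:ℝ) ≠ 0 := Int.cast_ne_zero.mpr hn
    push_cast
    field_simp
    linarith [hre]

lemma eigenfun_ae_zero (η : ℝ) (hη : Irrational η) (g : UnitAddCircle → ℂ)
    (hm : Measurable g) (hb : ∀ x, ‖g x‖ ≤ 1)
    (hrel : ∀ᵐ x ∂(volume : Measure UnitAddCircle),
      g (x + ↑η) = Complex.exp (-(2 * Real.pi * Complex.I) / 3) * g x) :
    g =ᵐ[(volume : Measure UnitAddCircle)] 0 := by
  set μ := Complex.exp (-(2 * Real.pi * Complex.I) / 3) with hμ
  rw [vol_eq_haar] at hrel ⊢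
  have hcoeff : ∀ n : ℤ, fourierCoeff g n = 0 := by
    intro n
    have h1 : fourierCoeff (fun x => g (x + (↑η : UnitAddCircle))) n
        = fourier n (↑η : UnitAddCircle) * fourierCoeff g n := fourierCoeff_shift g _ n
    have h2 : fourierCoeff (fun x => g (x + (↑η : UnitAddCircle))) n
        = μ * fourierCoeff g n := by
      have : fourierCoeff (fun x => g (x + (↑η : UnitAddCircle))) n
          = fourierCoeff (fun x => μ * g x) n := by
        unfold fourierCoeff
        exact integral_congr_ae (hrel.mono fun x hx => by simp [hx])
      rw [this, fourierCoeff.const_mul]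
    have h3 : (fourier n (↑η : UnitAddCircle) - μ) * fourierCoeff g n = 0 := by
      rw [sub_mul, ← h1, h2]; ring
    rcases mul_eq_zero.mp h3 with h | h
    · exact absurd (sub_eq_zero.mp h) (fourier_ne_mu η hη n)
    · exact h
  exact ae_zero_of_fourierCoeff_zero g hm hb hcoeff


noncomputable def cv : ℝ := Real.cos (Real.pi/3)
noncomputable def sv : ℝ := Real.sin (Real.pi/3)
noncomputable def zet : ℂ := cv - sv * Complex.I
noncomputable def om : ℂ := cv + sv * Complex.I
noncomputable def Qm : Matrix (Fin 2) (Fin 2) ℂ := (2:ℂ)⁻¹ • !![1, -Complex.I; 1, Complex.I]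
noncomputable def Dm : Matrix (Fin 2) (Fin 2) ℂ := !![zet, 0; 0, om]

lemma hcs : cv^2 + sv^2 = 1 := by
  rw [cv, sv, ← Real.sin_sq_add_cos_sq (Real.pi/3)]; ring

lemma hzo : zet * om = 1 := by
  have h1 : (cv:ℂ)^2 + (sv:ℂ)^2 = 1 := by
    exact_mod_cast congrArg (Complex.ofReal) hcs
  rw [zet, om]
  linear_combination h1 - (sv:ℂ)^2 * Complex.I_sq

lemma hzet_exp : zet = Complex.exp (((-(Real.pi/3) : ℝ) : ℂ) * Complex.I) := by
  rw [Complex.exp_mul_I]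
  have h1 : Complex.cos (((-(Real.pi/3) : ℝ) : ℂ)) = ((cv:ℝ):ℂ) := by
    rw [← Complex.ofReal_cos, cv, Real.cos_neg]
  have h2 : Complex.sin (((-(Real.pi/3) : ℝ) : ℂ)) = -((sv:ℝ):ℂ) := by
    rw [← Complex.ofReal_sin, sv, Real.sin_neg]
    push_cast
    ring
  rw [h1, h2, zet]
  ring

lemma hzet2 : zet^2 = Complex.exp (-(2 * Real.pi * Complex.I)/3) := by
  rw [hzet_exp, sq, ← Complex.exp_add]
  congr 1
  push_cast
  ring

lemma habs_zet2 : ‖zet^2‖ = 1 := by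
  rw [hzet2]
  rw [Complex.norm_exp]
  have : (-(2 * (Real.pi:ℂ) * Complex.I)/3).re = 0 := by simp
  rw [this, Real.exp_zero]

lemma hQA : Qm * ((rotM (Real.pi/3)).map Complex.ofReal) = Dm * Qm := by
  have hA : (rotM (Real.pi/3)).map Complex.ofReal = !![(cv:ℂ), -(sv:ℂ); (sv:ℂ), (cv:ℂ)] := by
    ext i j
    fin_cases i <;> fin_cases j <;> simp [rotM, Matrix.map_apply, cv, sv]
  rw [hA]
  ext i j
  fin_cases i <;> fin_cases j <;>
    simp [Qm, Dm, zet, om, Matrix.mul_apply, Fin.sum_univ_two] <;>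
    ring_nf <;> simp [Complex.I_sq] <;> ring

lemma hQdet : Qm.det ≠ 0 := by
  simp [Qm, Matrix.det_fin_two, Complex.ext_iff]

/-- For the constant cocycle `A(x) = rot_{π/3}` over the irrational rotation `T(x) = x + η`
on `𝕋`, the cocycle is not cohomologous to a scalar multiple of the identity. -/
theorem stmt16 (η : ℝ) (hη : Irrational η)
    (T : UnitAddCircle → UnitAddCircle) (hT : ∀ x, T x = x + ↑η) :
    ¬ ∃ (C : UnitAddCircle → Matrix (Fin 2) (Fin 2) ℂ) (lam : UnitAddCircle → ℂ),
      (∀ i j, Measurable fun x => C x i j) ∧ Measurable lam ∧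
      (∀ x, IsUnit (C x)) ∧
      (∀ᵐ x ∂(volume : Measure UnitAddCircle),
        (C (T x))⁻¹ * ((rotM (Real.pi / 3)).map Complex.ofReal) * C x = lam x • 1) := by
  rintro ⟨C, lam, hCm, hlamm, hCu, h4⟩
  set A : Matrix (Fin 2) (Fin 2) ℂ := (rotM (Real.pi / 3)).map Complex.ofReal with hA
  set B : UnitAddCircle → Matrix (Fin 2) (Fin 2) ℂ := fun x => Qm * C x with hB
  set dB : UnitAddCircle → ℂ := fun x => (B x).det with hdBdef
  -- determinant nonvanishing
  have hdB : ∀ x, dB x ≠ 0 := by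
    intro x
    have hCdet : (C x).det ≠ 0 :=
      ((Matrix.isUnit_iff_isUnit_det _).mp (hCu x)).ne_zero
    simp only [hdBdef, hB, Matrix.det_mul]
    exact mul_ne_zero hQdet hCdet
  have hdB_fin : ∀ x, dB x = B x 0 0 * B x 1 1 - B x 0 1 * B x 1 0 := by
    intro x; simp [hdBdef, Matrix.det_fin_two]
  -- measurability of entries of B
  have hBm : ∀ i j, Measurable fun x => B x i j := by
    intro i j
    simp only [hB, Matrix.mul_apply, Fin.sum_univ_two]
    exact (measurable_const.mul (hCm 0 j)).add (measurable_const.mul (hCm 1 j))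
  have hdBm : Measurable dB := by
    have := hdB_fin
    simp only [hdBdef]
    have : dB = fun x => B x 0 0 * B x 1 1 - B x 0 1 * B x 1 0 := funext hdB_fin
    rw [← hdBdef, this]
    exact ((hBm 0 0).mul (hBm 1 1)).sub ((hBm 0 1).mul (hBm 1 0))
  -- the three quadratic ratio functions
  set u : UnitAddCircle → ℂ := fun x => B x 0 0 ^ 2 / dB x with hu
  set v : UnitAddCircle → ℂ := fun x => B x 0 0 * B x 0 1 / dB x with hv
  set w : UnitAddCircle → ℂ := fun x => B x 0 1 ^ 2 / dB x with hw
  set S : UnitAddCircle → ℝ := fun x => ‖u x‖ + ‖v x‖ + ‖w x‖ with hS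
  have hum : Measurable u := (((hBm 0 0).pow measurable_const)).div hdBm
  have hvm : Measurable v := ((hBm 0 0).mul (hBm 0 1)).div hdBm
  have hwm : Measurable w := (((hBm 0 1).pow measurable_const)).div hdBm
  have hSm : Measurable S := (hum.norm.add hvm.norm).add hwm.norm
  have hSpos : ∀ x, 0 < S x := by
    intro x
    rcases lt_or_eq_of_le (by positivity : (0:ℝ) ≤ S x) with h | h
    · exact h
    exfalso
    have hx0 : ‖u x‖ + ‖v x‖ + ‖w x‖ = 0 := by
      have := h.symm; simp only [hS] at this; exact this
    have h0 : ‖u x‖ = 0 ∧ ‖v x‖ = 0 ∧ ‖w x‖ = 0 := by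
      constructor
      · nlinarith [norm_nonneg (u x), norm_nonneg (v x), norm_nonneg (w x)]
      constructor
      · nlinarith [norm_nonneg (u x), norm_nonneg (v x), norm_nonneg (w x)]
      · nlinarith [norm_nonneg (u x), norm_nonneg (v x), norm_nonneg (w x)]
    have hu0 : B x 0 0 = 0 := by
      have : u x = 0 := norm_eq_zero.mp h0.1
      rcases div_eq_zero_iff.mp this with h' | h'
      · exact pow_eq_zero_iff (by norm_num) |>.mp h'
      · exact absurd h' (hdB x)
    have hw0 : B x 0 1 = 0 := by
      have : w x = 0 := norm_eq_zero.mp h0.2.2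
      rcases div_eq_zero_iff.mp this with h' | h'
      · exact pow_eq_zero_iff (by norm_num) |>.mp h'
      · exact absurd h' (hdB x)
    apply hdB x
    rw [hdB_fin x, hu0, hw0]
    ring
  set g0 : UnitAddCircle → ℂ := fun x => u x / (S x : ℂ) with hg0
  set g1 : UnitAddCircle → ℂ := fun x => v x / (S x : ℂ) with hg1
  set g2 : UnitAddCircle → ℂ := fun x => w x / (S x : ℂ) with hg2
  have hg0m : Measurable g0 := hum.div (Complex.measurable_ofReal.comp hSm)
  have hg1m : Measurable g1 := hvm.div (Complex.measurable_ofReal.comp hSm)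
  have hg2m : Measurable g2 := hwm.div (Complex.measurable_ofReal.comp hSm)
  have hbound : ∀ (f : UnitAddCircle → ℂ), (∀ x, ‖f x‖ ≤ S x) →
      ∀ x, ‖f x / (S x : ℂ)‖ ≤ 1 := by
    intro f hf x
    rw [norm_div]
    have h1 : ‖(S x : ℂ)‖ = S x := by
      rw [Complex.norm_real, Real.norm_eq_abs, abs_of_pos (hSpos x)]
    rw [h1, div_le_one (hSpos x)]
    exact hf x
  have hub : ∀ x, ‖u x‖ ≤ S x := by
    intro x; simp only [hS]; linarith [norm_nonneg (v x), norm_nonneg (w x)]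
  have hvb : ∀ x, ‖v x‖ ≤ S x := by
    intro x; simp only [hS]; linarith [norm_nonneg (u x), norm_nonneg (w x)]
  have hwb : ∀ x, ‖w x‖ ≤ S x := by
    intro x; simp only [hS]; linarith [norm_nonneg (u x), norm_nonneg (v x)]
  -- pointwise relations on the a.e. set
  have hrel : ∀ᵐ x ∂(volume : Measure UnitAddCircle),
      u (x + ↑η) = zet^2 * u x ∧ v (x + ↑η) = zet^2 * v x ∧ w (x + ↑η) = zet^2 * w x := by
    filter_upwards [h4] with x hx
    rw [← hT x]
    -- key: A * C x = lam x • C (T x)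
    have hCdet : IsUnit (C (T x)).det := (Matrix.isUnit_iff_isUnit_det _).mp (hCu (T x))
    have h5 : C (T x) * (C (T x))⁻¹ = 1 := Matrix.mul_nonsing_inv _ hCdet
    have hkey : A * C x = lam x • C (T x) := by
      have h6 := congrArg (fun M => C (T x) * M) hx
      rw [← Matrix.mul_assoc, ← Matrix.mul_assoc, h5, one_mul] at h6
      rw [h6, Matrix.mul_smul, Matrix.mul_one]
    have hDBx : Dm * B x = lam x • B (T x) := by
      calc Dm * B x = (Dm * Qm) * C x := by rw [hB]; simp [Matrix.mul_assoc]
        _ = (Qm * A) * C x := by rw [← hQA]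
        _ = Qm * (A * C x) := by rw [Matrix.mul_assoc]
        _ = Qm * (lam x • C (T x)) := by rw [hkey]
        _ = lam x • B (T x) := by rw [Matrix.mul_smul, hB]
    have e00 : zet * B x 0 0 = lam x * B (T x) 0 0 := by
      have := congrArg (fun M => M 0 0) hDBx
      simpa [Dm, Matrix.mul_apply, Fin.sum_univ_two] using this
    have e01 : zet * B x 0 1 = lam x * B (T x) 0 1 := by
      have := congrArg (fun M => M 0 1) hDBx
      simpa [Dm, Matrix.mul_apply, Fin.sum_univ_two] using this
    have e10 : om * B x 1 0 = lam x * B (T x) 1 0 := by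
      have := congrArg (fun M => M 1 0) hDBx
      simpa [Dm, Matrix.mul_apply, Fin.sum_univ_two] using this
    have e11 : om * B x 1 1 = lam x * B (T x) 1 1 := by
      have := congrArg (fun M => M 1 1) hDBx
      simpa [Dm, Matrix.mul_apply, Fin.sum_univ_two] using this
    have hscale : dB x = lam x ^ 2 * dB (T x) := by
      rw [hdB_fin x, hdB_fin (T x)]
      calc B x 0 0 * B x 1 1 - B x 0 1 * B x 1 0
          = (zet * om) * (B x 0 0 * B x 1 1 - B x 0 1 * B x 1 0) := by rw [hzo]; ring
        _ = (zet * B x 0 0) * (om * B x 1 1) - (zet * B x 0 1) * (om * B x 1 0) := by ring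
        _ = (lam x * B (T x) 0 0) * (lam x * B (T x) 1 1)
            - (lam x * B (T x) 0 1) * (lam x * B (T x) 1 0) := by rw [e00, e01, e10, e11]
        _ = lam x ^ 2 * (B (T x) 0 0 * B (T x) 1 1 - B (T x) 0 1 * B (T x) 1 0) := by ring
    have hlam : lam x ≠ 0 := by
      intro h0
      apply hdB x
      rw [hscale, h0]
      ring
    have f00 : B (T x) 0 0 = zet * B x 0 0 / lam x := by
      rw [eq_div_iff hlam]; linear_combination -e00
    have f01 : B (T x) 0 1 = zet * B x 0 1 / lam x := by
      rw [eq_div_iff hlam]; linear_combination -e01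
    have fdB : dB (T x) = dB x / lam x ^ 2 := by
      rw [eq_div_iff (pow_ne_zero 2 hlam)]; linear_combination -hscale
    refine ⟨?_, ?_, ?_⟩
    · show B (T x) 0 0 ^ 2 / dB (T x) = zet^2 * (B x 0 0 ^2 / dB x)
      rw [f00, fdB]
      field_simp [hdB x, hdB (T x)]
    · show B (T x) 0 0 * B (T x) 0 1 / dB (T x) = zet^2 * (B x 0 0 * B x 0 1 / dB x)
      rw [f00, f01, fdB]
      field_simp [hdB x, hdB (T x)]
    · show B (T x) 0 1 ^ 2 / dB (T x) = zet^2 * (B x 0 1 ^2 / dB x)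
      rw [f01, fdB]
      field_simp [hdB x, hdB (T x)]
  -- S is a.e. invariant
  have hSrel : ∀ᵐ x ∂(volume : Measure UnitAddCircle), S (x + ↑η) = S x := by
    filter_upwards [hrel] with x hx13
    obtain ⟨h1, h2, h3⟩ := hx13
    have e : ∀ y, S y = ‖u y‖ + ‖v y‖ + ‖w y‖ := fun y => rfl
    rw [e, e, h1, h2, h3, norm_mul, norm_mul, norm_mul, habs_zet2]; ring
  have hμabs : ‖(zet^2 : ℂ)‖ = 1 := habs_zet2
  -- each g satisfies the eigenfunction relation
  have hgrel : ∀ (f : UnitAddCircle → ℂ),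
      (∀ᵐ x ∂(volume : Measure UnitAddCircle), f (x + ↑η) = zet^2 * f x) →
      ∀ᵐ x ∂(volume : Measure UnitAddCircle),
        (fun y => f y / (S y : ℂ)) (x + ↑η)
          = Complex.exp (-(2 * Real.pi * Complex.I)/3) * (fun y => f y / (S y : ℂ)) x := by
    intro f hf
    filter_upwards [hf, hSrel] with x h1 h2
    show f (x + ↑η) / ((S (x + ↑η) : ℝ) : ℂ)
        = Complex.exp (-(2 * Real.pi * Complex.I)/3) * (f x / ((S x : ℝ) : ℂ))
    rw [h1, h2, ← hzet2]
    ring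
  have hz0 : g0 =ᵐ[(volume : Measure UnitAddCircle)] 0 :=
    eigenfun_ae_zero η hη g0 hg0m (hbound u hub) (hgrel u (hrel.mono fun x h => h.1))
  have hz1 : g1 =ᵐ[(volume : Measure UnitAddCircle)] 0 :=
    eigenfun_ae_zero η hη g1 hg1m (hbound v hvb) (hgrel v (hrel.mono fun x h => h.2.1))
  have hz2 : g2 =ᵐ[(volume : Measure UnitAddCircle)] 0 :=
    eigenfun_ae_zero η hη g2 hg2m (hbound w hwb) (hgrel w (hrel.mono fun x h => h.2.2))
  -- derive contradiction
  have hvolne : (volume : Measure UnitAddCircle) ≠ 0 := by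
    rw [vol_eq_haar]
    exact (IsProbabilityMeasure.ne_zero _)
  haveI : (ae (volume : Measure UnitAddCircle)).NeBot := ae_neBot.mpr hvolne
  obtain ⟨x, h0, h1, h2⟩ := (hz0.and (hz1.and hz2)).exists
  have hSx : ((S x : ℂ)) ≠ 0 := by
    simpa using (hSpos x).ne'
  have hu0 : u x = 0 := by
    have h0' : u x / ((S x : ℝ) : ℂ) = 0 := h0
    exact (div_eq_zero_iff.mp h0').resolve_right hSx
  have hw0 : w x = 0 := by
    have h2' : w x / ((S x : ℝ) : ℂ) = 0 := h2
    exact (div_eq_zero_iff.mp h2').resolve_right hSx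
  have hB00 : B x 0 0 = 0 := by
    have hu0' : B x 0 0 ^ 2 / dB x = 0 := hu0
    exact pow_eq_zero_iff (by norm_num) |>.mp
      ((div_eq_zero_iff.mp hu0').resolve_right (hdB x))
  have hB01 : B x 0 1 = 0 := by
    have hw0' : B x 0 1 ^ 2 / dB x = 0 := hw0
    exact pow_eq_zero_iff (by norm_num) |>.mp
      ((div_eq_zero_iff.mp hw0').resolve_right (hdB x))
  apply hdB x
  rw [hdB_fin x, hB00, hB01]
  ring
end
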